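/- arXiv:1904.09748 — 6 statements merged into one kernel-verified Lean document; each statement's English description precedes it below -/
import Mathlib

section
/- Fix an integer N ≥ 1 and let A be the N×N natural-number matrix, indexed by i, j ∈ {1, …, N}, with A_{ij} = j!·(j−1)! / (i!·(i−1)!·(j−i)!) when i ≤ j and A_{ij} = 0 when i > j (the Lah numbers). Then for every integer m ≥ 1 and all i ≤ j, the (i,j)-entry of the matrix power A^m equals m^{j−i} · A_{ij} (and the entries with i > j are 0). -/
open Set

/-- The Lah number `lah j i = j!·(j-1)! / (i!·(i-1)!·(j-i)!)`. -/
def lah (j i : ℕ) : ℕ :=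
  j.factorial * (j - 1).factorial / (i.factorial * (i - 1).factorial * (j - i).factorial)

lemma lah_eq (i j : ℕ) (hi : 1 ≤ i) (h : i ≤ j) :
    lah j i = j.descFactorial (j - i) * (j - 1).choose (i - 1) := by
  have hij : i - 1 ≤ j - 1 := by omega
  unfold lah
  rw [Nat.div_eq_of_eq_mul_left (by positivity)]
  have h1 : i.factorial * j.descFactorial (j - i) = j.factorial := by
    have := Nat.factorial_mul_descFactorial (n := j) (k := j - i) (by omega)
    rwa [show j - (j - i) = i by omega] at this
  have h2 : (j - 1).choose (i - 1) * (i - 1).factorial * (j - i).factorial = (j - 1).factorial := by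
    have := Nat.choose_mul_factorial_mul_factorial hij
    rwa [show j - 1 - (i - 1) = j - i by omega] at this
  calc j.factorial * (j - 1).factorial
      = (i.factorial * j.descFactorial (j - i)) *
        ((j - 1).choose (i - 1) * (i - 1).factorial * (j - i).factorial) := by rw [h1, h2]
    _ = j.descFactorial (j - i) * (j - 1).choose (i - 1) *
        (i.factorial * (i - 1).factorial * (j - i).factorial) := by ring

/-- Key convolution identity for Lah numbers. -/
lemma lah_key (m i j : ℕ) (hij : i ≤ j) :
    ∑ k ∈ Finset.Icc i j, m ^ (k - i) * (lah (k + 1) (i + 1) * lah (j + 1) (k + 1)) =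
      (m + 1) ^ (j - i) * lah (j + 1) (i + 1) := by
  rw [← Finset.Ico_add_one_right_eq_Icc, Finset.sum_Ico_eq_sum_range]
  have hrange : j + 1 - i = (j - i) + 1 := by omega
  rw [hrange]
  have hterm : ∀ t ∈ Finset.range (j - i + 1),
      m ^ (i + t - i) * (lah (i + t + 1) (i + 1) * lah (j + 1) (i + t + 1)) =
      ((j + 1).descFactorial (j - i) * j.choose i) * (m ^ t * 1 ^ (j - i - t) * (j - i).choose t) := by
    intro t ht
    rw [Finset.mem_range] at ht
    have ht' : t ≤ j - i := by omega
    rw [show i + t - i = t by omega]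
    rw [lah_eq (i + 1) (i + t + 1) (by omega) (by omega),
        lah_eq (i + t + 1) (j + 1) (by omega) (by omega)]
    simp only [Nat.add_sub_cancel, show i + t + 1 - (i + 1) = t by omega,
      show j + 1 - (i + t + 1) = j - i - t by omega, show i + 1 - 1 = i by omega,
      show i + t + 1 - 1 = i + t by omega]
    have hdesc : (i + t + 1).descFactorial t * (j + 1).descFactorial (j - i - t) =
        (j + 1).descFactorial (j - i) := by
      have := Nat.descFactorial_mul_descFactorial (k := j - i - t) (m := j - i) (n := j + 1)
        (by omega)
      rw [show j + 1 - (j - i - t) = i + t + 1 by omega,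
        show j - i - (j - i - t) = t by omega] at this
      exact this
    have hchoose : j.choose (i + t) * (i + t).choose i = j.choose i * (j - i).choose t := by
      have := Nat.choose_mul (n := j) (k := i + t) (s := i) (by omega)
      rwa [show i + t - i = t by omega] at this
    calc m ^ t * ((i + t + 1).descFactorial t * (i + t).choose i *
            ((j + 1).descFactorial (j - i - t) * j.choose (i + t)))
        = ((i + t + 1).descFactorial t * (j + 1).descFactorial (j - i - t)) *
            (j.choose (i + t) * (i + t).choose i) * m ^ t := by ring
      _ = (j + 1).descFactorial (j - i) * (j.choose i * (j - i).choose t) * m ^ t := by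
            rw [hdesc, hchoose]
      _ = (j + 1).descFactorial (j - i) * j.choose i * (m ^ t * 1 ^ (j - i - t) * (j - i).choose t) := by
            rw [one_pow]; ring
  rw [Finset.sum_congr rfl hterm, ← Finset.mul_sum]
  have hb := add_pow m 1 (j - i)
  simp only [Nat.cast_id] at hb
  rw [← hb]
  rw [lah_eq (i + 1) (j + 1) (by omega) (by omega)]
  rw [show j + 1 - (i + 1) = j - i by omega, Nat.add_sub_cancel, show i + 1 - 1 = i by omega]
  ring

/-- If `A` is the `N×N` matrix of Lah numbers `A_{ij} = lah j i` for `i ≤ j`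
(and `0` for `i > j`, indices running over `{1, …, N}`), then the entries of `A^m`
are `(A^m)_{ij} = m^(j-i) · A_{ij}` for `i ≤ j`, and `0` for `i > j`. -/
theorem lah_matrix_pow (N : ℕ) (hN : 1 ≤ N) (m : ℕ) (hm : 1 ≤ m)
    (A : Matrix (Fin N) (Fin N) ℕ)
    (hA : A = Matrix.of fun i j => if i ≤ j then lah (j.val + 1) (i.val + 1) else 0) :
    (∀ i j : Fin N, i ≤ j → (A ^ m) i j = m ^ (j.val - i.val) * A i j) ∧
      ∀ i j : Fin N, j < i → (A ^ m) i j = 0 := by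
  induction m, hm using Nat.le_induction with
  | base =>
    constructor
    · intro i j hij
      rw [pow_one]
      have hji : j.val - i.val = j.val - i.val := rfl
      rw [one_pow, one_mul]
    · intro i j hji
      rw [pow_one, hA]
      simp only [Matrix.of_apply]
      rw [if_neg (not_le.mpr hji)]
  | succ m hm ih =>
    obtain ⟨ih1, ih2⟩ := ih
    have entry : ∀ i j : Fin N, (A ^ (m + 1)) i j = ∑ k : Fin N, (A ^ m) i k * A k j := by
      intro i j
      rw [pow_succ, Matrix.mul_apply]
    have hval : ∀ i k : Fin N, i ≤ k → (A ^ m) i k =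
        m ^ (k.val - i.val) * lah (k.val + 1) (i.val + 1) := by
      intro i k hik
      rw [ih1 i k hik, hA]
      simp only [Matrix.of_apply, if_pos hik]
    constructor
    · intro i j hij
      rw [entry]
      have hsum : ∀ k : Fin N, (A ^ m) i k * A k j =
          if i.val ≤ k.val ∧ k.val ≤ j.val then
            m ^ (k.val - i.val) * (lah (k.val + 1) (i.val + 1) * lah (j.val + 1) (k.val + 1))
          else 0 := by
        intro k
        by_cases hik : i ≤ k
        · by_cases hkj : k ≤ j
          · rw [if_pos ⟨hik, hkj⟩, hval i k hik, hA]
            simp only [Matrix.of_apply, if_pos hkj]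
            ring
          · rw [if_neg (by exact fun h => hkj h.2), hA]
            simp only [Matrix.of_apply]
            rw [if_neg (by exact fun h => hkj h), mul_zero]
        · rw [if_neg (by exact fun h => hik h.1), ih2 i k (not_le.mp hik), zero_mul]
      rw [Finset.sum_congr rfl (fun k _ => hsum k)]
      have hsum2 : ∑ k : Fin N, (if i.val ≤ k.val ∧ k.val ≤ j.val then
            m ^ (k.val - i.val) * (lah (k.val + 1) (i.val + 1) * lah (j.val + 1) (k.val + 1))
          else 0) =
          ∑ t ∈ Finset.range N, (if i.val ≤ t ∧ t ≤ j.val then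
            m ^ (t - i.val) * (lah (t + 1) (i.val + 1) * lah (j.val + 1) (t + 1)) else 0) := by
        exact Fin.sum_univ_eq_sum_range (fun t => if i.val ≤ t ∧ t ≤ j.val then
          m ^ (t - i.val) * (lah (t + 1) (i.val + 1) * lah (j.val + 1) (t + 1)) else 0) N
      rw [hsum2]
      have hfilter : ∑ t ∈ Finset.range N, (if i.val ≤ t ∧ t ≤ j.val then
            m ^ (t - i.val) * (lah (t + 1) (i.val + 1) * lah (j.val + 1) (t + 1)) else 0) =
          ∑ t ∈ Finset.Icc i.val j.val,
            m ^ (t - i.val) * (lah (t + 1) (i.val + 1) * lah (j.val + 1) (t + 1)) := by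
        rw [Finset.sum_ite, Finset.sum_const_zero, add_zero]
        congr 1
        ext t
        simp only [Finset.mem_filter, Finset.mem_range, Finset.mem_Icc]
        have := j.isLt
        omega
      rw [hfilter, lah_key m i.val j.val hij]
      rw [hA]
      simp only [Matrix.of_apply, if_pos hij]
    · intro i j hji
      rw [entry]
      apply Finset.sum_eq_zero
      intro k _
      by_cases hik : i ≤ k
      · have hkj : ¬ (k ≤ j) := fun h => absurd (h.trans_lt hji) (lt_irrefl _ ∘ lt_of_le_of_lt hik)
        rw [hA]
        simp only [Matrix.of_apply]
        rw [if_neg (fun h => hkj h), mul_zero]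
      · rw [ih2 i k (not_le.mp hik), zero_mul]
end

section
/- Fix an integer m ≥ 0 and let F ∈ ℚ⟦X⟧ be the formal power series whose coefficient of X^n is |L_1(C^m_n)|/n! for n ≥ 1 and 0 for n = 0, where |L_1(C^m_n)| is the number of 1-dimensional flats of the n-dimensional extended Catalan arrangement. Then (1 − m·(exp(X) − 1)) · F = exp(X) − 1 in ℚ⟦X⟧, where exp(X) denotes the exponential power series ∑_{n≥0} X^n/n!. -/
open Set

/-- The affine hyperplane `{x : ℝⁿ | x i - x j = a}`. -/
def hyp (n : ℕ) (i j : Fin n) (a : ℤ) : Set (Fin n → ℝ) :=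
  {x | x i - x j = (a : ℝ)}

/-- The extended Catalan arrangement `C^m_n`: hyperplanes `x_i - x_j = a` for
`i < j` and `-m ≤ a ≤ m`. -/
def CatalanArr (m n : ℕ) : Set (Set (Fin n → ℝ)) :=
  {H | ∃ i j : Fin n, ∃ a : ℤ, i < j ∧ -(m : ℤ) ≤ a ∧ a ≤ (m : ℤ) ∧ H = hyp n i j a}

/-- The extended Shi arrangement `S^m_n`: hyperplanes `x_i - x_j = a` for
`i < j` and `1 - m ≤ a ≤ m`. -/
def ShiArr (m n : ℕ) : Set (Set (Fin n → ℝ)) :=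
  {H | ∃ i j : Fin n, ∃ a : ℤ, 1 - (m : ℤ) ≤ a ∧ a ≤ (m : ℤ) ∧ i < j ∧ H = hyp n i j a}

/-- The flats of an arrangement: nonempty intersections of subcollections
(the empty intersection being the whole space). -/
def flats {n : ℕ} (A : Set (Set (Fin n → ℝ))) : Set (Set (Fin n → ℝ)) :=
  {F | F.Nonempty ∧ ∃ B ⊆ A, F = ⋂₀ B}

/-- The dimension of a flat, i.e. the dimension of the affine subspace it spans. -/
noncomputable def flatDim {n : ℕ} (F : Set (Fin n → ℝ)) : ℕ :=
  Module.finrank ℝ (affineSpan ℝ F).direction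

/-- The set of `k`-dimensional flats of an arrangement. -/
def Lk {n : ℕ} (A : Set (Set (Fin n → ℝ))) (k : ℕ) : Set (Set (Fin n → ℝ)) :=
  {F | F ∈ flats A ∧ flatDim F = k}


open Finset

namespace CatProof

def IsConf (m : ℕ) {α : Type*} (c : α → ℕ) : Prop :=
  (∃ j, c j = 0) ∧ ∀ i, 0 < c i → ∃ j, c j < c i ∧ c i ≤ c j + m

def Conf (m : ℕ) (α : Type*) := {c : α → ℕ // IsConf m c}

lemma IsConf.comp {m : ℕ} {α β : Type*} {c : β → ℕ} (h : IsConf m c) (e : α ≃ β) :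
    IsConf m (c ∘ e) := by
  obtain ⟨⟨j, hj⟩, h2⟩ := h
  refine ⟨⟨e.symm j, by simp [hj]⟩, fun i hi => ?_⟩
  obtain ⟨j', hj1, hj2⟩ := h2 (e i) hi
  exact ⟨e.symm j', by simpa using hj1, by simpa using hj2⟩

def confEquiv {m : ℕ} {α β : Type*} (e : α ≃ β) : Conf m α ≃ Conf m β where
  toFun c := ⟨c.1 ∘ e.symm, c.2.comp e.symm⟩
  invFun c := ⟨c.1 ∘ e, c.2.comp e⟩
  left_inv c := by apply Subtype.ext; funext i; simp
  right_inv c := by apply Subtype.ext; funext i; simp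

lemma conf_val_le {α : Type*} [Fintype α] {m : ℕ} {c : α → ℕ}
    (h : IsConf m c) (i : α) : c i ≤ m * Fintype.card α := by
  classical
  have key : ∀ v : ℕ, ∀ i : α, c i = v →
      c i ≤ m * ((Finset.univ.image c).filter (· < c i)).card := by
    intro v
    induction v using Nat.strong_induction_on with
    | _ v ih =>
      intro i hi
      rcases Nat.eq_zero_or_pos (c i) with h0 | h0
      · simp [h0]
      · obtain ⟨j, hj1, hj2⟩ := h.2 i h0
        have hjlt : c j < v := hi ▸ hj1
        have hIH := ih (c j) hjlt j rfl
        have hsub : insert (c j) ((Finset.univ.image c).filter (· < c j)) ⊆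
            (Finset.univ.image c).filter (· < c i) := by
          intro x hx
          rcases Finset.mem_insert.mp hx with rfl | hx
          · exact Finset.mem_filter.mpr ⟨Finset.mem_image_of_mem c (Finset.mem_univ j), hj1⟩
          · obtain ⟨hx1, hx2⟩ := Finset.mem_filter.mp hx
            exact Finset.mem_filter.mpr ⟨hx1, lt_trans hx2 hj1⟩
        have hcard : ((Finset.univ.image c).filter (· < c j)).card + 1 ≤
            ((Finset.univ.image c).filter (· < c i)).card := by
          have h1 := Finset.card_le_card hsub
          rwa [Finset.card_insert_of_notMem (by simp)] at h1
        calc c i ≤ c j + m := hj2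
          _ ≤ m * ((Finset.univ.image c).filter (· < c j)).card + m := by omega
          _ = m * (((Finset.univ.image c).filter (· < c j)).card + 1) := by ring
          _ ≤ m * ((Finset.univ.image c).filter (· < c i)).card :=
            Nat.mul_le_mul_left m hcard
  calc c i ≤ m * ((Finset.univ.image c).filter (· < c i)).card := key (c i) i rfl
    _ ≤ m * Fintype.card α := by
        refine Nat.mul_le_mul_left m (le_trans (Finset.card_filter_le _ _)
          (le_trans Finset.card_image_le ?_))
        simp

instance instFiniteConf {m : ℕ} {α : Type*} [Finite α] : Finite (Conf m α) := by
  classical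
  cases nonempty_fintype α
  refine Finite.of_injective (fun c : Conf m α =>
    (fun i => (⟨c.1 i, Nat.lt_succ_of_le (conf_val_le c.2 i)⟩ :
      Fin (m * Fintype.card α + 1)))) ?_
  intro c d h
  apply Subtype.ext; funext i
  exact congrArg Fin.val (congrFun h i)

/-- the number of configurations on `n` points -/
noncomputable def confCard (m n : ℕ) : ℕ := Nat.card (Conf m (Fin n))

instance {m : ℕ} : IsEmpty (Conf m (Fin 0)) :=
  ⟨fun c => by obtain ⟨⟨j, _⟩, _⟩ := c.2; exact j.elim0⟩

lemma confCard_zero (m : ℕ) : confCard m 0 = 0 := by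
  simp [confCard]

end CatProof

namespace CatProof

section Bij

variable {m : ℕ} {α : Type*} [Fintype α] [DecidableEq α]

/-- glue a top block `T` at value `M` onto a configuration on the complement -/
def glue (T : Finset α) (M : ℕ) (c' : {i : α // i ∉ T} → ℕ) : α → ℕ :=
  fun i => if h : i ∈ T then M else c' ⟨i, h⟩

/-- data pieces: a nonempty top block, a gap, and a configuration on the complement -/
def Pieces (m : ℕ) (α : Type*) [Fintype α] [DecidableEq α] :=
  Σ T : {T : Finset α // T.Nonempty}, Fin m × Conf m {i : α // i ∉ T.1}

/-- nonconstant configurations -/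
def NConf (m : ℕ) (α : Type*) := {c : Conf m α // c.1 ≠ fun _ => 0}

instance {m : ℕ} {α : Type*} [Finite α] : Finite (NConf m α) :=
  inferInstanceAs (Finite {c : Conf m α // c.1 ≠ fun _ => 0})

lemma glue_isConf (T : Finset α) (g : Fin m) (c' : {i : α // i ∉ T} → ℕ)
    (hc' : IsConf m c') :
    IsConf m (glue T (Finset.univ.sup c' + g.1 + 1) c') := by
  obtain ⟨⟨j0, hj0⟩, hcond⟩ := hc'
  have hne : (Finset.univ : Finset {i : α // i ∉ T}).Nonempty := ⟨j0, Finset.mem_univ _⟩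
  obtain ⟨jm, _, hjm⟩ := Finset.exists_mem_eq_sup Finset.univ hne c'
  constructor
  · exact ⟨j0.1, by simp [glue, j0.2, hj0]⟩
  · intro i hi
    by_cases hiT : i ∈ T
    · refine ⟨jm.1, ?_, ?_⟩
      · simp only [glue, dif_pos hiT, dif_neg jm.2, Subtype.coe_eta]
        omega
      · simp only [glue, dif_pos hiT, dif_neg jm.2, Subtype.coe_eta]
        have : g.1 + 1 ≤ m := g.2
        omega
    · simp only [glue, dif_neg hiT] at hi
      obtain ⟨j, hj1, hj2⟩ := hcond ⟨i, hiT⟩ hi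
      refine ⟨j.1, ?_, ?_⟩ <;> simp only [glue, dif_neg hiT, dif_neg j.2, Subtype.coe_eta] <;> omega

lemma glue_ne_zero (T : Finset α) (hT : T.Nonempty) (M : ℕ) (hM : 0 < M)
    (c' : {i : α // i ∉ T} → ℕ) : glue T M c' ≠ fun _ => 0 := by
  obtain ⟨i, hi⟩ := hT
  intro h
  have := congrFun h i
  simp only [glue, dif_pos hi] at this
  omega

/-- the backward map of the recursion bijection -/
def backward (x : Pieces m α) : NConf m α :=
  ⟨⟨glue x.1.1 (Finset.univ.sup x.2.2.1 + x.2.1.1 + 1) x.2.2.1,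
    glue_isConf x.1.1 x.2.1 x.2.2.1 x.2.2.2⟩,
   glue_ne_zero x.1.1 x.1.2 _ (by omega) x.2.2.1⟩

lemma glue_sup (T : Finset α) (hT : T.Nonempty) (M : ℕ)
    (c' : {i : α // i ∉ T} → ℕ) (hlt : ∀ j, c' j < M) :
    Finset.univ.sup (glue T M c') = M := by
  apply le_antisymm
  · refine Finset.sup_le fun i _ => ?_
    by_cases hiT : i ∈ T
    · simp [glue, dif_pos hiT]
    · simp only [glue, dif_neg hiT]
      exact le_of_lt (hlt _)
  · obtain ⟨i, hi⟩ := hT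
    have : glue T M c' i = M := by simp [glue, dif_pos hi]
    exact le_trans (le_of_eq this.symm) (Finset.le_sup (Finset.mem_univ i))

lemma glue_mem_iff (T : Finset α) (hT : T.Nonempty) (M : ℕ)
    (c' : {i : α // i ∉ T} → ℕ) (hlt : ∀ j, c' j < M) (i : α) :
    i ∈ T ↔ glue T M c' i = Finset.univ.sup (glue T M c') := by
  rw [glue_sup T hT M c' hlt]
  constructor
  · intro h; simp [glue, dif_pos h]
  · intro h
    by_contra hiT
    simp only [glue, dif_neg hiT] at h
    exact absurd h (Nat.ne_of_lt (hlt _))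

end Bij

end CatProof

namespace CatProof

section Bij2

set_option linter.unusedSectionVars false

variable {m : ℕ} {α : Type*} [Fintype α] [DecidableEq α]

lemma backward_val (T : {T : Finset α // T.Nonempty}) (g : Fin m)
    (c' : Conf m {i : α // i ∉ T.1}) :
    (backward ⟨T, g, c'⟩).1.1 = glue T.1 (Finset.univ.sup c'.1 + g.1 + 1) c'.1 := rfl

lemma sup_restrict_lt (T : Finset α) (g : Fin m) (c' : {i : α // i ∉ T} → ℕ) :
    ∀ j, c' j < Finset.univ.sup c' + g.1 + 1 := by
  intro j
  have : c' j ≤ Finset.univ.sup c' := Finset.le_sup (Finset.mem_univ j)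
  omega

lemma backward_injective : Function.Injective (backward (m := m) (α := α)) := by
  rintro ⟨T1, g1, c1⟩ ⟨T2, g2, c2⟩ h
  have hval : glue T1.1 (Finset.univ.sup c1.1 + g1.1 + 1) c1.1
      = glue T2.1 (Finset.univ.sup c2.1 + g2.1 + 1) c2.1 := by
    have := congrArg (fun x => x.1.1) h
    simpa [backward_val] using this
  have hT : T1 = T2 := by
    apply Subtype.ext
    ext i
    rw [glue_mem_iff T1.1 T1.2 _ c1.1 (sup_restrict_lt T1.1 g1 c1.1) i]
    conv_rhs => rw [glue_mem_iff T2.1 T2.2 _ c2.1 (sup_restrict_lt T2.1 g2 c2.1) i]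
    rw [← hval]
  subst hT
  have hc12 : c1 = c2 := by
    apply Subtype.ext; funext j
    have := congrFun hval j.1
    simpa [glue, dif_neg j.2, Subtype.coe_eta] using this
  subst hc12
  have hg : g1 = g2 := by
    have := congrFun hval (T1.2.choose)
    simp only [glue, dif_pos T1.2.choose_spec] at this
    exact Fin.ext (by omega)
  subst hg
  rfl

lemma backward_surjective : Function.Surjective (backward (m := m) (α := α)) := by
  rintro ⟨⟨c, hc⟩, hnc⟩
  have hex : ∃ i, c i ≠ 0 := by
    by_contra h
    push_neg at h
    exact hnc (funext fun i => h i)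
  obtain ⟨i0, hi0⟩ := hex
  have huniv : (Finset.univ : Finset α).Nonempty := ⟨i0, Finset.mem_univ _⟩
  obtain ⟨imax, _, himax⟩ := Finset.exists_mem_eq_sup Finset.univ huniv c
  have hle : ∀ i, c i ≤ c imax := fun i => himax ▸ Finset.le_sup (Finset.mem_univ i)
  set M : ℕ := c imax with hM
  have hMpos : 0 < M := lt_of_lt_of_le (Nat.pos_of_ne_zero hi0) (hle i0)
  set T : Finset α := Finset.univ.filter (fun i => c i = M) with hTdef
  have hmemT : ∀ i, i ∈ T ↔ c i = M := by intro i; simp [hTdef]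
  have hT : T.Nonempty := ⟨imax, (hmemT imax).mpr rfl⟩
  set c' : {i : α // i ∉ T} → ℕ := fun j => c j.1 with hc'def
  have hnotT : ∀ i, i ∉ T → c i < M := by
    intro i hi
    have h1 : c i ≤ M := hle i
    have h2 : c i ≠ M := by simpa [hmemT] using hi
    omega
  have hc' : IsConf m c' := by
    constructor
    · obtain ⟨j, hj⟩ := hc.1
      have hjT : j ∉ T := by simp only [hmemT, hj]; omega
      exact ⟨⟨j, hjT⟩, hj⟩
    · rintro ⟨i, hiT⟩ hi
      obtain ⟨j, hj1, hj2⟩ := hc.2 i hi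
      have hjT : j ∉ T := by
        simp only [hmemT]
        have := hnotT i hiT
        omega
      exact ⟨⟨j, hjT⟩, hj1, hj2⟩
  have hβne : (Finset.univ : Finset {i : α // i ∉ T}).Nonempty := ⟨hc'.1.choose, Finset.mem_univ _⟩
  obtain ⟨jmax, _, hjmax⟩ := Finset.exists_mem_eq_sup Finset.univ hβne c'
  have hS : Finset.univ.sup c' = c jmax.1 := hjmax
  have hSM : c jmax.1 < M := hnotT jmax.1 jmax.2
  have hMSm : M ≤ c jmax.1 + m := by
    obtain ⟨j, hj1, hj2⟩ := hc.2 imax hMpos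
    have hjT : j ∉ T := by simp only [hmemT]; omega
    have hle2 : c j ≤ c jmax.1 := by
      have := Finset.le_sup (f := c') (Finset.mem_univ (⟨j, hjT⟩ : {i : α // i ∉ T}))
      rw [hS] at this
      exact this
    omega
  have hgok : M - c jmax.1 - 1 < m := by omega
  refine ⟨⟨⟨T, hT⟩, ⟨M - c jmax.1 - 1, hgok⟩, ⟨c', hc'⟩⟩, ?_⟩
  apply Subtype.ext; apply Subtype.ext
  funext i
  show glue T (Finset.univ.sup c' + (M - c jmax.1 - 1) + 1) c' i = c i
  by_cases hiT : i ∈ T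
  · simp only [glue, dif_pos hiT, hS]
    have : c i = M := (hmemT i).mp hiT
    omega
  · simp [glue, dif_neg hiT, hc'def]

lemma nat_card_sigma {ι : Type*} [Fintype ι] (f : ι → Type*) [∀ i, Finite (f i)] :
    Nat.card (Sigma f) = ∑ i, Nat.card (f i) := by
  classical
  letI : ∀ i, Fintype (f i) := fun i => Fintype.ofFinite _
  simp [Nat.card_eq_fintype_card, Fintype.card_sigma]

end Bij2

end CatProof

namespace CatProof

theorem confCard_rec (m n : ℕ) (hn : 1 ≤ n) :
    confCard m n = 1 + m * ∑ i ∈ Finset.Icc 1 n, n.choose i * confCard m (n - i) := by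
  classical
  have i0 : Fin n := ⟨0, hn⟩
  -- split off the constant configuration
  have hsplit : confCard m n
      = Nat.card {c : Conf m (Fin n) // c.1 = fun _ => 0} + Nat.card (NConf m (Fin n)) := by
    rw [confCard, ← Nat.card_sum]
    exact Nat.card_congr (Equiv.sumCompl (fun c : Conf m (Fin n) => c.1 = fun _ => 0)).symm
  have hone : Nat.card {c : Conf m (Fin n) // c.1 = fun _ => 0} = 1 := by
    rw [Nat.card_eq_one_iff_exists]
    refine ⟨⟨⟨fun _ => 0, ⟨i0, rfl⟩, fun i hi => absurd hi (by simp)⟩, rfl⟩, ?_⟩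
    rintro ⟨⟨y, hy⟩, hy0⟩
    apply Subtype.ext; apply Subtype.ext
    exact hy0
  have hnc : Nat.card (NConf m (Fin n)) = Nat.card (Pieces m (Fin n)) :=
    (Nat.card_eq_of_bijective backward ⟨backward_injective, backward_surjective⟩).symm
  have hfiber : ∀ T : Finset (Fin n),
      Nat.card (Fin m × Conf m {i : Fin n // i ∉ T}) = m * confCard m (n - T.card) := by
    intro T
    rw [Nat.card_prod]
    congr 1
    · simp [Nat.card_eq_fintype_card]
    · have hcard : Fintype.card {i : Fin n // i ∉ T} = n - T.card := by
        rw [Fintype.card_subtype_compl]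
        simp
      exact Nat.card_congr (confEquiv (Fintype.equivFinOfCardEq hcard))
  have hsig : Nat.card (Pieces m (Fin n))
      = ∑ T : {T : Finset (Fin n) // T.Nonempty}, m * confCard m (n - T.1.card) := by
    rw [Pieces, nat_card_sigma]
    exact Finset.sum_congr rfl fun T _ => hfiber T.1
  have hsub : ∑ T : {T : Finset (Fin n) // T.Nonempty}, m * confCard m (n - T.1.card)
      = ∑ T ∈ Finset.univ.filter (fun T : Finset (Fin n) => T.Nonempty),
          m * confCard m (n - T.card) := by
    exact (Finset.sum_subtype (Finset.univ.filter (fun T : Finset (Fin n) => T.Nonempty))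
      (fun T => by simp) (fun T => m * confCard m (n - T.card))).symm
  set G : ℕ → ℕ := fun k => if 0 < k then m * confCard m (n - k) else 0 with hG
  have hfil : ∑ T ∈ Finset.univ.filter (fun T : Finset (Fin n) => T.Nonempty),
      m * confCard m (n - T.card) = ∑ T ∈ (Finset.univ : Finset (Finset (Fin n))), G T.card := by
    rw [Finset.sum_filter]
    refine Finset.sum_congr rfl fun T _ => ?_
    by_cases h : T.Nonempty
    · rw [if_pos h, hG]
      simp [Finset.card_pos.mpr h]
    · rw [if_neg h, hG]
      simp only [Finset.not_nonempty_iff_eq_empty] at h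
      simp [h]
  have hpow : ∑ T ∈ (Finset.univ : Finset (Finset (Fin n))), G T.card
      = ∑ j ∈ Finset.range (n + 1), n.choose j * G j := by
    rw [← Finset.powerset_univ, Finset.sum_powerset]
    have h1 : ∀ j, ∑ t ∈ Finset.powersetCard j (Finset.univ : Finset (Fin n)), G t.card
        = n.choose j * G j := by
      intro j
      rw [Finset.sum_powersetCard j Finset.univ G, Finset.card_univ, Fintype.card_fin,
        smul_eq_mul]
    rw [Finset.card_univ, Fintype.card_fin]
    exact Finset.sum_congr rfl fun j _ => h1 j
  have hicc : ∑ j ∈ Finset.range (n + 1), n.choose j * G j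
      = m * ∑ i ∈ Finset.Icc 1 n, n.choose i * confCard m (n - i) := by
    have h2 : Finset.Icc 1 n = (Finset.range (n+1)).filter (fun j => 0 < j) := by
      ext j
      simp only [Finset.mem_Icc, Finset.mem_filter, Finset.mem_range]
      omega
    rw [Finset.mul_sum, h2, Finset.sum_filter]
    refine Finset.sum_congr rfl fun j _ => ?_
    rw [hG]
    by_cases h : 0 < j
    · simp only [if_pos h]; ring
    · simp only [if_neg h, Nat.mul_zero]
  rw [hsplit, hone, hnc, hsig, hsub, hfil, hpow, hicc]

end CatProof

namespace CatProof

/-- the line through `c` in direction `(1,…,1)` -/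
def lineOf (n : ℕ) (c : Fin n → ℝ) : Set (Fin n → ℝ) :=
  {x | ∃ t : ℝ, x = fun i => c i + t}

/-- the all-ones vector -/
def oneVec (n : ℕ) : Fin n → ℝ := fun _ => 1

lemma oneVec_ne_zero {n : ℕ} (hn : 1 ≤ n) : oneVec n ≠ 0 := by
  intro h
  have := congrFun h ⟨0, hn⟩
  simp [oneVec] at this

lemma vectorSpan_lineOf {n : ℕ} (c : Fin n → ℝ) :
    vectorSpan ℝ (lineOf n c) = Submodule.span ℝ {oneVec n} := by
  apply le_antisymm
  · rw [vectorSpan, Submodule.span_le]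
    rintro v ⟨x, hx, y, hy, rfl⟩
    obtain ⟨t, rfl⟩ := hx
    obtain ⟨s, rfl⟩ := hy
    refine Submodule.mem_span_singleton.mpr ⟨t - s, ?_⟩
    funext i
    show (t - s) * 1 = (c i + t) - (c i + s)
    ring
  · rw [Submodule.span_le, Set.singleton_subset_iff]
    have h1 : (fun i => c i + 1) ∈ lineOf n c := ⟨1, rfl⟩
    have h0 : (fun i => c i + 0) ∈ lineOf n c := ⟨0, rfl⟩
    have := vsub_mem_vectorSpan ℝ h1 h0
    show oneVec n ∈ vectorSpan ℝ (lineOf n c)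
    convert this using 1
    funext i
    show (1 : ℝ) = (c i + 1) - (c i + 0)
    ring

lemma flatDim_lineOf {n : ℕ} (hn : 1 ≤ n) (c : Fin n → ℝ) :
    flatDim (lineOf n c) = 1 := by
  rw [flatDim, direction_affineSpan, vectorSpan_lineOf]
  exact finrank_span_singleton (oneVec_ne_zero hn)

lemma lineOf_self_mem {n : ℕ} (c : Fin n → ℝ) : c ∈ lineOf n c :=
  ⟨0, funext fun i => (add_zero _).symm⟩

/-- an integer-valued configuration gives a flat -/
lemma lineOf_eq_sInter {m n : ℕ} {c : Fin n → ℕ} (hc : IsConf m c) :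
    lineOf n (fun i => (c i : ℝ)) = ⋂₀ {H | H ∈ CatalanArr m n ∧ lineOf n (fun i => (c i : ℝ)) ⊆ H} := by
  apply Set.Subset.antisymm
  · intro x hx H hH
    exact hH.2 hx
  · intro x hx
    -- key step: differences are forced along short edges
    have key : ∀ i j : Fin n, (c i : ℤ) ≤ c j + m → (c j : ℤ) ≤ c i + m →
        x i - x j = (c i : ℝ) - c j := by
      intro i j hij hji
      rcases lt_trichotomy i j with hlt | heq | hgt
      · have hmem : hyp n i j ((c i : ℤ) - c j) ∈ CatalanArr m n :=
          ⟨i, j, (c i : ℤ) - c j, hlt, by omega, by omega, rfl⟩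
        have hsub : lineOf n (fun i => (c i : ℝ)) ⊆ hyp n i j ((c i : ℤ) - c j) := by
          rintro y ⟨t, rfl⟩
          show ((c i : ℝ) + t) - ((c j : ℝ) + t) = ((((c i : ℤ) - c j) : ℤ) : ℝ)
          push_cast
          ring
        have := hx _ ⟨hmem, hsub⟩
        have h2 : x i - x j = ((((c i : ℤ) - c j) : ℤ) : ℝ) := this
        rw [h2]; push_cast; ring
      · subst heq; ring
      · have hmem : hyp n j i ((c j : ℤ) - c i) ∈ CatalanArr m n :=
          ⟨j, i, (c j : ℤ) - c i, hgt, by omega, by omega, rfl⟩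
        have hsub : lineOf n (fun i => (c i : ℝ)) ⊆ hyp n j i ((c j : ℤ) - c i) := by
          rintro y ⟨t, rfl⟩
          show ((c j : ℝ) + t) - ((c i : ℝ) + t) = ((((c j : ℤ) - c i) : ℤ) : ℝ)
          push_cast
          ring
        have := hx _ ⟨hmem, hsub⟩
        have h2 : x j - x i = ((((c j : ℤ) - c i) : ℤ) : ℝ) := this
        have h3 : x i - x j = -(x j - x i) := by ring
        rw [h3, h2]; push_cast; ring
    obtain ⟨j0, hj0⟩ := hc.1
    have main : ∀ v : ℕ, ∀ i : Fin n, c i = v → x i - (c i : ℝ) = x j0 := by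
      intro v
      induction v using Nat.strong_induction_on with
      | _ v ih =>
        intro i hi
        rcases Nat.eq_zero_or_pos (c i) with h0 | h0
        · have hthis := key i j0 (by omega) (by omega)
          have e1 : (c i : ℝ) = 0 := by rw [h0]; simp
          have e2 : (c j0 : ℝ) = 0 := by rw [hj0]; simp
          rw [e1, e2] at hthis
          rw [e1]
          linarith
        · obtain ⟨j, hj1, hj2⟩ := hc.2 i h0
          have hkey := key i j (by omega) (by omega)
          have hIH := ih (c j) (hi ▸ hj1) j rfl
          have hcast : (c j : ℝ) < (c i : ℝ) := by exact_mod_cast hj1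
          linarith
    exact ⟨x j0, funext fun i => by have := main (c i) i rfl; linarith⟩

lemma lineOf_mem_Lk {m n : ℕ} (hn : 1 ≤ n) {c : Fin n → ℕ} (hc : IsConf m c) :
    lineOf n (fun i => (c i : ℝ)) ∈ Lk (CatalanArr m n) 1 := by
  refine ⟨⟨⟨_, lineOf_self_mem _⟩, {H | H ∈ CatalanArr m n ∧ lineOf n (fun i => (c i : ℝ)) ⊆ H},
    fun H hH => hH.1, lineOf_eq_sInter hc⟩, flatDim_lineOf hn _⟩

lemma lineOf_inj {n : ℕ} {c c' : Fin n → ℕ} (h0 : ∃ j, c j = 0) (h0' : ∃ j, c' j = 0)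
    (h : lineOf n (fun i => (c i : ℝ)) = lineOf n (fun i => (c' i : ℝ))) : c = c' := by
  have hm := lineOf_self_mem (fun i => (c i : ℝ))
  rw [h] at hm
  obtain ⟨t, ht⟩ := hm
  obtain ⟨j, hj⟩ := h0
  obtain ⟨j', hj'⟩ := h0'
  have h1 := congrFun ht j
  have h2 := congrFun ht j'
  simp only [hj, hj', Nat.cast_zero] at h1 h2
  have ht0 : t = 0 := by
    have hc0 : (0:ℝ) ≤ (c j' : ℝ) := Nat.cast_nonneg _
    have hc0' : (0:ℝ) ≤ (c' j : ℝ) := Nat.cast_nonneg _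
    rw [h2] at hc0
    linarith
  funext i
  have h3 := congrFun ht i
  simp only [ht0, add_zero] at h3
  exact_mod_cast h3

end CatProof

namespace CatProof

lemma exists_conf_of_mem_Lk {m n : ℕ} (hn : 1 ≤ n) {F : Set (Fin n → ℝ)}
    (hF : F ∈ Lk (CatalanArr m n) 1) :
    ∃ c : Fin n → ℕ, IsConf m c ∧ lineOf n (fun i => (c i : ℝ)) = F := by
  obtain ⟨⟨⟨p, hp⟩, B, hBsub, hFB⟩, hdim⟩ := hF
  have hpF : ∀ H ∈ B, p ∈ H := by rw [hFB] at hp; exact fun H hH => hp H hH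
  -- translation invariance of F
  have htrans : ∀ t : ℝ, ∀ x ∈ F, (fun i => x i + t) ∈ F := by
    intro t x hx
    rw [hFB] at hx ⊢
    intro H hH
    obtain ⟨i, j, a, hij, h1, h2, rfl⟩ := hBsub hH
    have h3 : x i - x j = (a:ℝ) := hx _ hH
    show (x i + t) - (x j + t) = (a:ℝ)
    linarith
  -- perturbation lemma
  have hpert : ∀ v : Fin n → ℝ,
      (∀ i j : Fin n, ∀ a : ℤ, -(m:ℤ) ≤ a → a ≤ m → hyp n i j a ∈ B → v i = v j) →
      (fun i => p i + v i) ∈ F := by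
    intro v hv
    rw [hFB]
    intro H hH
    obtain ⟨i, j, a, hij, h1, h2, hHeq⟩ := hBsub hH
    subst hHeq
    have h3 : p i - p j = (a:ℝ) := hpF _ hH
    have h4 : v i = v j := hv i j a h1 h2 hH
    show (p i + v i) - (p j + v j) = (a:ℝ)
    rw [h4]; linarith
  set D := (affineSpan ℝ F).direction with hDdef
  have hdirF : ∀ x ∈ F, ∀ y ∈ F, x - y ∈ D := fun x hx y hy =>
    AffineSubspace.vsub_mem_direction (subset_affineSpan ℝ F hx) (subset_affineSpan ℝ F hy)
  have hone : oneVec n ∈ D := by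
    have h1 : (fun i => p i + 1) ∈ F := htrans 1 p hp
    have h2 := hdirF _ h1 _ hp
    have h3 : (fun i => p i + 1) - p = oneVec n := by
      funext i; show (p i + 1) - p i = 1; ring
    rwa [h3] at h2
  have hD : Submodule.span ℝ {oneVec n} = D := by
    apply Submodule.eq_of_le_of_finrank_le
    · rw [Submodule.span_le, Set.singleton_subset_iff]; exact hone
    · rw [finrank_span_singleton (oneVec_ne_zero hn)]
      exact le_of_eq hdim
  have hmemD : ∀ v : Fin n → ℝ, (fun i => p i + v i) ∈ F → ∃ t : ℝ, ∀ i, v i = t := by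
    intro v hv
    have h1 : (fun i => p i + v i) - p = v := by funext i; show (p i + v i) - p i = v i; ring
    have h2 : v ∈ D := h1 ▸ hdirF _ hv _ hp
    rw [← hD] at h2
    obtain ⟨t, ht⟩ := Submodule.mem_span_singleton.mp h2
    exact ⟨t, fun i => by have := congrFun ht i; simp [oneVec] at this; linarith⟩
  have hFline : F = lineOf n p := by
    ext x
    constructor
    · intro hx
      have h1 : (fun i => p i + (x i - p i)) ∈ F := by
        convert hx using 1; funext i; ring
      obtain ⟨t, ht⟩ := hmemD _ h1
      exact ⟨t, funext fun i => by have := ht i; linarith⟩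
    · rintro ⟨t, rfl⟩
      exact htrans t p hp
  -- the cut lemma
  have hcut : ∀ r : ℝ, (∃ i1, p i1 < r) → (∃ i2, ¬ p i2 < r) →
      ∃ j k : Fin n, ∃ a : ℤ, p j < r ∧ ¬ p k < r ∧ p k - p j = (a:ℝ) ∧ a ≤ m := by
    intro r h1 h2
    obtain ⟨i1, hi1⟩ := h1
    obtain ⟨i2, hi2⟩ := h2
    by_contra hcon
    push_neg at hcon
    classical
    set χ : Fin n → ℝ := fun i => if p i < r then 1 else 0 with hχ
    have hmem : (fun i => p i + χ i) ∈ F := by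
      apply hpert
      intro i j a hma ham hH
      have hpa : p i - p j = (a:ℝ) := hpF _ hH
      by_cases hi : p i < r <;> by_cases hj : p j < r
      · simp [hχ, hi, hj]
      · -- p i < r ≤ p j : crossing (i, j) with p j - p i = -a? p j - p i = -a
        exfalso
        have hval : p j - p i = ((-a : ℤ):ℝ) := by push_cast; linarith
        have h5 : (m:ℤ) < -a := hcon i j (-a) hi (not_lt.mp hj) hval
        omega
      · exfalso
        have h5 : (m:ℤ) < a := hcon j i a hj (not_lt.mp hi) hpa
        omega
      · simp [hχ, hi, hj]
    obtain ⟨t, ht⟩ := hmemD _ hmem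
    have e1 := ht i1
    have e2 := ht i2
    simp [hχ, hi1, hi2] at e1 e2
    rw [← e1] at e2
    exact one_ne_zero e2.symm
  -- the minimum coordinate
  obtain ⟨imin, -, hmin⟩ := Finset.exists_min_image Finset.univ p ⟨⟨0, hn⟩, Finset.mem_univ _⟩
  have hmin' : ∀ i, p imin ≤ p i := fun i => hmin i (Finset.mem_univ i)
  -- connectivity relation from B
  set rel : Fin n → Fin n → Prop := fun i j =>
    ∃ a : ℤ, (hyp n i j a ∈ B ∨ hyp n j i a ∈ B) with hreldef
  have hrelsymm : ∀ i j, rel i j → rel j i := by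
    rintro i j ⟨a, h⟩; exact ⟨a, h.symm⟩
  have hrelint : ∀ i j, rel i j → ∃ a : ℤ, p i - p j = (a:ℝ) := by
    rintro i j ⟨a, h | h⟩
    · exact ⟨a, hpF _ h⟩
    · have := hpF _ h
      exact ⟨-a, by push_cast; have h2 : p j - p i = (a:ℝ) := this; linarith⟩
  have hconn : ∀ i, Relation.ReflTransGen rel imin i := by
    intro i
    by_contra hi
    classical
    set χ : Fin n → ℝ := fun j => if Relation.ReflTransGen rel imin j then 1 else 0 with hχ
    have hmem : (fun k => p k + χ k) ∈ F := by
      apply hpert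
      intro i' j' a hma ham hH
      have h1 : rel i' j' := ⟨a, Or.inl hH⟩
      by_cases h : Relation.ReflTransGen rel imin i'
      · have h2 : Relation.ReflTransGen rel imin j' := h.tail h1
        simp [hχ, h, h2]
      · have h2 : ¬ Relation.ReflTransGen rel imin j' := fun hj => h (hj.tail (hrelsymm _ _ h1))
        simp [hχ, h, h2]
    obtain ⟨t, ht⟩ := hmemD _ hmem
    have e1 := ht imin
    have e2 := ht i
    simp [hχ, Relation.ReflTransGen.refl, hi] at e1 e2
    rw [← e1] at e2
    exact one_ne_zero e2.symm
  have hint : ∀ i, ∃ a : ℤ, p i - p imin = (a:ℝ) := by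
    intro i
    have h := hconn i
    induction h with
    | refl => exact ⟨0, by simp⟩
    | @tail b c hab hbc ih =>
      obtain ⟨a1, ha1⟩ := ih
      obtain ⟨a2, ha2⟩ := hrelint _ _ (hrelsymm _ _ hbc)
      exact ⟨a1 + a2, by push_cast; linarith⟩
  have hnat : ∀ i, ∃ k : ℕ, p i = p imin + (k:ℝ) := by
    intro i
    obtain ⟨a, ha⟩ := hint i
    have ha0 : (0:ℝ) ≤ (a:ℝ) := by have := hmin' i; linarith
    have ha0' : 0 ≤ a := by exact_mod_cast ha0
    refine ⟨a.toNat, ?_⟩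
    have : ((a.toNat : ℤ) : ℝ) = (a:ℝ) := by rw [Int.toNat_of_nonneg ha0']
    push_cast at this ⊢
    linarith
  choose c hc using hnat
  refine ⟨c, ⟨⟨imin, ?_⟩, ?_⟩, ?_⟩
  · have h1 := hc imin
    have h2 : (c imin : ℝ) = 0 := by linarith
    exact_mod_cast h2
  · intro i hi
    have hpi : p imin < p i := by
      have h1 := hc i
      have h2 : (0:ℝ) < (c i : ℝ) := by exact_mod_cast hi
      linarith
    obtain ⟨j, k, a, hj, hk, hka, ham⟩ := hcut (p i) ⟨imin, hpi⟩ ⟨i, lt_irrefl _⟩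
    push_neg at hk
    refine ⟨j, ?_, ?_⟩
    · have h1 := hc i
      have h2 := hc j
      have h3 : (c j : ℝ) < (c i : ℝ) := by linarith
      exact_mod_cast h3
    · have ham' : (a:ℝ) ≤ (m:ℝ) := by exact_mod_cast ham
      have h1 := hc i
      have h2 := hc j
      have h3 : (c i : ℝ) ≤ (c j : ℝ) + (m:ℝ) := by linarith
      exact_mod_cast h3
  · rw [hFline]
    ext x
    constructor
    · rintro ⟨t, rfl⟩
      refine ⟨t - p imin, funext fun i => ?_⟩
      have := hc i
      show (c i : ℝ) + t = p i + (t - p imin)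
      linarith
    · rintro ⟨t, rfl⟩
      refine ⟨t + p imin, funext fun i => ?_⟩
      have := hc i
      show p i + t = (c i : ℝ) + (t + p imin)
      linarith

end CatProof


namespace CatProof

lemma Lk_card (m n : ℕ) (hn : 1 ≤ n) :
    (Lk (CatalanArr m n) 1).ncard = confCard m n := by
  rw [← Nat.card_coe_set_eq, confCard]
  refine (Nat.card_eq_of_bijective (fun c : Conf m (Fin n) =>
    (⟨lineOf n (fun i => (c.1 i : ℝ)), lineOf_mem_Lk hn c.2⟩ :
      ↥(Lk (CatalanArr m n) 1))) ⟨?_, ?_⟩).symm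
  · intro c d h
    exact Subtype.ext (lineOf_inj c.2.1 d.2.1 (congrArg Subtype.val h))
  · rintro ⟨G, hG⟩
    obtain ⟨c, hc, heq⟩ := exists_conf_of_mem_Lk hn hG
    exact ⟨⟨c, hc⟩, Subtype.ext heq⟩

end CatProof

open CatProof in
/-- If `F ∈ ℚ⟦X⟧` has `X^n`-coefficient `|L_1(C^m_n)|/n!` for `n ≥ 1` and `0` for
`n = 0`, then `(1 - m·(exp X - 1)) · F = exp X - 1`. -/
theorem catalan_egf (m : ℕ) (F : PowerSeries ℚ)
    (hF : ∀ n : ℕ, PowerSeries.coeff n F =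
      if n = 0 then 0 else ((Lk (CatalanArr m n) 1).ncard : ℚ) / n.factorial) :
    (1 - (m : PowerSeries ℚ) * (PowerSeries.exp ℚ - 1)) * F = PowerSeries.exp ℚ - 1 := by
  classical
  have hF' : ∀ k : ℕ, PowerSeries.coeff k F = (confCard m k : ℚ) / k.factorial := by
    intro k
    rw [hF k]
    rcases Nat.eq_zero_or_pos k with rfl | hk
    · simp [confCard_zero]
    · rw [if_neg (by omega), Lk_card m k hk]
  have hE : ∀ k : ℕ, PowerSeries.coeff k (PowerSeries.exp ℚ - 1)
      = if k = 0 then 0 else 1 / (k.factorial : ℚ) := by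
    intro k
    rw [map_sub, PowerSeries.coeff_exp, PowerSeries.coeff_one]
    rcases Nat.eq_zero_or_pos k with rfl | hk
    · simp
    · rw [if_neg (by omega), if_neg (by omega), sub_zero]
      simp
  ext n
  rw [sub_mul, one_mul, mul_assoc, map_sub]
  have hm : PowerSeries.coeff n ((m : PowerSeries ℚ) * ((PowerSeries.exp ℚ - 1) * F))
      = (m : ℚ) * PowerSeries.coeff n ((PowerSeries.exp ℚ - 1) * F) := by
    rw [← map_natCast (PowerSeries.C : ℚ →+* PowerSeries ℚ) m, PowerSeries.coeff_C_mul]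
  rw [hm, PowerSeries.coeff_mul, Finset.Nat.sum_antidiagonal_eq_sum_range_succ_mk]
  rcases Nat.eq_zero_or_pos n with rfl | hn
  · simp [hF', hE, confCard_zero]
  · simp only [hE, hF']
    rw [if_neg hn.ne']
    have hfacne : ∀ k : ℕ, (k.factorial : ℚ) ≠ 0 := fun k => by
      exact_mod_cast k.factorial_ne_zero
    have hsum : (∑ k ∈ Finset.range (n+1),
        (if k = 0 then 0 else 1/(k.factorial:ℚ)) * ((confCard m (n-k) : ℚ)/(n-k).factorial))
        = (∑ k ∈ Finset.Icc 1 n, (n.choose k : ℚ) * confCard m (n - k)) / n.factorial := by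
      have h2 : Finset.Icc 1 n = (Finset.range (n+1)).filter (fun k => 0 < k) := by
        ext k
        simp only [Finset.mem_Icc, Finset.mem_filter, Finset.mem_range]
        omega
      rw [Finset.sum_div, h2, Finset.sum_filter]
      refine Finset.sum_congr rfl fun k hk => ?_
      rcases Nat.eq_zero_or_pos k with rfl | hk0
      · simp
      · rw [if_pos hk0, if_neg hk0.ne']
        have hkn : k ≤ n := by
          rw [Finset.mem_range] at hk
          omega
        rw [Nat.cast_choose ℚ hkn]
        field_simp
    rw [hsum]
    have hA : (confCard m n : ℚ)
        = 1 + m * ∑ k ∈ Finset.Icc 1 n, (n.choose k : ℚ) * confCard m (n - k) := by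
      have := confCard_rec m n hn
      push_cast [this]
      ring
    rw [hA]
    field_simp
    ring
end

section
/- Fix integers m ≥ 0 and k ≥ 1. In ℚ⟦X⟧, let F be the power series whose coefficient of X^n is |L_1(C^m_n)|/n! for n ≥ 1 and 0 for n = 0, and let F_k be the power series whose coefficient of X^n is |L_k(C^m_n)|/n! for n ≥ 1 and 0 for n = 0, where |L_k(C^m_n)| is the number of k-dimensional flats of the n-dimensional extended Catalan arrangement. Then k! · F_k = F^k. -/
open Set

open Set Function

section Defs
def EdgeRel (m : ℕ) {n k : ℕ} (p : Fin n → Fin k) (d : Fin n → ℤ) : SimpleGraph (Fin n) where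
  Adj i j := i ≠ j ∧ p i = p j ∧ |d i - d j| ≤ (m : ℤ)
  symm := ⟨by
    rintro i j ⟨h1, h2, h3⟩
    exact ⟨h1.symm, h2.symm, by rwa [abs_sub_comm]⟩⟩
  loopless := ⟨fun i h => h.1 rfl⟩

def IsData (m : ℕ) {n k : ℕ} (p : Fin n → Fin k) (d : Fin n → ℤ) : Prop :=
  Function.Surjective p ∧ (∀ i j, p i = p j → (EdgeRel m p d).Reachable i j) ∧
    (∀ i, (∀ j, p j = p i → i ≤ j) → d i = 0)

def Dat (m n k : ℕ) : Set ((Fin n → Fin k) × (Fin n → ℤ)) := {pd | IsData m pd.1 pd.2}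

def FlatOf {n k : ℕ} (p : Fin n → Fin k) (d : Fin n → ℤ) : Set (Fin n → ℝ) :=
  {x | ∀ i j, p i = p j → x i - x j = (d i : ℝ) - (d j : ℝ)}
end Defs

section Geometry
variable {m n k : ℕ} {p : Fin n → Fin k} {d : Fin n → ℤ}

lemma intCast_mem_flatOf : (fun i => (d i : ℝ)) ∈ FlatOf p d := fun _ _ _ => rfl

lemma flatOf_eq_mk' (hp : Surjective p) :
    FlatOf p d = ↑(AffineSubspace.mk' (fun i => (d i : ℝ))
      (LinearMap.range (LinearMap.funLeft ℝ ℝ p))) := by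
  ext x
  simp only [SetLike.mem_coe, AffineSubspace.mem_mk', LinearMap.mem_range,
    vsub_eq_sub]
  constructor
  · intro hx
    refine ⟨fun t => x (surjInv hp t) - d (surjInv hp t), funext fun i => ?_⟩
    have h1 : p (surjInv hp (p i)) = p i := rightInverse_surjInv hp (p i)
    have h2 := hx (surjInv hp (p i)) i h1
    simp only [LinearMap.funLeft_apply, Pi.sub_apply]
    linarith
  · rintro ⟨g, hg⟩ i j hij
    have hgi := congrFun hg i
    have hgj := congrFun hg j
    simp only [LinearMap.funLeft_apply, Pi.sub_apply, hij] at hgi hgj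
    linarith

lemma flatDim_flatOf (hp : Surjective p) : flatDim (FlatOf p d) = k := by
  rw [flatDim, flatOf_eq_mk' hp, AffineSubspace.affineSpan_coe, AffineSubspace.direction_mk',
    LinearMap.finrank_range_of_inj (LinearMap.funLeft_injective_of_surjective ℝ ℝ p hp),
    Module.finrank_fintype_fun_eq_card, Fintype.card_fin]

lemma walk_sub_eq {x : Fin n → ℝ}
    (hx : ∀ a b : Fin n, (EdgeRel m p d).Adj a b → x a - x b = (d a : ℝ) - d b)
    {i j : Fin n} (w : (EdgeRel m p d).Walk i j) : x i - x j = (d i : ℝ) - d j := by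
  induction w with
  | nil => simp
  | cons h w ih => have := hx _ _ h; linarith

lemma walk_bound {i j : Fin n} (w : (EdgeRel m p d).Walk i j) :
    |d i - d j| ≤ (m : ℤ) * w.length := by
  induction w with
  | nil => simp
  | @cons a b c h w ih =>
    have h3 := h.2.2
    have habs := abs_sub_le (d a) (d b) (d c)
    simp only [SimpleGraph.Walk.length_cons]
    push_cast
    nlinarith [ih, h3, habs]
end Geometry

section Flats
variable {m n k : ℕ} {p : Fin n → Fin k} {d : Fin n → ℤ}

lemma flatOf_mem_flats (h : IsData m p d) : FlatOf p d ∈ flats (CatalanArr m n) := by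
  refine ⟨⟨_, intCast_mem_flatOf⟩, {H | H ∈ CatalanArr m n ∧ FlatOf p d ⊆ H},
    fun H hH => hH.1, ?_⟩
  apply Set.Subset.antisymm
  · intro x hx
    rw [Set.mem_sInter]
    exact fun H hH => hH.2 hx
  · intro x hx i j hij
    rw [Set.mem_sInter] at hx
    obtain ⟨w⟩ := h.2.1 i j hij
    refine walk_sub_eq ?_ w
    intro a b hab
    obtain ⟨hne, hpab, habs⟩ := hab
    have habs' := abs_le.mp habs
    rcases lt_or_gt_of_ne hne with hlt | hgt
    · have hmem : hyp n a b (d a - d b) ∈ {H | H ∈ CatalanArr m n ∧ FlatOf p d ⊆ H} := by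
        refine ⟨⟨a, b, d a - d b, hlt, by omega, by omega, rfl⟩, ?_⟩
        intro y hy
        have := hy a b hpab
        show y a - y b = ((d a - d b : ℤ) : ℝ)
        push_cast
        linarith
      have := hx _ hmem
      have : x a - x b = ((d a - d b : ℤ) : ℝ) := this
      push_cast at this
      linarith
    · have hmem : hyp n b a (d b - d a) ∈ {H | H ∈ CatalanArr m n ∧ FlatOf p d ⊆ H} := by
        refine ⟨⟨b, a, d b - d a, hgt, by omega, by omega, rfl⟩, ?_⟩
        intro y hy
        have := hy b a hpab.symm
        show y b - y a = ((d b - d a : ℤ) : ℝ)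
        push_cast
        linarith
      have := hx _ hmem
      have : x b - x a = ((d b - d a : ℤ) : ℝ) := this
      push_cast at this
      linarith

lemma flatOf_mem_Lk (h : IsData m p d) : FlatOf p d ∈ Lk (CatalanArr m n) k :=
  ⟨flatOf_mem_flats h, flatDim_flatOf h.1⟩

lemma edgeRel_comp (σ : Equiv.Perm (Fin k)) : EdgeRel m (σ ∘ p) d = EdgeRel m p d := by
  ext a b
  simp [EdgeRel, σ.injective.eq_iff]

lemma flatOf_comp (σ : Equiv.Perm (Fin k)) : FlatOf (σ ∘ p) d = FlatOf p d := by
  ext x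
  exact ⟨fun hx i j hij => hx i j (by simp [Function.comp, hij]),
    fun hx i j hij => hx i j (σ.injective hij)⟩

lemma isData_comp (σ : Equiv.Perm (Fin k)) (h : IsData m p d) : IsData m (σ ∘ p) d := by
  refine ⟨σ.surjective.comp h.1, ?_, ?_⟩
  · intro i j hij
    rw [edgeRel_comp]
    exact h.2.1 i j (σ.injective hij)
  · intro i hi
    refine h.2.2 i fun j hj => hi j ?_
    simp [Function.comp, hj]
end Flats

section Unique
variable {m n k : ℕ} {p p' : Fin n → Fin k} {d d' : Fin n → ℤ}

/-- On `FlatOf p d`, the difference `x i - x j` is non-constant when `p i ≠ p j`. -/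
lemma exists_ne_diff (hij : p i ≠ p j) :
    ∃ y ∈ FlatOf p d, y i - y j ≠ (d i : ℝ) - d j := by
  refine ⟨fun l => (d l : ℝ) + (if p l = p i then 1 else 0), ?_, ?_⟩
  · intro a b hab
    have : (if p a = p i then (1:ℝ) else 0) = (if p b = p i then (1:ℝ) else 0) := by
      by_cases h : p a = p i
      · rw [if_pos h, if_pos (hab ▸ h)]
      · rw [if_neg h, if_neg (fun hb => h (hab ▸ hb))]
    ring_nf
    ring_nf at this
    linarith [this]
  · have h1 : (if p i = p i then (1:ℝ) else 0) = 1 := if_pos rfl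
    have h2 : (if p j = p i then (1:ℝ) else 0) = 0 := if_neg (Ne.symm hij)
    simp only [if_true, h2]
    intro hcon
    have : (1 : ℝ) = 0 := by linarith
    norm_num at this

lemma fib_eq_of_flatOf_eq {q q' : Fin n → Fin k} {δ δ' : Fin n → ℤ}
    (hqq : FlatOf q δ = FlatOf q' δ') {i j : Fin n} (hij : q i = q j) : q' i = q' j := by
  by_contra hne
  obtain ⟨y, hy, hyne⟩ := exists_ne_diff (p := q') (d := δ') hne
  have hy' : y ∈ FlatOf q δ := hqq ▸ hy
  have h1 := hy' i j hij
  have h2 : (fun l => ((δ' l : ℝ))) ∈ FlatOf q δ := by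
    rw [hqq]; exact intCast_mem_flatOf
  have h3 := h2 i j hij
  simp only at h3
  exact hyne (h1.trans h3.symm)

/-- Uniqueness: equal flats have the same data up to relabeling of fibers. -/
lemma unique_of_flatOf_eq (h : IsData m p d) (h' : IsData m p' d')
    (heq : FlatOf p d = FlatOf p' d') :
    (∃ σ : Equiv.Perm (Fin k), p' = σ ∘ p) ∧ d' = d := by
  have hfib : ∀ i j, p i = p j ↔ p' i = p' j :=
    fun i j => ⟨fun hij => fib_eq_of_flatOf_eq heq hij, fun hij => fib_eq_of_flatOf_eq heq.symm hij⟩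
  constructor
  · have hginj : Injective (fun t => p' (surjInv h.1 t)) := by
      intro t s hts
      have h2 : p (surjInv h.1 t) = p (surjInv h.1 s) := (hfib _ _).mpr hts
      rwa [rightInverse_surjInv h.1 t, rightInverse_surjInv h.1 s] at h2
    refine ⟨Equiv.ofBijective _ (Finite.injective_iff_bijective.mp hginj), funext fun i => ?_⟩
    have h2 : p (surjInv h.1 (p i)) = p i := rightInverse_surjInv h.1 (p i)
    exact ((hfib _ _).mp h2).symm
  · funext i
    have hne : i ∈ Finset.univ.filter (fun j => p j = p i) := by simp
    set j := (Finset.univ.filter (fun j => p j = p i)).min' ⟨i, hne⟩ with hjdef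
    have hj : p j = p i := by
      have := (Finset.univ.filter (fun j => p j = p i)).min'_mem ⟨i, hne⟩
      simpa using this
    have hjmin : ∀ l, p l = p j → j ≤ l := by
      intro l hl
      exact Finset.min'_le _ _ (by simp [hl.trans hj])
    have dj : d j = 0 := h.2.2 j hjmin
    have dj' : d' j = 0 := h'.2.2 j fun l hl => hjmin l ((hfib l j).mpr hl)
    have hmem : (fun l => ((d l : ℝ))) ∈ FlatOf p' d' := by
      rw [← heq]; exact intCast_mem_flatOf
    have h4 := hmem i j ((hfib i j).mp hj.symm)
    simp only [dj, dj'] at h4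
    push_cast at h4
    have : (d i : ℝ) = d' i := by linarith
    exact_mod_cast this.symm
end Unique
section Extract
variable {m n : ℕ}

lemma catalan_bound {H : Set (Fin n → ℝ)} (hH : H ∈ CatalanArr m n) {a b : Fin n} {c : ℤ}
    (hrep : H = hyp n a b c) : |c| ≤ (m : ℤ) := by
  obtain ⟨a', b', c', hlt, h1, h2, rfl⟩ := hH
  have hy : (fun l => if l = a' then (c' : ℝ) else 0) ∈ hyp n a' b' c' := by
    show (if a' = a' then (c' : ℝ) else 0) - (if b' = a' then (c' : ℝ) else 0) = c'
    rw [if_pos rfl, if_neg (by exact fun h => absurd h hlt.ne')]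
    ring
  rw [hrep] at hy
  have hy' : (if a = a' then (c' : ℝ) else 0) - (if b = a' then (c' : ℝ) else 0) = c := hy
  have hc : c = 0 ∨ c = c' ∨ c = -c' := by
    split_ifs at hy'
    · left; exact_mod_cast (by linarith : (c : ℝ) = 0)
    · right; left; exact_mod_cast (by linarith : (c' : ℝ) = c).symm
    · right; right; exact_mod_cast (by linarith : (c : ℝ) = -c')
    · left; exact_mod_cast (by linarith : (c : ℝ) = 0)
  rw [abs_le]; rcases hc with rfl | rfl | rfl <;> omega

lemma exists_data_of_mem_flats {F : Set (Fin n → ℝ)} (hF : F ∈ flats (CatalanArr m n)) :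
    ∃ (k : ℕ) (p : Fin n → Fin k) (d : Fin n → ℤ), IsData m p d ∧ F = FlatOf p d := by
  classical
  obtain ⟨⟨x0, hx0F⟩, B, hBsub, hFB⟩ := hF
  have hx0 : ∀ H ∈ B, x0 ∈ H := Set.mem_sInter.mp (hFB ▸ hx0F)
  set G0 : SimpleGraph (Fin n) :=
    { Adj := fun a b => a ≠ b ∧ ∃ H ∈ B, ∃ c : ℤ, H = hyp n a b c ∨ H = hyp n b a c
      symm := ⟨by
        rintro a b ⟨h1, H, hH, c, hc⟩
        exact ⟨h1.symm, H, hH, c, hc.symm⟩⟩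
      loopless := ⟨fun a h => h.1 rfl⟩ } with hG0
  -- along each edge, the difference of any two points of ⋂₀ B agree and are integers
  have hedge : ∀ a b : Fin n, G0.Adj a b → ∃ c : ℤ, |c| ≤ (m:ℤ) ∧ x0 a - x0 b = (c:ℝ) ∧
      ∀ x ∈ ⋂₀ B, x a - x b = (c : ℝ) := by
    rintro a b ⟨hne, H, hH, c, hc⟩
    rcases hc with rfl | rfl
    · exact ⟨c, catalan_bound (hBsub hH) rfl, hx0 _ hH,
        fun x hx => (Set.mem_sInter.mp hx) _ hH⟩
    · refine ⟨-c, by simpa using catalan_bound (hBsub hH) rfl, ?_, fun x hx => ?_⟩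
      · have := hx0 _ hH
        have h2 : x0 b - x0 a = (c : ℝ) := this
        push_cast; linarith
      · have h2 : x b - x a = (c : ℝ) := (Set.mem_sInter.mp hx) _ hH
        push_cast; linarith
  have hconst : ∀ x ∈ ⋂₀ B, ∀ i j : Fin n, G0.Reachable i j → x i - x j = x0 i - x0 j := by
    intro x hx i j hreach
    obtain ⟨w⟩ := hreach
    induction w with
    | nil => simp
    | @cons a b c hab w ih =>
      obtain ⟨cc, _, h1, h2⟩ := hedge a b hab
      have := h2 x hx
      linarith
  have hint : ∀ i j : Fin n, G0.Reachable i j → ∃ z : ℤ, x0 i - x0 j = (z : ℝ) := by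
    intro i j hreach
    obtain ⟨w⟩ := hreach
    induction w with
    | nil => exact ⟨0, by simp⟩
    | @cons a b c hab w ih =>
      obtain ⟨z, hz⟩ := ih
      obtain ⟨cc, _, h1, _⟩ := hedge a b hab
      exact ⟨cc + z, by push_cast; linarith⟩
  letI : Fintype G0.ConnectedComponent := Fintype.ofFinite _
  set e := Fintype.equivFin G0.ConnectedComponent with he
  set p : Fin n → Fin (Fintype.card G0.ConnectedComponent) :=
    fun i => e (G0.connectedComponentMk i) with hpdef
  have hp : ∀ i j, p i = p j ↔ G0.Reachable i j := by
    intro i j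
    rw [hpdef]
    simp only [Equiv.apply_eq_iff_eq]
    exact SimpleGraph.ConnectedComponent.eq
  have hfibne : ∀ i : Fin n, i ∈ Finset.univ.filter (fun j => p j = p i) := by simp
  set mf : Fin n → Fin n :=
    fun i => (Finset.univ.filter (fun j => p j = p i)).min' ⟨i, hfibne i⟩ with hmf
  have hmf1 : ∀ i, p (mf i) = p i := by
    intro i
    have := (Finset.univ.filter (fun j => p j = p i)).min'_mem ⟨i, hfibne i⟩
    simpa using this
  have hmf2 : ∀ i l, p l = p i → mf i ≤ l := by
    intro i l hl
    exact Finset.min'_le _ _ (by simp [hl])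
  have hmf3 : ∀ a b, p a = p b → mf a = mf b := by
    intro a b hab
    have : (Finset.univ.filter (fun j => p j = p a)) =
        (Finset.univ.filter (fun j => p j = p b)) := by
      ext l; simp [hab]
    simp only [hmf, this]
  set d : Fin n → ℤ :=
    fun i => Classical.choose (hint i (mf i) ((hp i (mf i)).mp (hmf1 i).symm)) with hd0
  have hd : ∀ i, x0 i - x0 (mf i) = (d i : ℝ) :=
    fun i => Classical.choose_spec (hint i (mf i) ((hp i (mf i)).mp (hmf1 i).symm))
  have hdiff : ∀ i j, p i = p j → (d i : ℝ) - d j = x0 i - x0 j := by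
    intro i j hij
    have h1 := hd i
    have h2 := hd j
    rw [hmf3 i j hij] at h1
    linarith
  refine ⟨_, p, d, ⟨?_, ?_, ?_⟩, ?_⟩
  · -- surjective
    intro t
    obtain ⟨i, hi⟩ := Quot.exists_rep (e.symm t)
    exact ⟨i, by rw [hpdef]; show e (G0.connectedComponentMk i) = t; rw [show G0.connectedComponentMk i = e.symm t from hi]; simp⟩
  · -- reachability
    intro i j hij
    refine ((hp i j).mp hij).mono ?_
    rintro a b ⟨hne, H, hH, c, hc⟩
    refine ⟨hne, (hp a b).mpr ⟨SimpleGraph.Walk.cons ⟨hne, H, hH, c, hc⟩ SimpleGraph.Walk.nil⟩, ?_⟩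
    obtain ⟨cc, hcc, h1, _⟩ := hedge a b ⟨hne, H, hH, c, hc⟩
    have : (d a : ℝ) - d b = (cc : ℝ) := by
      rw [hdiff a b ((hp a b).mpr ⟨SimpleGraph.Walk.cons ⟨hne, H, hH, c, hc⟩ SimpleGraph.Walk.nil⟩)]
      exact h1
    have : d a - d b = cc := by exact_mod_cast this
    rw [this]
    exact hcc
  · -- normalization
    intro i hi
    have h1 : mf i = i := le_antisymm (hmf2 i i rfl) (hi (mf i) (hmf1 i))
    have h2 := hd i
    rw [h1] at h2
    have : (d i : ℝ) = 0 := by linarith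
    exact_mod_cast this
  · -- F = FlatOf p d
    rw [hFB]
    apply Set.Subset.antisymm
    · intro x hx i j hij
      rw [hconst x hx i j ((hp i j).mp hij), hdiff i j hij]
    · intro y hy
      rw [Set.mem_sInter]
      intro H hH
      obtain ⟨a, b, c, hab, hc1, hc2, rfl⟩ := hBsub hH
      have hadj : G0.Adj a b := ⟨hab.ne, hyp n a b c, hH, c, Or.inl rfl⟩
      have hpab : p a = p b := (hp a b).mpr hadj.reachable
      have h5 := hy a b hpab
      have h6 : x0 a - x0 b = (c : ℝ) := hx0 _ hH
      have : y a - y b = (c : ℝ) := by rw [h5, hdiff a b hpab]; exact h6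
      exact this

lemma exists_data_of_mem_Lk {k : ℕ} {F : Set (Fin n → ℝ)} (hF : F ∈ Lk (CatalanArr m n) k) :
    ∃ pd ∈ Dat m n k, F = FlatOf pd.1 pd.2 := by
  obtain ⟨hflat, hdim⟩ := hF
  obtain ⟨k', p, d, hpd, rfl⟩ := exists_data_of_mem_flats hflat
  have hkk : k' = k := by rw [← hdim, flatDim_flatOf hpd.1]
  subst hkk
  exact ⟨(p, d), hpd, rfl⟩
end Extract
section Count
variable {m n k : ℕ} {p : Fin n → Fin k} {d : Fin n → ℤ}

lemma isData_bound (h : IsData m p d) (i : Fin n) : |d i| ≤ (m : ℤ) * n := by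
  classical
  have hfibne : i ∈ Finset.univ.filter (fun j => p j = p i) := by simp
  set j := (Finset.univ.filter (fun l => p l = p i)).min' ⟨i, hfibne⟩ with hj
  have hpj : p j = p i := by
    have := (Finset.univ.filter (fun l => p l = p i)).min'_mem ⟨i, hfibne⟩
    simpa using this
  have hdj : d j = 0 := h.2.2 j fun l hl => Finset.min'_le _ _ (by simp [hl.trans hpj])
  obtain ⟨w⟩ := h.2.1 i j hpj.symm
  have hb := walk_bound (w.toPath : (EdgeRel m p d).Path i j).1
  have hlen : ((w.toPath : (EdgeRel m p d).Path i j).1.length : ℤ) ≤ n := by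
    have := (w.toPath).2.length_lt
    simp only [Fintype.card_fin] at this
    exact_mod_cast this.le
  have : |d i - d j| ≤ (m : ℤ) * n :=
    hb.trans (by exact mul_le_mul_of_nonneg_left hlen (by positivity))
  rwa [hdj, sub_zero] at this

lemma slice_finite : {δ : Fin n → ℤ | IsData m p δ}.Finite := by
  apply Set.Finite.subset (Set.Finite.pi fun i : Fin n =>
    Set.finite_Icc (-((m : ℤ) * n)) ((m : ℤ) * n))
  intro δ hδ
  rw [Set.mem_pi]
  intro i _
  exact Set.mem_Icc.mpr (abs_le.mp (isData_bound hδ i))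

lemma dat_finite : (Dat m n k).Finite := by
  have h2 : (Set.univ ×ˢ (Set.univ.pi fun _ : Fin n =>
      Set.Icc (-((m : ℤ) * n)) ((m : ℤ) * n)) :
      Set ((Fin n → Fin k) × (Fin n → ℤ))).Finite :=
    Set.Finite.prod Set.finite_univ (Set.Finite.pi fun _ => Set.finite_Icc _ _)
  apply h2.subset
  rintro ⟨p, d⟩ h
  refine ⟨trivial, ?_⟩
  rw [Set.mem_pi]
  intro i _
  exact Set.mem_Icc.mpr (abs_le.mp (isData_bound h i))

lemma card_dat (m n k : ℕ) :
    Nat.card (Dat m n k) = k.factorial * Nat.card (Lk (CatalanArr m n) k) := by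
  classical
  have hrep : ∀ F : ↥(Lk (CatalanArr m n) k),
      ∃ pd, pd ∈ Dat m n k ∧ (F : Set (Fin n → ℝ)) = FlatOf pd.1 pd.2 :=
    fun F => exists_data_of_mem_Lk F.2
  choose rep hrep1 hrep2 using hrep
  set Ψ : ↥(Lk (CatalanArr m n) k) × Equiv.Perm (Fin k) → ↥(Dat m n k) :=
    fun Fσ => ⟨(Fσ.2 ∘ (rep Fσ.1).1, (rep Fσ.1).2), isData_comp Fσ.2 (hrep1 Fσ.1)⟩ with hΨ
  have hbij : Function.Bijective Ψ := by
    constructor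
    · rintro ⟨F, σ⟩ ⟨F', σ'⟩ hFF
      simp only [hΨ, Subtype.mk.injEq, Prod.mk.injEq] at hFF
      obtain ⟨h1, h2⟩ : σ ∘ (rep F).1 = σ' ∘ (rep F').1 ∧ (rep F).2 = (rep F').2 :=
        Prod.mk.inj (congrArg Subtype.val hFF)
      have hFeq : (F : Set (Fin n → ℝ)) = (F' : Set (Fin n → ℝ)) := by
        rw [hrep2 F, hrep2 F', ← flatOf_comp (p := (rep F).1) (d := (rep F).2) σ,
          ← flatOf_comp (p := (rep F').1) (d := (rep F').2) σ', h1, h2]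
      have hF : F = F' := Subtype.ext hFeq
      subst hF
      have hσ : σ = σ' :=
        Equiv.coe_fn_injective ((hrep1 F).1.injective_comp_right h1)
      rw [hσ]
    · rintro ⟨pd, hpd⟩
      set F : ↥(Lk (CatalanArr m n) k) := ⟨FlatOf pd.1 pd.2, flatOf_mem_Lk hpd⟩ with hFdef
      have h3 : FlatOf (rep F).1 (rep F).2 = FlatOf pd.1 pd.2 := (hrep2 F).symm
      obtain ⟨⟨σ, hσ⟩, hdd⟩ := unique_of_flatOf_eq (hrep1 F) hpd h3
      exact ⟨(F, σ), Subtype.ext (Prod.ext hσ.symm hdd.symm)⟩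
  calc Nat.card ↥(Dat m n k)
      = Nat.card (↥(Lk (CatalanArr m n) k) × Equiv.Perm (Fin k)) :=
        (Nat.card_congr (Equiv.ofBijective Ψ hbij)).symm
    _ = k.factorial * Nat.card (Lk (CatalanArr m n) k) := by
        rw [Nat.card_prod, Nat.card_eq_fintype_card (α := Equiv.Perm (Fin k)),
          Fintype.card_perm, Fintype.card_fin, mul_comm]
end Count
section Transfer
variable {m n b k k' : ℕ} {p : Fin n → Fin k} {d : Fin n → ℤ}
  {p' : Fin b → Fin k'} {d' : Fin b → ℤ} {e : Fin b → Fin n}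

lemma transfer_fwd (he : Function.Injective e)
    (hp : ∀ i j, p' i = p' j ↔ p (e i) = p (e j)) (hd : ∀ i, d' i = d (e i))
    (hsat : ∀ (i : Fin b) (x : Fin n), p x = p (e i) → ∃ j, e j = x) :
    ∀ {u v : Fin n}, (EdgeRel m p d).Walk u v →
      ∀ i j, e i = u → e j = v → (EdgeRel m p' d').Reachable i j := by
  intro u v w
  induction w with
  | nil =>
    intro i j hi hj
    rw [he (hi.trans hj.symm)]
  | @cons a bb c hab w ih =>
    intro i j hi hj
    have hpb : p bb = p (e i) := by rw [hi]; exact hab.2.1.symm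
    obtain ⟨i', hi'⟩ := hsat i bb hpb
    have hadj : (EdgeRel m p' d').Adj i i' := by
      refine ⟨fun hcon => hab.1 ?_, ?_, ?_⟩
      · rw [← hi, ← hi', hcon]
      · rw [hp, hi, hi']; exact hab.2.1
      · rw [hd, hd, hi, hi']; exact hab.2.2
    exact hadj.reachable.trans (ih i' j hi' hj)

lemma transfer_bwd (he : Function.Injective e)
    (hp : ∀ i j, p' i = p' j ↔ p (e i) = p (e j)) (hd : ∀ i, d' i = d (e i))
    {i j : Fin b} (w : (EdgeRel m p' d').Walk i j) :
    (EdgeRel m p d).Reachable (e i) (e j) := by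
  induction w with
  | nil => rfl
  | @cons a bb c hab w ih =>
    have hadj : (EdgeRel m p d).Adj (e a) (e bb) :=
      ⟨he.ne hab.1, (hp _ _).mp hab.2.1, by rw [← hd, ← hd]; exact hab.2.2⟩
    exact hadj.reachable.trans ih

lemma transfer_min (hmono : Monotone e) (he : Function.Injective e)
    (hp : ∀ i j, p' i = p' j ↔ p (e i) = p (e j))
    (hsat : ∀ (i : Fin b) (x : Fin n), p x = p (e i) → ∃ j, e j = x) (i : Fin b) :
    (∀ j, p' j = p' i → i ≤ j) ↔ (∀ x, p x = p (e i) → e i ≤ x) := by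
  constructor
  · intro hmin x hx
    obtain ⟨j, rfl⟩ := hsat i x hx
    exact hmono (hmin j ((hp j i).mpr hx))
  · intro hmin j hj
    exact (hmono.strictMono_of_injective he).le_iff_le.mp (hmin (e j) ((hp j i).mp hj))
end Transfer
section Split
variable {m n k : ℕ}

/-- Data for `C^m_n` with `k+1` parts, where the last fiber is exactly `S`. -/
def DatSplit (m n k : ℕ) (S : Finset (Fin n)) : Set ((Fin n → Fin (k + 1)) × (Fin n → ℤ)) :=
  {pd | IsData m pd.1 pd.2 ∧ ∀ x, pd.1 x = Fin.last k ↔ x ∈ S}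

lemma castDown_lt {t : Fin (k + 1)} (h : t ≠ Fin.last k) : (t : ℕ) < k := by
  have h1 := t.isLt
  have h2 : (t : ℕ) ≠ k := fun hv => h (Fin.ext (by simp [hv]))
  omega

section FwdS
variable {S : Finset (Fin n)} {p : Fin n → Fin (k + 1)} {d : Fin n → ℤ}
  (hS : ∀ x, p x = Fin.last k ↔ x ∈ S)

lemma eS_mem (s : Fin S.card) : ((S.orderIsoOfFin rfl s : {x // x ∈ S}) : Fin n) ∈ S :=
  (S.orderIsoOfFin rfl s).2

lemma eC_mem (s : Fin Sᶜ.card) : ((Sᶜ.orderIsoOfFin rfl s : {x // x ∈ Sᶜ}) : Fin n) ∈ Sᶜ :=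
  (Sᶜ.orderIsoOfFin rfl s).2

lemma eS_inj : Function.Injective (fun s : Fin S.card => ((S.orderIsoOfFin rfl s : {x // x ∈ S}) : Fin n)) :=
  fun a c hac => (S.orderIsoOfFin rfl).injective (Subtype.ext hac)

lemma eC_inj : Function.Injective (fun s : Fin Sᶜ.card => ((Sᶜ.orderIsoOfFin rfl s : {x // x ∈ Sᶜ}) : Fin n)) :=
  fun a c hac => (Sᶜ.orderIsoOfFin rfl).injective (Subtype.ext hac)

lemma eS_mono : Monotone (fun s : Fin S.card => ((S.orderIsoOfFin rfl s : {x // x ∈ S}) : Fin n)) :=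
  fun a c hac => (S.orderIsoOfFin rfl).monotone hac

lemma eC_mono : Monotone (fun s : Fin Sᶜ.card => ((Sᶜ.orderIsoOfFin rfl s : {x // x ∈ Sᶜ}) : Fin n)) :=
  fun a c hac => (Sᶜ.orderIsoOfFin rfl).monotone hac

/-- The `Fin k`-valued map on the complement of `S`. -/
def q2of (S : Finset (Fin n)) (p : Fin n → Fin (k + 1)) (hS : ∀ x, p x = Fin.last k ↔ x ∈ S) :
    Fin Sᶜ.card → Fin k := fun s =>
  ⟨(p ((Sᶜ.orderIsoOfFin rfl s : {x // x ∈ Sᶜ}) : Fin n) : ℕ), by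
    refine castDown_lt fun hl => ?_
    exact Finset.mem_compl.mp (eC_mem s) ((hS _).mp hl)⟩

include hS

lemma split1_hp (i j : Fin S.card) : (0 : Fin 1) = 0 ↔
    p ((S.orderIsoOfFin rfl i : {x // x ∈ S}) : Fin n) = p ((S.orderIsoOfFin rfl j : {x // x ∈ S}) : Fin n) := by
  simp only [true_iff, eq_self_iff_true]
  rw [(hS _).mpr (eS_mem i), (hS _).mpr (eS_mem j)]

lemma split1_hsat (i : Fin S.card) (x : Fin n)
    (hx : p x = p ((S.orderIsoOfFin rfl i : {x // x ∈ S}) : Fin n)) :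
    ∃ j, ((S.orderIsoOfFin rfl j : {x // x ∈ S}) : Fin n) = x := by
  have hxS : x ∈ S := (hS x).mp (by rw [hx]; exact (hS _).mpr (eS_mem i))
  exact ⟨(S.orderIsoOfFin rfl).symm ⟨x, hxS⟩, by simp⟩

lemma split2_hp (i j : Fin Sᶜ.card) : q2of S p hS i = q2of S p hS j ↔
    p ((Sᶜ.orderIsoOfFin rfl i : {x // x ∈ Sᶜ}) : Fin n) =
      p ((Sᶜ.orderIsoOfFin rfl j : {x // x ∈ Sᶜ}) : Fin n) := by
  rw [Fin.ext_iff, Fin.ext_iff]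
  exact Iff.rfl

lemma split2_hsat (i : Fin Sᶜ.card) (x : Fin n)
    (hx : p x = p ((Sᶜ.orderIsoOfFin rfl i : {x // x ∈ Sᶜ}) : Fin n)) :
    ∃ j, ((Sᶜ.orderIsoOfFin rfl j : {x // x ∈ Sᶜ}) : Fin n) = x := by
  have hxS : x ∈ Sᶜ := by
    rw [Finset.mem_compl]
    intro hmem
    have : p x = Fin.last k := (hS x).mpr hmem
    rw [hx] at this
    exact Finset.mem_compl.mp (eC_mem i) ((hS _).mp this)
  exact ⟨(Sᶜ.orderIsoOfFin rfl).symm ⟨x, hxS⟩, by simp⟩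

variable (hd : IsData m p d)
include hd

lemma split1_isData :
    IsData m (fun _ : Fin S.card => (0 : Fin 1)) (fun s => d ((S.orderIsoOfFin rfl s : {x // x ∈ S}) : Fin n)) := by
  have hcard : 0 < S.card := by
    obtain ⟨x, hx⟩ := hd.1 (Fin.last k)
    exact Finset.card_pos.mpr ⟨x, (hS x).mp hx⟩
  refine ⟨fun t => ⟨⟨0, hcard⟩, Subsingleton.elim _ _⟩, ?_, ?_⟩
  · intro i j _
    obtain ⟨w⟩ := hd.2.1 _ _ ((split1_hp hS i j).mp rfl)
    exact transfer_fwd eS_inj (split1_hp hS) (fun _ => rfl) (split1_hsat hS) w i j rfl rfl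
  · intro i hi
    refine hd.2.2 _ ((transfer_min eS_mono eS_inj (split1_hp hS) (split1_hsat hS) i).mp ?_)
    intro j _
    exact hi j rfl

lemma split2_isData :
    IsData m (q2of S p hS) (fun s => d ((Sᶜ.orderIsoOfFin rfl s : {x // x ∈ Sᶜ}) : Fin n)) := by
  refine ⟨?_, ?_, ?_⟩
  · intro t
    obtain ⟨x, hx⟩ := hd.1 (Fin.castSucc t)
    have hxC : x ∈ Sᶜ := by
      rw [Finset.mem_compl]
      intro hmem
      exact absurd ((hS x).mpr hmem) (by rw [hx]; exact (Fin.castSucc_lt_last t).ne)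
    refine ⟨(Sᶜ.orderIsoOfFin rfl).symm ⟨x, hxC⟩, ?_⟩
    apply Fin.ext
    show ((p _ : Fin (k+1)) : ℕ) = (t : ℕ)
    rw [show (((Sᶜ.orderIsoOfFin rfl) ((Sᶜ.orderIsoOfFin rfl).symm ⟨x, hxC⟩) : {x // x ∈ Sᶜ}) : Fin n) = x by simp]
    rw [hx]
    simp
  · intro i j hij
    obtain ⟨w⟩ := hd.2.1 _ _ ((split2_hp hS i j).mp hij)
    exact transfer_fwd eC_inj (split2_hp hS) (fun _ => rfl) (split2_hsat hS) w i j rfl rfl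
  · intro i hi
    exact hd.2.2 _ ((transfer_min eC_mono eC_inj (split2_hp hS) (split2_hsat hS) i).mp hi)
end FwdS
end Split
section Glue
variable {m n k : ℕ} {S : Finset (Fin n)}

/-- Glue a `Fin k`-valued map on `Sᶜ` with the constant `last` on `S`. -/
def glueP (S : Finset (Fin n)) (q2 : Fin Sᶜ.card → Fin k) : Fin n → Fin (k + 1) := fun x =>
  if h : x ∈ S then Fin.last k
  else Fin.castSucc (q2 ((Sᶜ.orderIsoOfFin rfl).symm ⟨x, Finset.mem_compl.mpr h⟩))

def glueD (S : Finset (Fin n)) (δ1 : Fin S.card → ℤ) (δ2 : Fin Sᶜ.card → ℤ) :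
    Fin n → ℤ := fun x =>
  if h : x ∈ S then δ1 ((S.orderIsoOfFin rfl).symm ⟨x, h⟩)
  else δ2 ((Sᶜ.orderIsoOfFin rfl).symm ⟨x, Finset.mem_compl.mpr h⟩)

variable {q2 : Fin Sᶜ.card → Fin k} {δ1 : Fin S.card → ℤ} {δ2 : Fin Sᶜ.card → ℤ}

lemma glueP_eS (s : Fin S.card) :
    glueP S q2 ((S.orderIsoOfFin rfl s : {x // x ∈ S}) : Fin n) = Fin.last k :=
  dif_pos (eS_mem s)

lemma glueP_eC (s : Fin Sᶜ.card) :
    glueP S q2 ((Sᶜ.orderIsoOfFin rfl s : {x // x ∈ Sᶜ}) : Fin n) = Fin.castSucc (q2 s) := by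
  rw [glueP, dif_neg (Finset.mem_compl.mp (eC_mem s))]
  congr 1
  rw [Subtype.coe_eta]
  exact congrArg q2 (OrderIso.symm_apply_apply _ _)

lemma glueD_eS (s : Fin S.card) :
    glueD S δ1 δ2 ((S.orderIsoOfFin rfl s : {x // x ∈ S}) : Fin n) = δ1 s := by
  rw [glueD, dif_pos (eS_mem s)]
  rw [Subtype.coe_eta]
  exact congrArg δ1 (OrderIso.symm_apply_apply _ _)

lemma glueD_eC (s : Fin Sᶜ.card) :
    glueD S δ1 δ2 ((Sᶜ.orderIsoOfFin rfl s : {x // x ∈ Sᶜ}) : Fin n) = δ2 s := by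
  rw [glueD, dif_neg (Finset.mem_compl.mp (eC_mem s))]
  rw [Subtype.coe_eta]
  exact congrArg δ2 (OrderIso.symm_apply_apply _ _)

lemma glueP_last_iff (x : Fin n) : glueP S q2 x = Fin.last k ↔ x ∈ S := by
  constructor
  · intro h
    by_contra hx
    rw [glueP, dif_neg hx] at h
    exact (Fin.castSucc_lt_last _).ne h
  · intro h; exact dif_pos h

lemma glue_hp1 (a c : Fin S.card) {q1 : Fin S.card → Fin 1} :
    q1 a = q1 c ↔ glueP S q2 ((S.orderIsoOfFin rfl a : {x // x ∈ S}) : Fin n) =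
      glueP S q2 ((S.orderIsoOfFin rfl c : {x // x ∈ S}) : Fin n) := by
  rw [glueP_eS, glueP_eS]
  exact iff_of_true (Subsingleton.elim _ _) rfl

lemma glue_hp2 (a c : Fin Sᶜ.card) :
    q2 a = q2 c ↔ glueP S q2 ((Sᶜ.orderIsoOfFin rfl a : {x // x ∈ Sᶜ}) : Fin n) =
      glueP S q2 ((Sᶜ.orderIsoOfFin rfl c : {x // x ∈ Sᶜ}) : Fin n) := by
  rw [glueP_eC, glueP_eC, Fin.castSucc_inj]

lemma glue_hd1 (a : Fin S.card) :
    δ1 a = glueD S δ1 δ2 ((S.orderIsoOfFin rfl a : {x // x ∈ S}) : Fin n) := (glueD_eS a).symm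

lemma glue_hd2 (a : Fin Sᶜ.card) :
    δ2 a = glueD S δ1 δ2 ((Sᶜ.orderIsoOfFin rfl a : {x // x ∈ Sᶜ}) : Fin n) := (glueD_eC a).symm

lemma glue_hsat1 (i : Fin S.card) (x : Fin n)
    (hx : glueP S q2 x = glueP S q2 ((S.orderIsoOfFin rfl i : {x // x ∈ S}) : Fin n)) :
    ∃ j, ((S.orderIsoOfFin rfl j : {x // x ∈ S}) : Fin n) = x := by
  rw [glueP_eS] at hx
  have hxS : x ∈ S := (glueP_last_iff x).mp hx
  exact ⟨(S.orderIsoOfFin rfl).symm ⟨x, hxS⟩, by simp⟩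

lemma glue_hsat2 (i : Fin Sᶜ.card) (x : Fin n)
    (hx : glueP S q2 x = glueP S q2 ((Sᶜ.orderIsoOfFin rfl i : {x // x ∈ Sᶜ}) : Fin n)) :
    ∃ j, ((Sᶜ.orderIsoOfFin rfl j : {x // x ∈ Sᶜ}) : Fin n) = x := by
  rw [glueP_eC] at hx
  have hxC : x ∈ Sᶜ := by
    rw [Finset.mem_compl]
    intro hmem
    rw [glueP, dif_pos hmem] at hx
    exact (Fin.castSucc_lt_last _).ne hx.symm
  exact ⟨(Sᶜ.orderIsoOfFin rfl).symm ⟨x, hxC⟩, by simp⟩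

lemma eS_symm_coe {x : Fin n} (hx : x ∈ S) :
    ((S.orderIsoOfFin rfl ((S.orderIsoOfFin rfl).symm ⟨x, hx⟩) : {y // y ∈ S}) : Fin n) = x := by
  rw [OrderIso.apply_symm_apply]

lemma eC_symm_coe {x : Fin n} (hx : x ∈ Sᶜ) :
    ((Sᶜ.orderIsoOfFin rfl ((Sᶜ.orderIsoOfFin rfl).symm ⟨x, hx⟩) : {y // y ∈ Sᶜ}) : Fin n) = x := by
  rw [OrderIso.apply_symm_apply]

lemma glue_isData {q1 : Fin S.card → Fin 1} (h1 : IsData m q1 δ1) (h2 : IsData m q2 δ2) :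
    IsData m (glueP S q2) (glueD S δ1 δ2) := by
  refine ⟨?_, ?_, ?_⟩
  · -- surjective
    intro t
    rcases Fin.eq_castSucc_or_eq_last t with ⟨t', rfl⟩ | rfl
    · obtain ⟨s, hs⟩ := h2.1 t'
      exact ⟨_, by rw [glueP_eC, hs]⟩
    · obtain ⟨s, -⟩ := h1.1 0
      exact ⟨_, glueP_eS s⟩
  · -- reachable
    intro i j hij
    by_cases hi : i ∈ S
    · have hj : j ∈ S := by
        rw [← glueP_last_iff (q2 := q2) j, ← hij, glueP_last_iff]; exact hi
      set i' := (S.orderIsoOfFin rfl).symm ⟨i, hi⟩ with hi'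
      set j' := (S.orderIsoOfFin rfl).symm ⟨j, hj⟩ with hj'
      obtain ⟨w⟩ := h1.2.1 i' j' (Subsingleton.elim _ _)
      have hr := transfer_bwd (p := glueP S q2) (d := glueD S δ1 δ2) eS_inj
        (fun a c => glue_hp1 (q2 := q2) a c) (fun a => glue_hd1 a) w
      have e1 : ((S.orderIsoOfFin rfl i' : {y // y ∈ S}) : Fin n) = i := by
        rw [hi', eS_symm_coe]
      have e2 : ((S.orderIsoOfFin rfl j' : {y // y ∈ S}) : Fin n) = j := by
        rw [hj', eS_symm_coe]
      rw [e1, e2] at hr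
      exact hr
    · have hiC : i ∈ Sᶜ := Finset.mem_compl.mpr hi
      have hj : j ∈ Sᶜ := by
        rw [Finset.mem_compl]
        intro hjS
        have hlast : glueP S q2 j = Fin.last k := dif_pos hjS
        rw [hlast] at hij
        exact hi ((glueP_last_iff i).mp hij)
      set i' := (Sᶜ.orderIsoOfFin rfl).symm ⟨i, hiC⟩ with hi'
      set j' := (Sᶜ.orderIsoOfFin rfl).symm ⟨j, hj⟩ with hj'
      have e1 : ((Sᶜ.orderIsoOfFin rfl i' : {y // y ∈ Sᶜ}) : Fin n) = i := by
        rw [hi', eC_symm_coe]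
      have e2 : ((Sᶜ.orderIsoOfFin rfl j' : {y // y ∈ Sᶜ}) : Fin n) = j := by
        rw [hj', eC_symm_coe]
      have hq : q2 i' = q2 j' := by
        apply (glue_hp2 i' j').mpr
        rw [e1, e2]
        exact hij
      obtain ⟨w⟩ := h2.2.1 i' j' hq
      have hr := transfer_bwd (p := glueP S q2) (d := glueD S δ1 δ2) eC_inj
        (fun a c => glue_hp2 a c) (fun a => glue_hd2 (δ1 := δ1) a) w
      rw [e1, e2] at hr
      exact hr
  · -- normalized
    intro i hi
    by_cases hiS : i ∈ S
    · set i' := (S.orderIsoOfFin rfl).symm ⟨i, hiS⟩ with hi'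
      have hei : ((S.orderIsoOfFin rfl i' : {x // x ∈ S}) : Fin n) = i := by
        rw [hi', eS_symm_coe]
      have hbig : ∀ x, glueP S q2 x =
          glueP S q2 ((S.orderIsoOfFin rfl i' : {x // x ∈ S}) : Fin n) →
          ((S.orderIsoOfFin rfl i' : {x // x ∈ S}) : Fin n) ≤ x := by
        intro x hx
        rw [hei] at hx ⊢
        exact hi x hx
      have hmin := (transfer_min (p' := q1) eS_mono eS_inj
        (fun a c => glue_hp1 (q2 := q2) a c)
        (fun a x hx => glue_hsat1 a x hx) i').mpr hbig
      rw [glueD, dif_pos hiS]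
      exact h1.2.2 i' hmin
    · have hiC : i ∈ Sᶜ := Finset.mem_compl.mpr hiS
      set i' := (Sᶜ.orderIsoOfFin rfl).symm ⟨i, hiC⟩ with hi'
      have hei : ((Sᶜ.orderIsoOfFin rfl i' : {x // x ∈ Sᶜ}) : Fin n) = i := by
        rw [hi', eC_symm_coe]
      have hbig : ∀ x, glueP S q2 x =
          glueP S q2 ((Sᶜ.orderIsoOfFin rfl i' : {x // x ∈ Sᶜ}) : Fin n) →
          ((Sᶜ.orderIsoOfFin rfl i' : {x // x ∈ Sᶜ}) : Fin n) ≤ x := by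
        intro x hx
        rw [hei] at hx ⊢
        exact hi x hx
      have hmin := (transfer_min eC_mono eC_inj (fun a c => glue_hp2 a c)
        (fun a x hx => glue_hsat2 a x hx) i').mpr hbig
      rw [glueD, dif_neg hiS]
      exact h2.2.2 i' hmin
end Glue
section CardRec
variable {m n k : ℕ}

lemma datSplit_finite (S : Finset (Fin n)) : (DatSplit m n k S).Finite :=
  dat_finite.subset fun _ h => h.1

lemma card_datSplit (m n k : ℕ) (S : Finset (Fin n)) :
    Nat.card (DatSplit m n k S) =
      Nat.card (Dat m S.card 1) * Nat.card (Dat m Sᶜ.card k) := by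
  classical
  have hΦΞ : Nat.card (DatSplit m n k S) =
      Nat.card (↥(Dat m S.card 1) × ↥(Dat m Sᶜ.card k)) := by
    refine Nat.card_congr ⟨
      fun x =>
        (⟨((fun _ => 0), fun s => x.1.2 ((S.orderIsoOfFin rfl s : {y // y ∈ S}) : Fin n)),
          split1_isData x.2.2 x.2.1⟩,
         ⟨(q2of S x.1.1 x.2.2, fun s => x.1.2 ((Sᶜ.orderIsoOfFin rfl s : {y // y ∈ Sᶜ}) : Fin n)),
          split2_isData x.2.2 x.2.1⟩),
      fun y =>
        ⟨(glueP S y.2.1.1, glueD S y.1.1.2 y.2.1.2),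
         ⟨glue_isData y.1.2 y.2.2, fun x => glueP_last_iff x⟩⟩, ?_, ?_⟩
    · rintro ⟨⟨p, d⟩, hpd, hlast⟩
      apply Subtype.ext
      apply Prod.ext
      · funext x
        by_cases hx : x ∈ S
        · show glueP S _ x = p x
          rw [glueP, dif_pos hx]
          exact ((hlast x).mpr hx).symm
        · show glueP S _ x = p x
          rw [glueP, dif_neg hx]
          apply Fin.ext
          show ((q2of S p hlast _ : Fin k) : ℕ) = ((p x : Fin (k+1)) : ℕ)
          show ((p _ : Fin (k+1)) : ℕ) = _
          rw [eC_symm_coe (Finset.mem_compl.mpr hx)]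
      · funext x
        by_cases hx : x ∈ S
        · show glueD S _ _ x = d x
          rw [glueD, dif_pos hx]
          show d _ = d x
          rw [eS_symm_coe hx]
        · show glueD S _ _ x = d x
          rw [glueD, dif_neg hx]
          show d _ = d x
          rw [eC_symm_coe (Finset.mem_compl.mpr hx)]
    · rintro ⟨⟨⟨q1, δ1⟩, h1⟩, ⟨⟨q2, δ2⟩, h2⟩⟩
      apply Prod.ext
      · apply Subtype.ext
        apply Prod.ext
        · funext s
          exact Subsingleton.elim _ _
        · funext s
          exact glueD_eS s
      · apply Subtype.ext
        apply Prod.ext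
        · funext s
          apply Fin.ext
          show ((glueP S q2 _ : Fin (k+1)) : ℕ) = ((q2 s : Fin k) : ℕ)
          rw [glueP_eC]
          simp
        · funext s
          exact glueD_eC s
  rw [hΦΞ, Nat.card_prod]

lemma dat_empty_of_pos (m k : ℕ) (hk : 1 ≤ k) : Dat m 0 k = ∅ := by
  ext ⟨p, d⟩
  simp only [Dat, Set.mem_setOf_eq, Set.mem_empty_iff_false, iff_false]
  rintro ⟨hsurj, -, -⟩
  obtain ⟨a, -⟩ := hsurj ⟨0, hk⟩
  exact a.elim0

lemma card_dat_zero (m n : ℕ) : Nat.card (Dat m n 0) = if n = 0 then 1 else 0 := by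
  split_ifs with hn
  · subst hn
    have huniv : Dat m 0 0 = Set.univ := by
      ext ⟨p, d⟩
      simp only [Dat, Set.mem_setOf_eq, Set.mem_univ, iff_true]
      exact ⟨fun b => b.elim0, fun i => i.elim0, fun i => i.elim0⟩
    rw [huniv]
    rw [Nat.card_congr (Equiv.Set.univ _)]
    exact Nat.card_unique
  · have hempty : Dat m n 0 = ∅ := by
      ext ⟨p, d⟩
      simp only [Dat, Set.mem_setOf_eq, Set.mem_empty_iff_false, iff_false]
      rintro ⟨-, -, -⟩
      exact (p ⟨0, Nat.pos_of_ne_zero hn⟩).elim0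
    rw [hempty]
    simp

lemma card_dat_succ (m n k : ℕ) :
    Nat.card (Dat m n (k + 1)) =
      ∑ j ∈ Finset.range (n + 1),
        n.choose j * (Nat.card (Dat m j 1) * Nat.card (Dat m (n - j) k)) := by
  classical
  haveI : ∀ S : Finset (Fin n), Finite ↥(DatSplit m n k S) :=
    fun S => (datSplit_finite S).to_subtype
  letI : ∀ S : Finset (Fin n), Fintype ↥(DatSplit m n k S) :=
    fun S => Fintype.ofFinite _
  have E : ↥(Dat m n (k + 1)) ≃ Σ S : Finset (Fin n), ↥(DatSplit m n k S) :=
  { toFun := fun x => ⟨Finset.univ.filter (fun l => x.1.1 l = Fin.last k),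
      ⟨x.1, x.2, fun l => by simp⟩⟩
    invFun := fun y => ⟨y.2.1, y.2.2.1⟩
    left_inv := fun x => Subtype.ext rfl
    right_inv := by
      rintro ⟨S, pd, hpd, hlast⟩
      have hfS : Finset.univ.filter (fun l => pd.1 l = Fin.last k) = S := by
        ext l
        simp [hlast l]
      subst hfS
      rfl }
  rw [Nat.card_congr E, Nat.card_eq_fintype_card, Fintype.card_sigma]
  have hcard : ∀ S : Finset (Fin n), Fintype.card ↥(DatSplit m n k S) =
      Nat.card (Dat m S.card 1) * Nat.card (Dat m (n - S.card) k) := by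
    intro S
    rw [← Nat.card_eq_fintype_card, card_datSplit]
    congr 2
    rw [Finset.card_compl, Fintype.card_fin]
  rw [Finset.sum_congr rfl fun S _ => hcard S]
  rw [← Finset.sum_fiberwise_of_maps_to (g := Finset.card) (t := Finset.range (n + 1))
    (fun S _ => Finset.mem_range.mpr (Nat.lt_succ_of_le
      ((Finset.card_le_univ S).trans_eq (by simp))))
    (fun S => Nat.card (Dat m S.card 1) * Nat.card (Dat m (n - S.card) k))]
  refine Finset.sum_congr rfl fun j hj => ?_
  rw [Finset.sum_congr rfl (fun S hS => by
    rw [(Finset.mem_filter.mp hS).2]), Finset.sum_const, smul_eq_mul]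
  congr 1
  rw [← Finset.powerset_univ, ← Finset.powersetCard_eq_filter, Finset.card_powersetCard]
  simp
end CardRec
/-- If `F, F_k ∈ ℚ⟦X⟧` are the exponential generating functions of
`|L_1(C^m_n)|` and `|L_k(C^m_n)|` respectively, then `k! · F_k = F^k`. -/
theorem catalan_egf_pow (m k : ℕ) (hk : 1 ≤ k) (F Fk : PowerSeries ℚ)
    (hF : ∀ n : ℕ, PowerSeries.coeff n F =
      if n = 0 then 0 else ((Lk (CatalanArr m n) 1).ncard : ℚ) / n.factorial)
    (hFk : ∀ n : ℕ, PowerSeries.coeff n Fk =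
      if n = 0 then 0 else ((Lk (CatalanArr m n) k).ncard : ℚ) / n.factorial) :
    (k.factorial : PowerSeries ℚ) * Fk = F ^ k := by
  classical
  set G : ℕ → PowerSeries ℚ :=
    fun j => PowerSeries.mk (fun n => (Nat.card (Dat m n j) : ℚ) / n.factorial) with hG
  have hG0 : G 0 = 1 := by
    ext n
    rw [hG, PowerSeries.coeff_mk, PowerSeries.coeff_one, card_dat_zero]
    split_ifs with hn <;> simp [hn]
  have hG1 : G 1 = F := by
    ext n
    rw [hG, PowerSeries.coeff_mk, hF n]
    split_ifs with hn
    · subst hn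
      rw [dat_empty_of_pos m 1 le_rfl]
      simp
    · rw [card_dat m n 1, Nat.factorial_one, one_mul, Nat.card_coe_set_eq]
  have hGsucc : ∀ j, G (j + 1) = G 1 * G j := by
    intro j
    ext n
    rw [hG, PowerSeries.coeff_mk, PowerSeries.coeff_mul,
      Finset.Nat.sum_antidiagonal_eq_sum_range_succ_mk]
    simp only [PowerSeries.coeff_mk]
    rw [card_dat_succ m n j, Nat.cast_sum, Finset.sum_div]
    refine Finset.sum_congr rfl fun i hi => ?_
    have hin : i ≤ n := Nat.lt_succ_iff.mp (Finset.mem_range.mp hi)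
    rw [Nat.cast_mul, Nat.cast_mul, Nat.cast_choose ℚ hin]
    have h1 : (Nat.factorial i : ℚ) ≠ 0 := Nat.cast_ne_zero.mpr (Nat.factorial_ne_zero i)
    have h2 : (Nat.factorial (n - i) : ℚ) ≠ 0 := Nat.cast_ne_zero.mpr (Nat.factorial_ne_zero _)
    have h3 : (Nat.factorial n : ℚ) ≠ 0 := Nat.cast_ne_zero.mpr (Nat.factorial_ne_zero n)
    field_simp
  have hGpow : ∀ j, G j = F ^ j := by
    intro j
    induction j with
    | zero => rw [hG0, pow_zero]
    | succ i ih => rw [hGsucc i, hG1, ih, pow_succ, mul_comm]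
  have hmain : (k.factorial : PowerSeries ℚ) * Fk = G k := by
    have hC : ((k.factorial : ℕ) : PowerSeries ℚ) = PowerSeries.C (k.factorial : ℚ) :=
      (map_natCast (PowerSeries.C (R := ℚ)) k.factorial).symm
    ext n
    rw [hC, PowerSeries.coeff_C_mul, hFk n, hG, PowerSeries.coeff_mk]
    split_ifs with hn
    · subst hn
      rw [dat_empty_of_pos m k hk]
      simp
    · rw [card_dat m n k, Nat.card_coe_set_eq]
      push_cast
      ring
  rw [hmain, hGpow k]
end

section
/- Fix an integer m ≥ 0. In ℚ⟦X⟧, let F be the power series whose coefficient of X^n is |L_1(C^m_n)|/n! for n ≥ 1 and 0 for n = 0, and let G be the power series whose coefficient of X^n is |L(C^m_n)|/n! for n ≥ 1 and 1 for n = 0, where |L_1(C^m_n)| and |L(C^m_n)| are respectively the numbers of 1-dimensional flats and of all flats of the n-dimensional extended Catalan arrangement. Then G equals the substitution of F into the exponential power series exp(X) = ∑_{n≥0} X^n/n! (the substitution is well defined since F has zero constant term). -/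
open Set

/-- Substitution of the power series `g` (with zero constant term) into `f`:
the coefficient of `X^N` in `f ∘ g` is `∑_{i ≤ N} (coeff i f) · (coeff N (g^i))`
(for `g` with zero constant term, `coeff N (g^i) = 0` whenever `i > N`). -/
noncomputable def psSubst (g f : PowerSeries ℚ) : PowerSeries ℚ :=
  PowerSeries.mk fun N =>
    ∑ i ∈ Finset.range (N + 1), PowerSeries.coeff i f * PowerSeries.coeff N (g ^ i)

namespace CatalanAux

open scoped Classical

/-! ### Parameters for flats -/

/-- One-step relation: related in `s` and `u`-difference at most `m`. -/
def stepRel (m : ℕ) {n : ℕ} (s : Setoid (Fin n)) (u : Fin n → ℤ) (i j : Fin n) : Prop :=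
  s i j ∧ |u i - u j| ≤ (m : ℤ)

/-- The setoid `s` is generated by steps of size at most `m` for `u`. -/
def Good (m : ℕ) {n : ℕ} (s : Setoid (Fin n)) (u : Fin n → ℤ) : Prop :=
  ∀ i j, s i j → Relation.EqvGen (stepRel m s u) i j

/-- Normalization: `u` vanishes on the minimum of each class. -/
def Normal {n : ℕ} (s : Setoid (Fin n)) (u : Fin n → ℤ) : Prop :=
  ∀ i, (∀ j, s i j → i ≤ j) → u i = 0

/-- The flat associated to a parameter pair. -/
def flatSet {n : ℕ} (s : Setoid (Fin n)) (u : Fin n → ℤ) : Set (Fin n → ℝ) :=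
  {x | ∀ i j, s i j → x i - x j = (u i : ℝ) - (u j : ℝ)}

variable {m n : ℕ}

lemma mem_flatSet_iff {s : Setoid (Fin n)} {u : Fin n → ℤ} {x : Fin n → ℝ} :
    x ∈ flatSet s u ↔ ∀ i j, s i j → x i - x j = (u i : ℝ) - (u j : ℝ) := Iff.rfl

lemma cast_mem_flatSet (s : Setoid (Fin n)) (u : Fin n → ℤ) :
    (fun i => (u i : ℝ)) ∈ flatSet s u := fun _ _ _ => rfl

lemma stepRel_symm {s : Setoid (Fin n)} {u : Fin n → ℤ} {i j : Fin n}
    (h : stepRel m s u i j) : stepRel m s u j i :=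
  ⟨s.symm h.1, by rw [abs_sub_comm]; exact h.2⟩

/-- Each class of a setoid on `Fin n` has a minimum. -/
lemma exists_min_class (s : Setoid (Fin n)) (i : Fin n) :
    ∃ j, s i j ∧ ∀ k, s j k → j ≤ k := by
  have hfin : ({j | s i j} : Set (Fin n)).Finite := Set.toFinite _
  have hne : hfin.toFinset.Nonempty := ⟨i, by simp [Set.Finite.mem_toFinset]⟩
  refine ⟨hfin.toFinset.min' hne, ?_, ?_⟩
  · have := hfin.toFinset.min'_mem hne
    rwa [Set.Finite.mem_toFinset] at this
  · intro k hk
    have hmem : s i (hfin.toFinset.min' hne) := by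
      have := hfin.toFinset.min'_mem hne
      rwa [Set.Finite.mem_toFinset] at this
    exact hfin.toFinset.min'_le k (by rw [Set.Finite.mem_toFinset]; exact s.trans hmem hk)

/-- Forward inclusion: every good parameter gives a flat. -/
lemma flatSet_mem_flats {s : Setoid (Fin n)} {u : Fin n → ℤ} (hg : Good m s u) :
    flatSet s u ∈ flats (CatalanArr m n) := by
  classical
  refine ⟨⟨fun i => (u i : ℝ), cast_mem_flatSet s u⟩, ?_⟩
  refine ⟨{H | ∃ i j : Fin n, i < j ∧ s i j ∧ |u i - u j| ≤ (m : ℤ) ∧ H = hyp n i j (u i - u j)},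
    ?_, ?_⟩
  · rintro H ⟨i, j, hij, hs, hb, rfl⟩
    rw [abs_le] at hb
    exact ⟨i, j, u i - u j, hij, hb.1, hb.2, rfl⟩
  · apply Set.eq_of_subset_of_subset
    · intro x hx
      intro H hH
      obtain ⟨i, j, hij, hs, hb, rfl⟩ := hH
      have := hx i j hs
      simp only [hyp, Set.mem_setOf_eq, this]
      push_cast
      ring
    · intro x hx
      intro i j hs
      have key : ∀ i j, Relation.EqvGen (stepRel m s u) i j →
          x i - x j = (u i : ℝ) - (u j : ℝ) := by
        intro i j h
        induction h with
        | rel a b hab =>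
          rcases lt_trichotomy a b with h1 | h1 | h1
          · have hH : hyp n a b (u a - u b) ∈
                {H | ∃ i j : Fin n, i < j ∧ s i j ∧ |u i - u j| ≤ (m : ℤ) ∧
                  H = hyp n i j (u i - u j)} := ⟨a, b, h1, hab.1, hab.2, rfl⟩
            have := hx _ hH
            simp only [hyp, Set.mem_setOf_eq] at this
            rw [this]; push_cast; ring
          · subst h1; ring
          · have hab' := stepRel_symm hab
            have hH : hyp n b a (u b - u a) ∈
                {H | ∃ i j : Fin n, i < j ∧ s i j ∧ |u i - u j| ≤ (m : ℤ) ∧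
                  H = hyp n i j (u i - u j)} := ⟨b, a, h1, hab'.1, hab'.2, rfl⟩
            have := hx _ hH
            simp only [hyp, Set.mem_setOf_eq] at this
            have h2 : x b - x a = (u b : ℝ) - (u a : ℝ) := by rw [this]; push_cast; ring
            linarith
        | refl a => ring
        | symm a b _ ih => linarith
        | trans a b c _ _ ih1 ih2 => linarith
      exact key i j (hg i j hs)


/-- Backward: every flat is `flatSet s u` for a good normal parameter. -/
lemma exists_param_of_mem_flats {F : Set (Fin n → ℝ)} (hF : F ∈ flats (CatalanArr m n)) :
    ∃ s : Setoid (Fin n), ∃ u : Fin n → ℤ, Good m s u ∧ Normal s u ∧ F = flatSet s u := by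
  classical
  obtain ⟨⟨x₀, hx₀⟩, B, hBsub, rfl⟩ := hF
  -- the edge relation
  set R : Fin n → Fin n → Prop := fun i j => ∃ a : ℤ, |a| ≤ (m : ℤ) ∧ hyp n i j a ∈ B with hR
  set s : Setoid (Fin n) := ⟨Relation.EqvGen R, Relation.EqvGen.is_equivalence R⟩ with hsdef
  have hsr : ∀ i j, s i j ↔ Relation.EqvGen R i j := fun i j => Iff.rfl
  -- every point of the flat has the same differences as x₀, on related coordinates
  have hconst : ∀ i j, s i j → ∀ x ∈ ⋂₀ B, x i - x j = x₀ i - x₀ j := by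
    intro i j hij
    induction hij with
    | rel a b hab =>
      obtain ⟨c, _, hcB⟩ := hab
      intro x hx
      have h1 := hx _ hcB
      have h2 := hx₀ _ hcB
      simp only [hyp, Set.mem_setOf_eq] at h1 h2
      rw [h1, h2]
    | refl a => intro x _; ring
    | symm a b _ ih => intro x hx; have := ih x hx; linarith
    | trans a b c _ _ ih1 ih2 => intro x hx; have := ih1 x hx; have := ih2 x hx; linarith
  -- differences of x₀ on related coordinates are integers
  have hint : ∀ i j, s i j → ∃ d : ℤ, x₀ i - x₀ j = (d : ℝ) := by
    intro i j hij
    induction hij with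
    | rel a b hab =>
      obtain ⟨c, _, hcB⟩ := hab
      have := hx₀ _ hcB
      exact ⟨c, this⟩
    | refl a => exact ⟨0, by push_cast; ring⟩
    | symm a b _ ih => obtain ⟨d, hd⟩ := ih; exact ⟨-d, by push_cast; linarith⟩
    | trans a b c _ _ ih1 ih2 =>
      obtain ⟨d1, hd1⟩ := ih1; obtain ⟨d2, hd2⟩ := ih2
      exact ⟨d1 + d2, by push_cast; linarith⟩
  -- the minimum of the class of i
  choose mu hmu1 hmu2 using exists_min_class s
  choose v hv using fun i => hint i (mu i) (hmu1 i)
  have hmueq : ∀ i j, s i j → mu i = mu j := by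
    intro i j hij
    have h1 : s (mu i) (mu j) := s.trans (s.symm (hmu1 i)) (s.trans hij (hmu1 j))
    exact le_antisymm (hmu2 i (mu j) h1) (hmu2 j (mu i) (s.symm h1))
  have hkey : ∀ i j, s i j → (v i : ℝ) - (v j : ℝ) = x₀ i - x₀ j := by
    intro i j hij
    rw [← hv i, ← hv j, hmueq i j hij]
    ring
  refine ⟨s, v, ?_, ?_, ?_⟩
  · -- Good
    intro i j hij
    refine Relation.EqvGen.mono ?_ _ _ hij
    intro a b hab
    obtain ⟨c, hcb, hcB⟩ := hab
    have hsab : s a b := Relation.EqvGen.rel a b ⟨c, hcb, hcB⟩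
    have h1 : (v a : ℝ) - (v b : ℝ) = x₀ a - x₀ b := hkey a b hsab
    have h2 : x₀ a - x₀ b = (c : ℝ) := hx₀ _ hcB
    have h3 : v a - v b = c := by
      have : ((v a - v b : ℤ) : ℝ) = (c : ℝ) := by push_cast; linarith
      exact_mod_cast this
    exact ⟨hsab, by rw [h3]; exact hcb⟩
  · -- Normal
    intro i hi
    have h1 : mu i = i := le_antisymm (hmu2 i i (s.symm (hmu1 i))) (hi (mu i) (hmu1 i))
    have : (v i : ℝ) = 0 := by rw [← hv i, h1]; ring
    exact_mod_cast this
  · -- the flat is flatSet s v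
    apply Set.eq_of_subset_of_subset
    · intro x hx i j hij
      rw [hkey i j hij, hconst i j hij x hx]
    · intro x hx H hH
      obtain ⟨i, j, a, hij, ha1, ha2, rfl⟩ := hBsub hH
      have habs : |a| ≤ (m : ℤ) := abs_le.mpr ⟨ha1, ha2⟩
      have hsij : s i j := Relation.EqvGen.rel i j ⟨a, habs, hH⟩
      have h1 : x i - x j = (v i : ℝ) - v j := hx i j hsij
      have h2 : (v i : ℝ) - v j = x₀ i - x₀ j := hkey i j hsij
      have h3 : x₀ i - x₀ j = (a : ℝ) := hx₀ _ hH
      simp only [hyp, Set.mem_setOf_eq]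
      rw [h1, h2, h3]


/-- A perturbation of the integer point inside the flat. -/
lemma perturb_mem_flatSet (s : Setoid (Fin n)) (u : Fin n → ℤ) (i : Fin n) :
    (fun t => (u t : ℝ) + (if s i t then 1 else 0)) ∈ flatSet s u := by
  classical
  intro a b hab
  have : s i a ↔ s i b := ⟨fun h => s.trans h hab, fun h => s.trans h (s.symm hab)⟩
  by_cases h : s i a
  · simp only [if_pos h, if_pos (this.mp h)]; ring
  · simp only [if_neg h, if_neg (fun hb => h (this.mpr hb))]; ring

/-- The setoid is recoverable from the flat. -/
lemma setoid_eq_of_flatSet_eq {s s' : Setoid (Fin n)} {u u' : Fin n → ℤ}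
    (h : flatSet s u = flatSet s' u') : s = s' := by
  classical
  have key : ∀ (s : Setoid (Fin n)) (u : Fin n → ℤ) (i j : Fin n),
      s i j ↔ ∀ x ∈ flatSet s u, ∀ y ∈ flatSet s u, x i - x j = y i - y j := by
    intro s u i j
    constructor
    · intro hij x hx y hy
      rw [hx i j hij, hy i j hij]
    · intro hxy
      by_contra hij
      have h1 := hxy _ (cast_mem_flatSet s u) _ (perturb_mem_flatSet s u i)
      have h2 : (if s i i then (1:ℝ) else 0) = 1 := if_pos (s.refl i)
      have h3 : (if s i j then (1:ℝ) else 0) = 0 := if_neg hij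
      simp only [h2, h3] at h1
      linarith
  refine Setoid.ext fun a b => ?_
  rw [key s u a b, key s' u' a b, h]

/-- The parameter `u` is recoverable (given normality). -/
lemma param_eq_of_flatSet_eq {s s' : Setoid (Fin n)} {u u' : Fin n → ℤ}
    (hn : Normal s u) (hn' : Normal s' u')
    (h : flatSet s u = flatSet s' u') : s = s' ∧ u = u' := by
  obtain rfl := setoid_eq_of_flatSet_eq h
  refine ⟨rfl, funext fun i => ?_⟩
  have hx : (fun t => (u' t : ℝ)) ∈ flatSet s u := h ▸ cast_mem_flatSet s u'
  obtain ⟨j, hj1, hj2⟩ := exists_min_class s i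
  have h1 : (u' i : ℝ) - u' j = (u i : ℝ) - u j := hx i j hj1
  have h2 : u j = 0 := hn j (fun k hk => hj2 k hk)
  have h3 : u' j = 0 := hn' j (fun k hk => hj2 k hk)
  rw [h2, h3] at h1
  have h4 : (u i : ℝ) = u' i := by push_cast at h1; linarith
  exact_mod_cast h4

/-! ### Dimension -/

/-- The linear subspace of vectors constant on each class. -/
def classSub (s : Setoid (Fin n)) : Submodule ℝ (Fin n → ℝ) where
  carrier := {y | ∀ i j, s i j → y i = y j}
  add_mem' := fun ha hb i j hij => by simp [ha i j hij, hb i j hij]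
  zero_mem' := fun i j _ => rfl
  smul_mem' := fun c y hy i j hij => by simp [hy i j hij]

lemma flatSet_eq_mk' (s : Setoid (Fin n)) (u : Fin n → ℤ) :
    flatSet s u = (AffineSubspace.mk' (fun i => (u i : ℝ)) (classSub s) : Set (Fin n → ℝ)) := by
  ext x
  rw [SetLike.mem_coe, AffineSubspace.mem_mk']
  constructor
  · intro hx i j hij
    have := hx i j hij
    show x i - (u i : ℝ) = x j - (u j : ℝ)
    linarith
  · intro hx i j hij
    have : x i - (u i : ℝ) = x j - (u j : ℝ) := hx i j hij
    linarith

/-- Linear equivalence between functions on the quotient and the class subspace. -/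
noncomputable def classSubEquiv (s : Setoid (Fin n)) :
    (Quotient s → ℝ) ≃ₗ[ℝ] classSub s where
  toFun g := ⟨fun i => g (Quotient.mk s i), fun i j hij => by
    simp [Quotient.sound hij]⟩
  invFun y := Quotient.lift y.1 (fun i j hij => y.2 i j hij)
  left_inv g := by
    funext q
    induction q using Quotient.ind
    rfl
  right_inv y := rfl
  map_add' g h := rfl
  map_smul' c g := rfl

lemma flatDim_flatSet (s : Setoid (Fin n)) (u : Fin n → ℤ) :
    flatDim (flatSet s u) = Nat.card (Quotient s) := by
  classical
  rw [flatDim, flatSet_eq_mk', AffineSubspace.affineSpan_coe, AffineSubspace.direction_mk']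
  letI : DecidableRel fun (a b : Fin n) => a ≈ b := fun a b => Classical.dec _
  rw [← (classSubEquiv s).finrank_eq, Module.finrank_pi, Nat.card_eq_fintype_card]


/-! ### Finiteness and counting -/

/-- Parameter set for flats of `C^m_n`. -/
def ParamSet (m n : ℕ) : Set (Setoid (Fin n) × (Fin n → ℤ)) :=
  {p | Good m p.1 p.2 ∧ Normal p.1 p.2}

/-- Parameters of one-class (1-dimensional) flats. -/
abbrev TopParam (m k : ℕ) : Type :=
  {u : Fin k → ℤ // Good m (⊤ : Setoid (Fin k)) u ∧ Normal (⊤ : Setoid (Fin k)) u}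

/-- The step graph. -/
def stepGraph (m : ℕ) {n : ℕ} (s : Setoid (Fin n)) (u : Fin n → ℤ) : SimpleGraph (Fin n) where
  Adj a b := a ≠ b ∧ stepRel m s u a b
  symm := ⟨fun a b h => ⟨h.1.symm, stepRel_symm h.2⟩⟩
  loopless := ⟨fun a h => h.1 rfl⟩

lemma abs_sub_le_of_walk {s : Setoid (Fin n)} {u : Fin n → ℤ} {i j : Fin n}
    (w : (stepGraph m s u).Walk i j) : |u i - u j| ≤ (m : ℤ) * w.length := by
  induction w with
  | nil => simp
  | cons h p ih =>
    rename_i a b c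
    have h1 : |u a - u b| ≤ (m : ℤ) := (show a ≠ b ∧ stepRel m s u a b from h).2.2
    calc |u a - u c| ≤ |u a - u b| + |u b - u c| := by
          have := abs_sub_abs_le_abs_sub (u a - u b) (u c - u b)
          have := abs_add_le (u a - u b) (u b - u c)
          have heq : u a - u c = (u a - u b) + (u b - u c) := by ring
          rw [heq]; exact abs_add_le _ _
      _ ≤ (m : ℤ) + (m : ℤ) * p.length := add_le_add h1 ih
      _ = (m : ℤ) * (SimpleGraph.Walk.cons h p).length := by
          rw [SimpleGraph.Walk.length_cons]; push_cast; ring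

lemma abs_sub_le_of_eqvGen {s : Setoid (Fin n)} {u : Fin n → ℤ} {i j : Fin n}
    (h : Relation.EqvGen (stepRel m s u) i j) : |u i - u j| ≤ (m : ℤ) * n := by
  classical
  have hreach : (stepGraph m s u).Reachable i j := by
    induction h with
    | rel a b hab =>
      by_cases hne : a = b
      · subst hne; exact SimpleGraph.Reachable.refl a
      · exact SimpleGraph.Adj.reachable (show a ≠ b ∧ stepRel m s u a b from ⟨hne, hab⟩)
    | refl a => exact SimpleGraph.Reachable.refl a
    | symm a b _ ih => exact ih.symm
    | trans a b c _ _ ih1 ih2 => exact ih1.trans ih2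
  obtain ⟨w⟩ := hreach
  have hlen : (w.toPath : (stepGraph m s u).Walk i j).length < n := by
    have := SimpleGraph.Walk.IsPath.length_lt w.toPath.2
    rwa [Fintype.card_fin] at this
  calc |u i - u j| ≤ (m : ℤ) * (w.toPath : (stepGraph m s u).Walk i j).length :=
        abs_sub_le_of_walk _
    _ ≤ (m : ℤ) * n := by
        apply mul_le_mul_of_nonneg_left _ (by positivity)
        exact_mod_cast hlen.le

lemma paramSet_bound {p : Setoid (Fin n) × (Fin n → ℤ)} (hp : p ∈ ParamSet m n) (i : Fin n) :
    |p.2 i| ≤ (m : ℤ) * n := by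
  obtain ⟨hg, hn⟩ := hp
  obtain ⟨j, hj1, hj2⟩ := exists_min_class p.1 i
  have h0 : p.2 j = 0 := hn j hj2
  have := abs_sub_le_of_eqvGen (hg i j hj1)
  rwa [h0, sub_zero] at this

instance : Finite (Setoid (Fin n)) :=
  Finite.of_injective (fun s : Setoid (Fin n) => (fun a b => s a b : Fin n → Fin n → Prop))
    (fun s t h => Setoid.ext fun a b => Iff.of_eq (congrFun (congrFun h a) b))

lemma paramSet_finite : (ParamSet m n).Finite := by
  apply Set.Finite.subset (Set.Finite.prod Set.finite_univ
    (Set.Finite.pi (fun i : Fin n => Set.finite_Icc (-((m : ℤ) * n)) ((m : ℤ) * n))))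
  intro p hp
  refine ⟨Set.mem_univ _, fun i _ => ?_⟩
  rw [Set.mem_Icc, ← abs_le]
  exact paramSet_bound hp i

instance : Finite (ParamSet m n) := paramSet_finite.to_subtype

lemma topParam_finite : Finite (TopParam m n) := by
  apply Finite.of_injective
    (fun u : TopParam m n => (⟨(⊤, u.1), ⟨u.2.1, u.2.2⟩⟩ : ParamSet m n))
  intro u v h
  exact Subtype.ext (congrArg Prod.snd (Subtype.ext_iff.mp h))

instance : Finite (TopParam m n) := topParam_finite

lemma flats_eq_image :
    flats (CatalanArr m n) = (fun p : Setoid (Fin n) × (Fin n → ℤ) => flatSet p.1 p.2) ''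
      ParamSet m n := by
  ext F
  constructor
  · intro hF
    obtain ⟨s, u, hg, hn, rfl⟩ := exists_param_of_mem_flats hF
    exact ⟨(s, u), ⟨hg, hn⟩, rfl⟩
  · rintro ⟨⟨s, u⟩, ⟨hg, _⟩, rfl⟩
    exact flatSet_mem_flats hg

lemma injOn_flatSet : Set.InjOn (fun p : Setoid (Fin n) × (Fin n → ℤ) => flatSet p.1 p.2)
    (ParamSet m n) := by
  rintro ⟨s, u⟩ hp ⟨s', u'⟩ hq h
  obtain ⟨h1, h2⟩ := param_eq_of_flatSet_eq hp.2 hq.2 h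
  exact Prod.ext h1 h2

lemma ncard_flats_eq : (flats (CatalanArr m n)).ncard = Nat.card (ParamSet m n) := by
  rw [flats_eq_image, Set.ncard_image_of_injOn injOn_flatSet, Nat.card_coe_set_eq]

lemma card_quotient_top_eq_one (hn : 1 ≤ n) :
    Nat.card (Quotient (⊤ : Setoid (Fin n))) = 1 := by
  rw [Nat.card_eq_one_iff_unique]
  constructor
  · constructor
    intro a b
    induction a using Quotient.ind
    induction b using Quotient.ind
    exact Quotient.sound trivial
  · exact ⟨Quotient.mk _ ⟨0, hn⟩⟩

lemma top_of_card_quotient_eq_one {s : Setoid (Fin n)}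
    (h : Nat.card (Quotient s) = 1) : s = ⊤ := by
  rw [Nat.card_eq_one_iff_unique] at h
  refine Setoid.ext fun a b => ?_
  constructor
  · intro _; trivial
  · intro _
    have : (Quotient.mk s a) = Quotient.mk s b := h.1.allEq _ _
    exact Quotient.exact this

lemma Lk_one_eq_image (hn : 1 ≤ n) :
    Lk (CatalanArr m n) 1 = (fun p : Setoid (Fin n) × (Fin n → ℤ) => flatSet p.1 p.2) ''
      (ParamSet m n ∩ {p | p.1 = ⊤}) := by
  ext F
  constructor
  · rintro ⟨hF, hdim⟩
    obtain ⟨s, u, hg, hnor, rfl⟩ := exists_param_of_mem_flats hF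
    rw [flatDim_flatSet] at hdim
    exact ⟨(s, u), ⟨⟨hg, hnor⟩, top_of_card_quotient_eq_one hdim⟩, rfl⟩
  · rintro ⟨⟨s, u⟩, ⟨⟨hg, hnor⟩, ht⟩, rfl⟩
    refine ⟨flatSet_mem_flats hg, ?_⟩
    rw [flatDim_flatSet, show s = ⊤ from ht]
    exact card_quotient_top_eq_one hn

/-- The equivalence between top-setoid parameters and `TopParam`. -/
def topParamEquiv (m n : ℕ) :
    ↥(ParamSet m n ∩ {p | p.1 = ⊤}) ≃ TopParam m n where
  toFun p := ⟨p.1.2, by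
    obtain ⟨⟨hg, hnor⟩, ht⟩ := p.2
    have ht' : p.1.1 = ⊤ := ht
    rw [ht'] at hg hnor
    exact ⟨hg, hnor⟩⟩
  invFun u := ⟨(⊤, u.1), ⟨⟨u.2.1, u.2.2⟩, rfl⟩⟩
  left_inv p := by
    apply Subtype.ext
    have ht : p.1.1 = ⊤ := p.2.2
    exact Prod.ext ht.symm rfl
  right_inv u := rfl

lemma ncard_Lk_one_eq (hn : 1 ≤ n) :
    (Lk (CatalanArr m n) 1).ncard = Nat.card (TopParam m n) := by
  rw [Lk_one_eq_image hn,
    Set.ncard_image_of_injOn (injOn_flatSet.mono Set.inter_subset_left),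
    ← Nat.card_coe_set_eq]
  exact Nat.card_congr (topParamEquiv m n)


/-! ### EqvGen transport lemmas -/

lemma eqvGen_map {α β : Type*} {R' : α → α → Prop} {R : β → β → Prop} (φ : α → β)
    (hφ : ∀ a b, R' a b → R (φ a) (φ b)) {a b : α} (h : Relation.EqvGen R' a b) :
    Relation.EqvGen R (φ a) (φ b) := by
  induction h with
  | rel x y hxy => exact Relation.EqvGen.rel _ _ (hφ x y hxy)
  | refl x => exact Relation.EqvGen.refl _
  | symm x y _ ih => exact ih.symm
  | trans x y z _ _ ih1 ih2 => exact ih1.trans _ _ _ ih2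

lemma eqvGen_mem_iff {β : Type*} {R : β → β → Prop} {S : Set β}
    (hS : ∀ x y, R x y → (x ∈ S ↔ y ∈ S)) {x y : β} (h : Relation.EqvGen R x y) :
    x ∈ S ↔ y ∈ S := by
  induction h with
  | rel a b hab => exact hS a b hab
  | refl a => exact Iff.rfl
  | symm a b _ ih => exact ih.symm
  | trans a b c _ _ ih1 ih2 => exact ih1.trans ih2

lemma eqvGen_and_mem {β : Type*} {R : β → β → Prop} {S : Set β}
    (hS : ∀ x y, R x y → (x ∈ S ↔ y ∈ S)) {x y : β} (h : Relation.EqvGen R x y)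
    (hx : x ∈ S) :
    Relation.EqvGen (fun a b => R a b ∧ a ∈ S ∧ b ∈ S) x y := by
  induction h with
  | rel a b hab => exact Relation.EqvGen.rel _ _ ⟨hab, hx, (hS a b hab).mp hx⟩
  | refl a => exact Relation.EqvGen.refl _
  | symm a b hab ih =>
    exact (ih ((eqvGen_mem_iff hS hab).mpr hx)).symm
  | trans a b c hab hbc ih1 ih2 =>
    exact (ih1 hx).trans _ _ _ (ih2 ((eqvGen_mem_iff hS hab).mp hx))

lemma eqvGen_pullback {α β : Type*} (φ : α → β) (hinj : Function.Injective φ)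
    {R : β → β → Prop} (hR : ∀ x y, R x y → x ∈ Set.range φ ∧ y ∈ Set.range φ)
    {a b : α} (h : Relation.EqvGen R (φ a) (φ b)) :
    Relation.EqvGen (fun a b => R (φ a) (φ b)) a b := by
  suffices H : ∀ x y, Relation.EqvGen R x y → (x ∈ Set.range φ ↔ y ∈ Set.range φ) ∧
      ∀ a b, φ a = x → φ b = y → Relation.EqvGen (fun a b => R (φ a) (φ b)) a b by
    exact (H _ _ h).2 a b rfl rfl
  intro x y h
  induction h with
  | rel x y hxy =>
    refine ⟨iff_of_true (hR x y hxy).1 (hR x y hxy).2, fun a b ha hb => ?_⟩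
    exact Relation.EqvGen.rel _ _ (by rw [ha, hb]; exact hxy)
  | refl x =>
    exact ⟨Iff.rfl, fun a b ha hb => by
      obtain rfl : a = b := hinj (ha.trans hb.symm)
      exact Relation.EqvGen.refl _⟩
  | symm x y _ ih =>
    exact ⟨ih.1.symm, fun a b ha hb => (ih.2 b a hb ha).symm⟩
  | trans x y z _ _ ih1 ih2 =>
    refine ⟨ih1.1.trans ih2.1, fun a c ha hc => ?_⟩
    obtain ⟨b, hb⟩ := ih1.1.mp ⟨a, ha⟩
    exact (ih1.2 a b ha hb).trans _ _ _ (ih2.2 b c hb hc)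

/-! ### Gluing construction -/

section Decomp

variable {m N : ℕ}

/-- The indexing type for the block decomposition. -/
abbrev blockTy (m N : ℕ) : Type :=
  Σ S : {S : Finset (Fin (N + 1)) // 0 ∈ S},
    TopParam m S.1.card × ↥(ParamSet m (N + 1 - S.1.card))

/-- Order isomorphism between `Fin S.card` and `S`. -/
noncomputable def eIso (S : Finset (Fin (N + 1))) : Fin S.card ≃o ↥S :=
  S.orderIsoOfFin rfl

lemma compl_card (S : Finset (Fin (N + 1))) : (Sᶜ).card = N + 1 - S.card := by
  rw [Finset.card_compl, Fintype.card_fin]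

/-- Order isomorphism between `Fin (N+1-S.card)` and `Sᶜ`. -/
noncomputable def fIso (S : Finset (Fin (N + 1))) : Fin (N + 1 - S.card) ≃o ↥(Sᶜ) :=
  (Sᶜ).orderIsoOfFin (compl_card S)

/-- The glued setoid: `S` is one class, and the rest is given by `s₂` via `fIso`. -/
def glueSetoid (S : Finset (Fin (N + 1))) (s₂ : Setoid (Fin (N + 1 - S.card))) :
    Setoid (Fin (N + 1)) where
  r a b := (a ∈ S ∧ b ∈ S) ∨
    ∃ (ha : a ∈ Sᶜ) (hb : b ∈ Sᶜ), s₂ ((fIso S).symm ⟨a, ha⟩) ((fIso S).symm ⟨b, hb⟩)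
  iseqv := by
    constructor
    · intro a
      by_cases ha : a ∈ S
      · exact Or.inl ⟨ha, ha⟩
      · exact Or.inr ⟨Finset.mem_compl.mpr ha, Finset.mem_compl.mpr ha, s₂.refl _⟩
    · rintro a b (⟨h1, h2⟩ | ⟨h1, h2, h3⟩)
      · exact Or.inl ⟨h2, h1⟩
      · exact Or.inr ⟨h2, h1, s₂.symm h3⟩
    · rintro a b c (⟨h1, h2⟩ | ⟨h1, h2, h3⟩) (⟨h4, h5⟩ | ⟨h4, h5, h6⟩)
      · exact Or.inl ⟨h1, h5⟩
      · exact absurd h2 (Finset.mem_compl.mp h4)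
      · exact absurd h4 (Finset.mem_compl.mp h2)
      · exact Or.inr ⟨h1, h5, s₂.trans h3 h6⟩

/-- The glued integer labels. -/
noncomputable def glueU (S : Finset (Fin (N + 1))) (u₁ : Fin S.card → ℤ)
    (u₂ : Fin (N + 1 - S.card) → ℤ) : Fin (N + 1) → ℤ := fun a =>
  if ha : a ∈ S then u₁ ((eIso S).symm ⟨a, ha⟩)
  else u₂ ((fIso S).symm ⟨a, Finset.mem_compl.mpr ha⟩)

variable {S : Finset (Fin (N + 1))} {s₂ : Setoid (Fin (N + 1 - S.card))}
  {u₁ : Fin S.card → ℤ} {u₂ : Fin (N + 1 - S.card) → ℤ}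

lemma glueU_e (a : Fin S.card) : glueU S u₁ u₂ ↑(eIso S a) = u₁ a := by
  have h : ↑(eIso S a) ∈ S := (eIso S a).2
  rw [glueU, dif_pos h]
  congr 1
  rw [show (⟨↑(eIso S a), h⟩ : ↥S) = eIso S a from Subtype.ext rfl,
    OrderIso.symm_apply_apply]

lemma glueU_f (a : Fin (N + 1 - S.card)) : glueU S u₁ u₂ ↑(fIso S a) = u₂ a := by
  have h : ↑(fIso S a) ∈ Sᶜ := (fIso S a).2
  rw [glueU, dif_neg (Finset.mem_compl.mp h)]
  congr 1
  rw [show (⟨↑(fIso S a), Finset.mem_compl.mpr (Finset.mem_compl.mp h)⟩ : ↥(Sᶜ)) = fIso S a from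
    Subtype.ext rfl, OrderIso.symm_apply_apply]

lemma glueSetoid_e (a b : Fin S.card) : glueSetoid S s₂ ↑(eIso S a) ↑(eIso S b) :=
  Or.inl ⟨(eIso S a).2, (eIso S b).2⟩

lemma glueSetoid_f (a b : Fin (N + 1 - S.card)) :
    glueSetoid S s₂ ↑(fIso S a) ↑(fIso S b) ↔ s₂ a b := by
  constructor
  · rintro (⟨h1, _⟩ | ⟨h1, h2, h3⟩)
    · exact absurd h1 (Finset.mem_compl.mp (fIso S a).2)
    · rwa [show (⟨↑(fIso S a), h1⟩ : ↥(Sᶜ)) = fIso S a from Subtype.ext rfl,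
        show (⟨↑(fIso S b), h2⟩ : ↥(Sᶜ)) = fIso S b from Subtype.ext rfl,
        OrderIso.symm_apply_apply, OrderIso.symm_apply_apply] at h3
  · intro h
    refine Or.inr ⟨(fIso S a).2, (fIso S b).2, ?_⟩
    rwa [show (⟨↑(fIso S a), (fIso S a).2⟩ : ↥(Sᶜ)) = fIso S a from Subtype.ext rfl,
      show (⟨↑(fIso S b), (fIso S b).2⟩ : ↥(Sᶜ)) = fIso S b from Subtype.ext rfl,
      OrderIso.symm_apply_apply, OrderIso.symm_apply_apply]

lemma glueSetoid_zero (h0 : 0 ∈ S) (a : Fin (N + 1)) :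
    glueSetoid S s₂ 0 a ↔ a ∈ S := by
  constructor
  · rintro (⟨_, h⟩ | ⟨h, _, _⟩)
    · exact h
    · exact absurd h0 (Finset.mem_compl.mp h)
  · intro ha
    exact Or.inl ⟨h0, ha⟩

lemma range_eIso_coe : Set.range (fun t : Fin S.card => (↑(eIso S t) : Fin (N + 1))) =
    {a | a ∈ S} := by
  ext a
  constructor
  · rintro ⟨t, rfl⟩; exact (eIso S t).2
  · intro ha
    refine ⟨(eIso S).symm ⟨a, ha⟩, ?_⟩
    show ↑(eIso S ((eIso S).symm ⟨a, ha⟩)) = a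
    rw [OrderIso.apply_symm_apply]

lemma range_fIso_coe : Set.range (fun t : Fin (N + 1 - S.card) => (↑(fIso S t) : Fin (N + 1))) =
    {a | a ∈ Sᶜ} := by
  ext a
  constructor
  · rintro ⟨t, rfl⟩; exact (fIso S t).2
  · intro ha
    refine ⟨(fIso S).symm ⟨a, ha⟩, ?_⟩
    show ↑(fIso S ((fIso S).symm ⟨a, ha⟩)) = a
    rw [OrderIso.apply_symm_apply]

lemma eIso_coe_injective : Function.Injective (fun t : Fin S.card => (↑(eIso S t) : Fin (N + 1))) :=
  fun a b h => (eIso S).injective (Subtype.ext h)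

lemma fIso_coe_injective :
    Function.Injective (fun t : Fin (N + 1 - S.card) => (↑(fIso S t) : Fin (N + 1))) :=
  fun a b h => (fIso S).injective (Subtype.ext h)

lemma good_glue (h0 : 0 ∈ S) (h1 : Good m (⊤ : Setoid (Fin S.card)) u₁)
    (h2 : Good m s₂ u₂) : Good m (glueSetoid S s₂) (glueU S u₁ u₂) := by
  rintro a b (⟨ha, hb⟩ | ⟨ha, hb, hab⟩)
  · have h := h1 ((eIso S).symm ⟨a, ha⟩) ((eIso S).symm ⟨b, hb⟩) trivial
    have h' := eqvGen_map (R := stepRel m (glueSetoid S s₂) (glueU S u₁ u₂))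
      (fun t => (↑(eIso S t) : Fin (N + 1)))
      (fun x y hxy => ⟨glueSetoid_e x y, by rw [glueU_e, glueU_e]; exact hxy.2⟩) h
    simp only [OrderIso.apply_symm_apply] at h'
    exact h'
  · have h := h2 ((fIso S).symm ⟨a, ha⟩) ((fIso S).symm ⟨b, hb⟩) hab
    have h' := eqvGen_map (R := stepRel m (glueSetoid S s₂) (glueU S u₁ u₂))
      (fun t => (↑(fIso S t) : Fin (N + 1)))
      (fun x y hxy => ⟨(glueSetoid_f x y).mpr hxy.1, by rw [glueU_f, glueU_f]; exact hxy.2⟩) h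
    simp only [OrderIso.apply_symm_apply] at h'
    exact h'

lemma normal_glue (h0 : 0 ∈ S) (h1 : Normal (⊤ : Setoid (Fin S.card)) u₁)
    (h2 : Normal s₂ u₂) : Normal (glueSetoid S s₂) (glueU S u₁ u₂) := by
  intro a ha
  by_cases haS : a ∈ S
  · have h3 : a = 0 := by
      have := ha 0 (Or.inl ⟨haS, h0⟩)
      exact Fin.le_zero_iff.mp this
    subst h3
    rw [glueU, dif_pos haS]
    apply h1
    intro b _
    have : ((eIso S).symm ⟨0, haS⟩ : Fin S.card) ≤ (eIso S).symm (eIso S b) := by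
      apply (eIso S).symm.monotone
      exact Subtype.mk_le_mk.mpr (Fin.zero_le _)
    rwa [OrderIso.symm_apply_apply] at this
  · have haC : a ∈ Sᶜ := Finset.mem_compl.mpr haS
    rw [glueU, dif_neg haS]
    apply h2
    intro b hb
    have hrel : glueSetoid S s₂ a ↑(fIso S b) := by
      have := (glueSetoid_f ((fIso S).symm ⟨a, haC⟩) b).mpr hb
      rwa [OrderIso.apply_symm_apply] at this
    have := ha _ hrel
    have h4 : ((fIso S).symm ⟨a, Finset.mem_compl.mpr haS⟩ : Fin (N + 1 - S.card)) ≤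
        (fIso S).symm (fIso S b) := by
      apply (fIso S).symm.monotone
      exact Subtype.mk_le_mk.mpr this
    rwa [OrderIso.symm_apply_apply] at h4

lemma coe_fIso_symm_apply {S : Finset (Fin (N + 1))} (a : Fin (N + 1)) (ha : a ∈ Sᶜ) :
    ↑(fIso S ((fIso S).symm ⟨a, ha⟩)) = a := by rw [OrderIso.apply_symm_apply]

lemma coe_eIso_symm_apply {S : Finset (Fin (N + 1))} (a : Fin (N + 1)) (ha : a ∈ S) :
    ↑(eIso S ((eIso S).symm ⟨a, ha⟩)) = a := by rw [OrderIso.apply_symm_apply]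

/-- The glued parameter. -/
noncomputable def Psi (x : blockTy m N) : ↥(ParamSet m (N + 1)) :=
  ⟨(glueSetoid x.1.1 x.2.2.1.1, glueU x.1.1 x.2.1.1 x.2.2.1.2),
    good_glue x.1.2 x.2.1.2.1 x.2.2.2.1, normal_glue x.1.2 x.2.1.2.2 x.2.2.2.2⟩


lemma Psi_surjective : Function.Surjective (Psi (m := m) (N := N)) := by
  rintro ⟨⟨s, u⟩, hg, hn⟩
  -- the class of 0
  set S : Finset (Fin (N + 1)) := (Set.toFinite {j | s 0 j}).toFinset with hSdef
  have hmemS : ∀ a, a ∈ S ↔ s 0 a := fun a => Set.Finite.mem_toFinset _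
  have hS0 : 0 ∈ S := (hmemS 0).mpr (s.refl 0)
  -- restricted data
  set u₁ : Fin S.card → ℤ := fun a => u ↑(eIso S a) with hu₁def
  set u₂ : Fin (N + 1 - S.card) → ℤ := fun a => u ↑(fIso S a) with hu₂def
  set s₂ : Setoid (Fin (N + 1 - S.card)) :=
    ⟨fun a b => s ↑(fIso S a) ↑(fIso S b),
      ⟨fun a => s.refl _, fun h => s.symm h, fun h h' => s.trans h h'⟩⟩ with hs₂def
  have hs₂rel : ∀ a b, s₂ a b ↔ s ↑(fIso S a) ↑(fIso S b) := fun a b => Iff.rfl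
  -- membership invariance under steps
  have hinvS : ∀ x y, stepRel m s u x y → (x ∈ {a | a ∈ S} ↔ y ∈ {a | a ∈ S}) := by
    intro x y hxy
    simp only [Set.mem_setOf_eq, hmemS]
    exact ⟨fun h => s.trans h hxy.1, fun h => s.trans h (s.symm hxy.1)⟩
  have hinvC : ∀ x y, stepRel m s u x y → (x ∈ {a | a ∈ Sᶜ} ↔ y ∈ {a | a ∈ Sᶜ}) := by
    intro x y hxy
    simp only [Set.mem_setOf_eq, Finset.mem_compl]
    constructor
    · intro h hy
      exact h ((hinvS x y hxy).mpr hy)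
    · intro h hx
      exact h ((hinvS x y hxy).mp hx)
  have hGood₁ : Good m (⊤ : Setoid (Fin S.card)) u₁ := by
    intro a b _
    have hsa : s 0 ↑(eIso S a) := (hmemS _).mp (eIso S a).2
    have hsb : s 0 ↑(eIso S b) := (hmemS _).mp (eIso S b).2
    have h := hg _ _ (s.trans (s.symm hsa) hsb)
    have h' := eqvGen_and_mem hinvS h ((eIso S a).2 : (↑(eIso S a) : Fin (N + 1)) ∈ S)
    have h'' := eqvGen_pullback (fun t : Fin S.card => (↑(eIso S t) : Fin (N + 1)))
      eIso_coe_injective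
      (fun x y hxy => by rw [range_eIso_coe]; exact ⟨hxy.2.1, hxy.2.2⟩) h'
    refine Relation.EqvGen.mono ?_ _ _ h''
    intro x y hxy
    exact ⟨trivial, hxy.1.2⟩
  have hNor₁ : Normal (⊤ : Setoid (Fin S.card)) u₁ := by
    intro a hmin
    apply hn
    intro j hj
    have hjS : j ∈ S := (hmemS j).mpr (s.trans ((hmemS _).mp (eIso S a).2) hj)
    have h1 : a ≤ (eIso S).symm ⟨j, hjS⟩ := hmin _ trivial
    have h2 : eIso S a ≤ eIso S ((eIso S).symm ⟨j, hjS⟩) := (eIso S).monotone h1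
    rw [OrderIso.apply_symm_apply] at h2
    exact h2
  have hGood₂ : Good m s₂ u₂ := by
    intro a b hab
    have h := hg _ _ ((hs₂rel a b).mp hab)
    have h' := eqvGen_and_mem hinvC h ((fIso S a).2 : (↑(fIso S a) : Fin (N + 1)) ∈ Sᶜ)
    have h'' := eqvGen_pullback (fun t : Fin (N + 1 - S.card) => (↑(fIso S t) : Fin (N + 1)))
      fIso_coe_injective
      (fun x y hxy => by rw [range_fIso_coe]; exact ⟨hxy.2.1, hxy.2.2⟩) h'
    refine Relation.EqvGen.mono ?_ _ _ h''
    intro x y hxy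
    exact ⟨(hs₂rel x y).mpr hxy.1.1, hxy.1.2⟩
  have hNor₂ : Normal s₂ u₂ := by
    intro a hmin
    apply hn
    intro j hj
    have hjC : j ∈ Sᶜ := by
      rw [Finset.mem_compl]
      intro hjS
      have : s 0 ↑(fIso S a) := s.trans ((hmemS j).mp hjS) (s.symm hj)
      exact Finset.mem_compl.mp (fIso S a).2 ((hmemS _).mpr this)
    have hb : s₂ a ((fIso S).symm ⟨j, hjC⟩) := by
      rw [hs₂rel, coe_fIso_symm_apply]
      exact hj
    have h1 : a ≤ (fIso S).symm ⟨j, hjC⟩ := hmin _ hb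
    have h2 : fIso S a ≤ fIso S ((fIso S).symm ⟨j, hjC⟩) := (fIso S).monotone h1
    rw [OrderIso.apply_symm_apply] at h2
    exact h2
  refine ⟨⟨⟨S, hS0⟩, ⟨u₁, hGood₁, hNor₁⟩, ⟨(s₂, u₂), hGood₂, hNor₂⟩⟩, ?_⟩
  apply Subtype.ext
  refine Prod.ext ?_ ?_
  · -- setoids agree
    refine Setoid.ext fun a b => ?_
    constructor
    · rintro (⟨ha, hb⟩ | ⟨ha, hb, h3⟩)
      · exact s.trans (s.symm ((hmemS a).mp ha)) ((hmemS b).mp hb)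
      · rw [hs₂rel, coe_fIso_symm_apply, coe_fIso_symm_apply] at h3
        exact h3
    · intro hab
      by_cases ha : a ∈ S
      · have hb : b ∈ S := (hmemS b).mpr (s.trans ((hmemS a).mp ha) hab)
        exact Or.inl ⟨ha, hb⟩
      · have hb : b ∉ S := by
          intro hb
          exact ha ((hmemS a).mpr (s.trans ((hmemS b).mp hb) (s.symm hab)))
        refine Or.inr ⟨Finset.mem_compl.mpr ha, Finset.mem_compl.mpr hb, ?_⟩
        rw [hs₂rel, coe_fIso_symm_apply, coe_fIso_symm_apply]
        exact hab
  · -- labels agree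
    funext a
    by_cases ha : a ∈ S
    · show glueU S u₁ u₂ a = u a
      rw [glueU, dif_pos ha, hu₁def]
      show u ↑(eIso S ((eIso S).symm ⟨a, ha⟩)) = u a
      rw [coe_eIso_symm_apply]
    · show glueU S u₁ u₂ a = u a
      rw [glueU, dif_neg ha, hu₂def]
      show u ↑(fIso S ((fIso S).symm ⟨a, Finset.mem_compl.mpr ha⟩)) = u a
      rw [coe_fIso_symm_apply]

lemma Psi_injective : Function.Injective (Psi (m := m) (N := N)) := by
  rintro ⟨⟨S, hS⟩, ⟨u₁, hc1⟩, ⟨⟨s₂, u₂⟩, hc2⟩⟩ ⟨⟨T, hT⟩, ⟨v₁, hd1⟩, ⟨⟨t₂, v₂⟩, hd2⟩⟩ h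
  have h' := Subtype.ext_iff.mp h
  have hs : glueSetoid S s₂ = glueSetoid T t₂ := congrArg Prod.fst h'
  have hu : glueU S u₁ u₂ = glueU T v₁ v₂ := congrArg Prod.snd h'
  have hST : S = T := by
    ext a
    rw [← glueSetoid_zero (s₂ := s₂) hS a, ← glueSetoid_zero (s₂ := t₂) hT a, hs]
  subst hST
  have hu₁ : u₁ = v₁ := funext fun a => by
    have := congrFun hu ↑(eIso S a)
    rwa [glueU_e, glueU_e] at this
  have hs₂ : s₂ = t₂ := Setoid.ext fun a b => by
    rw [← glueSetoid_f (s₂ := s₂) a b, ← glueSetoid_f (s₂ := t₂) a b, hs]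
  have hu₂ : u₂ = v₂ := funext fun a => by
    have := congrFun hu ↑(fIso S a)
    rwa [glueU_f, glueU_f] at this
  subst hu₁
  subst hs₂
  subst hu₂
  rfl

end Decomp

lemma nat_card_sigma {ι : Type*} [Fintype ι] (f : ι → Type*) [∀ i, Finite (f i)] :
    Nat.card (Sigma f) = ∑ i, Nat.card (f i) := by
  letI : ∀ i, Fintype (f i) := fun i => Fintype.ofFinite _
  simp only [Nat.card_eq_fintype_card]
  exact Fintype.card_sigma

lemma card_subsets_zero (N j : ℕ) :
    ((Finset.univ.filter (fun S : Finset (Fin (N + 1)) => 0 ∈ S)).filter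
      (fun S => S.card = j + 1)).card = N.choose j := by
  have htarget : (Finset.powersetCard j ((Finset.univ : Finset (Fin (N + 1))).erase 0)).card
      = N.choose j := by
    rw [Finset.card_powersetCard, Finset.card_erase_of_mem (Finset.mem_univ _),
      Finset.card_univ, Fintype.card_fin]
    norm_num
  rw [← htarget]
  apply Finset.card_bij (fun S _ => S.erase 0)
  · intro S hS
    simp only [Finset.mem_filter, Finset.mem_univ, true_and] at hS
    rw [Finset.mem_powersetCard]
    exact ⟨Finset.erase_subset_erase 0 (Finset.subset_univ S),
      by rw [Finset.card_erase_of_mem hS.1, hS.2]; omega⟩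
  · intro S hS T hT h
    simp only [Finset.mem_filter, Finset.mem_univ, true_and] at hS hT
    ext a
    by_cases ha : a = 0
    · subst ha; simp [hS.1, hT.1]
    · have h2 : a ∈ S.erase 0 ↔ a ∈ T.erase 0 := by rw [h]
      simpa [Finset.mem_erase, ha] using h2
  · intro T hT
    rw [Finset.mem_powersetCard] at hT
    have h0T : 0 ∉ T := fun h => (Finset.mem_erase.mp (hT.1 h)).1 rfl
    refine ⟨insert 0 T, ?_, Finset.erase_insert h0T⟩
    simp only [Finset.mem_filter, Finset.mem_univ, true_and]
    exact ⟨Finset.mem_insert_self 0 T, by rw [Finset.card_insert_of_notMem h0T, hT.2]⟩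

lemma card_paramSet_succ (m N : ℕ) :
    Nat.card (ParamSet m (N + 1)) = ∑ j ∈ Finset.range (N + 1),
      N.choose j * (Nat.card (TopParam m (j + 1)) * Nat.card (ParamSet m (N - j))) := by
  classical
  have hbij : Nat.card (blockTy m N) = Nat.card (ParamSet m (N + 1)) :=
    Nat.card_eq_of_bijective Psi ⟨Psi_injective, Psi_surjective⟩
  rw [← hbij]
  rw [nat_card_sigma]
  -- sum over the subtype
  have h1 : ∑ S : {S : Finset (Fin (N + 1)) // 0 ∈ S},
      Nat.card (TopParam m S.1.card × ↥(ParamSet m (N + 1 - S.1.card)))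
      = ∑ S ∈ Finset.univ.filter (fun S : Finset (Fin (N + 1)) => 0 ∈ S),
        Nat.card (TopParam m S.card) * Nat.card (ParamSet m (N + 1 - S.card)) := by
    rw [Finset.sum_congr rfl (fun (S : {S : Finset (Fin (N + 1)) // 0 ∈ S}) _ =>
      Nat.card_prod (TopParam m S.1.card) (↥(ParamSet m (N + 1 - S.1.card))))]
    exact (Finset.sum_subtype (Finset.univ.filter (fun S : Finset (Fin (N + 1)) => 0 ∈ S))
      (fun S => by simp) (fun S => Nat.card (TopParam m S.card) *
        Nat.card (ParamSet m (N + 1 - S.card)))).symm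
  rw [h1]
  -- group by cardinality
  have h2 : ∑ S ∈ Finset.univ.filter (fun S : Finset (Fin (N + 1)) => 0 ∈ S),
      Nat.card (TopParam m S.card) * Nat.card (ParamSet m (N + 1 - S.card))
      = ∑ k ∈ Finset.range (N + 2), ∑ S ∈ (Finset.univ.filter
          (fun S : Finset (Fin (N + 1)) => 0 ∈ S)).filter (fun S => S.card = k),
        Nat.card (TopParam m S.card) * Nat.card (ParamSet m (N + 1 - S.card)) := by
    rw [Finset.sum_fiberwise_of_maps_to]
    intro S _
    rw [Finset.mem_range]
    have := Finset.card_le_univ S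
    rw [Fintype.card_fin] at this
    omega
  rw [h2]
  have h3 : ∀ k, ∑ S ∈ (Finset.univ.filter
      (fun S : Finset (Fin (N + 1)) => 0 ∈ S)).filter (fun S => S.card = k),
      Nat.card (TopParam m S.card) * Nat.card (ParamSet m (N + 1 - S.card))
      = ((Finset.univ.filter (fun S : Finset (Fin (N + 1)) => 0 ∈ S)).filter
          (fun S => S.card = k)).card *
        (Nat.card (TopParam m k) * Nat.card (ParamSet m (N + 1 - k))) := by
    intro k
    rw [Finset.sum_congr rfl (fun S hS => ?_), Finset.sum_const, smul_eq_mul]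
    rw [Finset.mem_filter] at hS
    rw [hS.2]
  simp only [h3]
  -- re-index, dropping the empty k = 0 term
  rw [Finset.sum_range_succ']
  have h0 : ((Finset.univ.filter (fun S : Finset (Fin (N + 1)) => 0 ∈ S)).filter
      (fun S => S.card = 0)).card = 0 := by
    rw [Finset.card_eq_zero]
    ext S
    simp only [Finset.mem_filter, Finset.mem_univ, true_and, Finset.notMem_empty,
      iff_false, not_and]
    intro h0S hcard
    rw [Finset.card_eq_zero] at hcard
    subst hcard
    exact absurd h0S (Finset.notMem_empty 0)
  rw [h0]
  simp only [zero_mul, add_zero]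
  apply Finset.sum_congr rfl
  intro j hj
  have hidx : N + 1 - (j + 1) = N - j := by omega
  rw [card_subsets_zero N j, hidx]


/-! ### Base case -/

lemma card_paramSet_zero (m : ℕ) : Nat.card (ParamSet m 0) = 1 := by
  rw [Nat.card_eq_one_iff_unique]
  constructor
  · constructor
    intro p q
    apply Subtype.ext
    apply Prod.ext
    · exact Setoid.ext fun a => a.elim0
    · funext a; exact a.elim0
  · exact ⟨⟨(⊤, fun a => a.elim0), fun i => i.elim0, fun i => i.elim0⟩⟩

/-! ### Power series lemmas -/

open PowerSeries

lemma coeff_pow_eq_zero {f : PowerSeries ℚ} (h0 : constantCoeff f = 0) {t i : ℕ}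
    (ht : t < i) : coeff t (f ^ i) = 0 := by
  obtain ⟨g, rfl⟩ := (PowerSeries.X_dvd_iff).mpr h0
  rw [mul_pow, PowerSeries.coeff_mul]
  apply Finset.sum_eq_zero
  rintro ⟨p, q⟩ hpq
  replace hpq : p + q = t := Finset.HasAntidiagonal.mem_antidiagonal.mp hpq
  have hp : p ≠ i := by omega
  rw [PowerSeries.coeff_X_pow, if_neg hp, zero_mul]

lemma coeff_subst_zero (F : PowerSeries ℚ) :
    coeff 0 (psSubst F (PowerSeries.exp ℚ)) = 1 := by
  rw [psSubst, PowerSeries.coeff_mk, Finset.sum_range_one, pow_zero]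
  simp [PowerSeries.coeff_exp]

lemma coeff_exp_rat (i : ℕ) : coeff i (PowerSeries.exp ℚ) = 1 / i.factorial := by
  rw [PowerSeries.coeff_exp]
  simp [algebraMap]

lemma deriv_subst (F : PowerSeries ℚ) (h0 : constantCoeff F = 0) (N : ℕ) :
    ((N : ℚ) + 1) * coeff (N + 1) (psSubst F (PowerSeries.exp ℚ)) =
      ∑ t ∈ Finset.range (N + 1), coeff t (psSubst F (PowerSeries.exp ℚ)) *
        ((((N - t : ℕ) : ℚ) + 1) * coeff ((N - t) + 1) F) := by
  have key1 : ∀ i : ℕ, ((N : ℚ) + 1) * coeff (N + 1) (F ^ i) =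
      (i : ℚ) * coeff N (F ^ (i - 1) * d⁄dX ℚ F) := by
    intro i
    have h1 : coeff N (d⁄dX ℚ (F ^ i)) = coeff (N + 1) (F ^ i) * ((N : ℚ) + 1) := by
      rw [PowerSeries.coeff_derivative]
    have h2 : d⁄dX ℚ (F ^ i) = (i : ℕ) • (F ^ (i - 1) • d⁄dX ℚ F) :=
      Derivation.leibniz_pow _ _ _
    have h3 : coeff N (d⁄dX ℚ (F ^ i)) = (i : ℚ) * coeff N (F ^ (i - 1) * d⁄dX ℚ F) := by
      rw [h2, smul_eq_mul, map_nsmul, nsmul_eq_mul]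
    rw [← h3, h1]; ring
  have h5 : ∀ i : ℕ, coeff (i + 1) (PowerSeries.exp ℚ) * ((i : ℚ) + 1) =
      coeff i (PowerSeries.exp ℚ) := by
    intro i
    rw [coeff_exp_rat, coeff_exp_rat, Nat.factorial_succ]
    have h6 : ((i.factorial : ℚ)) ≠ 0 := Nat.cast_ne_zero.mpr (Nat.factorial_ne_zero _)
    have h7 : ((i : ℚ) + 1) ≠ 0 := by positivity
    field_simp
    push_cast; ring
  -- expand the substitution coefficient
  rw [psSubst, PowerSeries.coeff_mk, Finset.mul_sum]
  have step1 : ∑ i ∈ Finset.range (N + 2), ((N : ℚ) + 1) *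
      (coeff i (PowerSeries.exp ℚ) * coeff (N + 1) (F ^ i)) =
      ∑ i ∈ Finset.range (N + 1), coeff i (PowerSeries.exp ℚ) *
        coeff N (F ^ i * d⁄dX ℚ F) := by
    rw [Finset.sum_range_succ']
    have hzero : ((N : ℚ) + 1) * (coeff 0 (PowerSeries.exp ℚ) * coeff (N + 1) (F ^ 0)) = 0 := by
      rw [pow_zero, PowerSeries.coeff_one, if_neg (Nat.succ_ne_zero N)]
      ring
    rw [hzero, add_zero]
    apply Finset.sum_congr rfl
    intro i _
    calc ((N : ℚ) + 1) * (coeff (i + 1) (PowerSeries.exp ℚ) * coeff (N + 1) (F ^ (i + 1)))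
        = coeff (i + 1) (PowerSeries.exp ℚ) *
          (((N : ℚ) + 1) * coeff (N + 1) (F ^ (i + 1))) := by ring
      _ = coeff (i + 1) (PowerSeries.exp ℚ) *
          (((i + 1 : ℕ) : ℚ) * coeff N (F ^ (i + 1 - 1) * d⁄dX ℚ F)) := by rw [key1 (i + 1)]
      _ = (coeff (i + 1) (PowerSeries.exp ℚ) * ((i : ℚ) + 1)) *
          coeff N (F ^ i * d⁄dX ℚ F) := by rw [Nat.add_sub_cancel]; push_cast; try ring
      _ = coeff i (PowerSeries.exp ℚ) * coeff N (F ^ i * d⁄dX ℚ F) := by rw [h5 i]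
  rw [step1]
  -- expand the product coefficient and swap sums
  have step2 : ∀ i, coeff N (F ^ i * d⁄dX ℚ F) = ∑ t ∈ Finset.range (N + 1),
      coeff t (F ^ i) * (coeff ((N - t) + 1) F * (((N - t : ℕ) : ℚ) + 1)) := by
    intro i
    rw [PowerSeries.coeff_mul, Finset.Nat.sum_antidiagonal_eq_sum_range_succ_mk]
    apply Finset.sum_congr rfl
    intro t _
    rw [PowerSeries.coeff_derivative]
    try push_cast
    try ring
  simp only [step2, Finset.mul_sum]
  rw [Finset.sum_comm]
  apply Finset.sum_congr rfl
  intro t ht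
  rw [Finset.mem_range] at ht
  have inner : ∑ i ∈ Finset.range (N + 1), coeff i (PowerSeries.exp ℚ) *
      (coeff t (F ^ i) * (coeff ((N - t) + 1) F * (((N - t : ℕ) : ℚ) + 1)))
      = (∑ i ∈ Finset.range (t + 1), coeff i (PowerSeries.exp ℚ) * coeff t (F ^ i)) *
        (coeff ((N - t) + 1) F * (((N - t : ℕ) : ℚ) + 1)) := by
    rw [Finset.sum_mul]
    rw [← Finset.sum_subset (Finset.range_subset_range.mpr (by omega : t + 1 ≤ N + 1))]
    · apply Finset.sum_congr rfl; intro i _; ring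
    · intro i _ hi
      rw [Finset.mem_range, not_lt] at hi
      rw [coeff_pow_eq_zero h0 (by omega)]
      ring
  rw [inner, PowerSeries.coeff_mk]
  ring

/-- Rational count of one-dimensional flats. -/
noncomputable def aQ (m k : ℕ) : ℚ := Nat.card (TopParam m k)

/-- Rational count of all flats. -/
noncomputable def bQ (m n : ℕ) : ℚ := Nat.card (ParamSet m n)

lemma bQ_zero (m : ℕ) : bQ m 0 = 1 := by rw [bQ, card_paramSet_zero]; norm_num

lemma bQ_succ (m N : ℕ) : bQ m (N + 1) = ∑ j ∈ Finset.range (N + 1),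
    (N.choose j : ℚ) * (aQ m (j + 1) * bQ m (N - j)) := by
  rw [bQ, card_paramSet_succ]
  push_cast
  rfl

end CatalanAux

open CatalanAux in
/-- If `F ∈ ℚ⟦X⟧` is the exponential generating function of `|L_1(C^m_n)|` (with zero
constant term) and `G` is the exponential generating function of `|L(C^m_n)|` (with
constant term `1`), then `G = exp ∘ F`. -/
theorem catalan_egf_exp (m : ℕ) (F G : PowerSeries ℚ)
    (hF : ∀ n : ℕ, PowerSeries.coeff n F =
      if n = 0 then 0 else ((Lk (CatalanArr m n) 1).ncard : ℚ) / n.factorial)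
    (hG : ∀ n : ℕ, PowerSeries.coeff n G =
      if n = 0 then 1 else ((flats (CatalanArr m n)).ncard : ℚ) / n.factorial) :
    G = psSubst F (PowerSeries.exp ℚ) := by
  classical
  have hF0 : PowerSeries.constantCoeff F = 0 := by
    have h := hF 0
    rw [if_pos rfl] at h
    rwa [PowerSeries.coeff_zero_eq_constantCoeff] at h
  have hFa : ∀ k : ℕ, PowerSeries.coeff (k + 1) F = aQ m (k + 1) / (k + 1).factorial := by
    intro k
    rw [hF (k + 1), if_neg (Nat.succ_ne_zero k),
      ncard_Lk_one_eq (Nat.succ_le_succ (Nat.zero_le k))]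
    rfl
  have key : ∀ N, PowerSeries.coeff N (psSubst F (PowerSeries.exp ℚ)) =
      bQ m N / N.factorial := by
    intro N
    induction N using Nat.strong_induction_on with
    | _ N ih =>
      match N, ih with
      | 0, _ =>
        rw [coeff_subst_zero, bQ_zero]
        norm_num
      | (N + 1), ih =>
        have hd := deriv_subst F hF0 N
        have hNe : ((N : ℚ) + 1) ≠ 0 := by positivity
        have hNfac : ((N.factorial : ℚ)) ≠ 0 := Nat.cast_ne_zero.mpr (Nat.factorial_ne_zero _)
        -- compute the sum
        have hsum : ∑ t ∈ Finset.range (N + 1),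
            PowerSeries.coeff t (psSubst F (PowerSeries.exp ℚ)) *
              ((((N - t : ℕ) : ℚ) + 1) * PowerSeries.coeff ((N - t) + 1) F)
            = ((N : ℚ) + 1) * (bQ m (N + 1) / (N + 1).factorial) := by
          have hrhs : ((N : ℚ) + 1) * (bQ m (N + 1) / (N + 1).factorial)
              = bQ m (N + 1) / N.factorial := by
            rw [Nat.factorial_succ]
            push_cast
            field_simp
          rw [hrhs, bQ_succ, Finset.sum_div,
            ← Finset.sum_range_reflect (fun j => (N.choose j : ℚ) *
              (aQ m (j + 1) * bQ m (N - j)) / N.factorial) (N + 1)]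
          apply Finset.sum_congr rfl
          intro t htmem
          rw [Finset.mem_range] at htmem
          have ht : t ≤ N := by omega
          have h1 : N + 1 - 1 - t = N - t := by omega
          rw [h1]
          rw [ih t (by omega), hFa (N - t)]
          have h2 : N - (N - t) = t := Nat.sub_sub_self ht
          rw [h2]
          have h3 : (N.choose (N - t) : ℚ) =
              (N.factorial : ℚ) / ((N - t).factorial * t.factorial) := by
            rw [Nat.cast_choose ℚ (Nat.sub_le N t), h2]
          rw [h3]
          have h4 : (((N - t) + 1).factorial : ℚ) = (((N - t) : ℕ) + 1) * (N - t).factorial := by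
            rw [Nat.factorial_succ]
            push_cast
            ring
          rw [h4]
          have h5 : ((t.factorial : ℚ)) ≠ 0 := Nat.cast_ne_zero.mpr (Nat.factorial_ne_zero _)
          generalize (N - t : ℕ) = k
          have h6 : ((k.factorial : ℚ)) ≠ 0 := Nat.cast_ne_zero.mpr (Nat.factorial_ne_zero _)
          have h7 : ((k : ℕ) : ℚ) + 1 ≠ 0 := by positivity
          field_simp
        rw [hsum] at hd
        exact mul_left_cancel₀ hNe hd
  ext n
  rw [hG n]
  match n with
  | 0 =>
    rw [if_pos rfl, coeff_subst_zero]
  | (k + 1) =>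
    rw [if_neg (Nat.succ_ne_zero k), key (k + 1)]
    congr 1
    rw [ncard_flats_eq]
    rfl
end

section
/- Fix integers m ≥ 0 and n ≥ 1. Call a function h : {1, …, n} → ℕ Catalan-admissible (for m) if 0 belongs to the range of h and for every a in the range of h with a < max(range h) there exists b in the range of h with a < b ≤ a + m. Then the map sending h to the affine subspace {x ∈ ℝ^n : x_i + h(i) = x_j + h(j) for all i, j} is a bijection from the set of Catalan-admissible functions onto the set L_1(C^m_n) of 1-dimensional flats of the extended Catalan arrangement C^m_n. -/
open Set

/-- A function `h : {1,…,n} → ℕ` is Catalan-admissible (for `m`) if `0` is in its range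
and every value `a` of `h` below the maximum value is followed by some value `b` of `h`
with `a < b ≤ a + m`. -/
def CatalanAdmissible (m : ℕ) {n : ℕ} (h : Fin n → ℕ) : Prop :=
  0 ∈ Set.range h ∧
    ∀ a ∈ Set.range h, a < sSup (Set.range h) →
      ∃ b ∈ Set.range h, a < b ∧ b ≤ a + m

namespace CatHelp
variable {n : ℕ}

def lineSet (c : Fin n → ℝ) : Set (Fin n → ℝ) :=
  {x | ∀ i j, x i + c i = x j + c j}

lemma mem_lineSet_iff (hn : 1 ≤ n) (c : Fin n → ℝ) (x : Fin n → ℝ) :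
    x ∈ lineSet c ↔ ∃ t : ℝ, ∀ i, x i = t - c i := by
  constructor
  · intro hx
    refine ⟨x ⟨0, hn⟩ + c ⟨0, hn⟩, fun i => ?_⟩
    have := hx ⟨0, hn⟩ i
    linarith
  · rintro ⟨t, ht⟩ i j
    rw [ht i, ht j]; ring

lemma flatDim_lineSet (hn : 1 ≤ n) (c : Fin n → ℝ) : flatDim (lineSet c) = 1 := by
  have hone : (fun _ => (1:ℝ) : Fin n → ℝ) ≠ 0 := by
    intro h
    have := congrFun h ⟨0, hn⟩
    simp at this
  have h1 : vectorSpan ℝ (lineSet c) = Submodule.span ℝ {(fun _ => 1 : Fin n → ℝ)} := by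
    apply le_antisymm
    · rw [vectorSpan]
      apply Submodule.span_le.2
      rintro v ⟨x, hx, y, hy, rfl⟩
      obtain ⟨t, ht⟩ := (mem_lineSet_iff hn c x).1 hx
      obtain ⟨s, hs⟩ := (mem_lineSet_iff hn c y).1 hy
      rw [SetLike.mem_coe, Submodule.mem_span_singleton]
      refine ⟨t - s, ?_⟩
      funext i
      simp only [vsub_eq_sub, Pi.sub_apply, Pi.smul_apply, smul_eq_mul, mul_one]
      rw [ht i, hs i]; ring
    · rw [vectorSpan]
      apply Submodule.span_mono
      intro v hv
      rw [Set.mem_singleton_iff] at hv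
      subst hv
      refine ⟨fun i => 1 - c i, ?_, fun i => 0 - c i, ?_, ?_⟩
      · exact (mem_lineSet_iff hn c _).2 ⟨1, fun i => rfl⟩
      · exact (mem_lineSet_iff hn c _).2 ⟨0, fun i => rfl⟩
      · funext i; simp
  rw [flatDim, direction_affineSpan, h1]
  exact finrank_span_singleton hone

lemma chain_step (m : ℕ) (h : Fin n → ℕ) (hadm : CatalanAdmissible m h)
    (x : Fin n → ℝ)
    (hx : ∀ i j, h i ≤ h j → h j ≤ h i + m → x i + (h i : ℝ) = x j + (h j : ℝ)) :
    ∀ i j, x i + (h i : ℝ) = x j + (h j : ℝ) := by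
  have key : ∀ d : ℕ, ∀ i j, h i ≤ h j → h j - h i = d →
      x i + (h i : ℝ) = x j + (h j : ℝ) := by
    intro d
    induction d using Nat.strong_induction_on with
    | _ d ih =>
      intro i j hij hd
      by_cases hm : h j ≤ h i + m
      · exact hx i j hij hm
      · push_neg at hm
        have hbdd : BddAbove (Set.range h) := (Set.finite_range h).bddAbove
        have h1 : h i < sSup (Set.range h) :=
          lt_of_lt_of_le (by omega) (le_csSup hbdd ⟨j, rfl⟩)
        obtain ⟨b, ⟨k, rfl⟩, hb1, hb2⟩ := hadm.2 (h i) ⟨i, rfl⟩ h1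
        have e1 := hx i k (le_of_lt hb1) hb2
        have e2 := ih (h j - h k) (by omega) k j (by omega) rfl
        linarith
  intro i j
  rcases le_total (h i) (h j) with H | H
  · exact key _ i j H rfl
  · exact (key _ j i H rfl).symm

lemma lineSet_mem_flats (m : ℕ) (h : Fin n → ℕ) (hadm : CatalanAdmissible m h) :
    lineSet (fun i => (h i : ℝ)) ∈ flats (CatalanArr m n) := by
  refine ⟨⟨fun i => -(h i : ℝ), fun i j => by ring⟩, ?_⟩
  refine ⟨CatalanArr m n ∩ {H | ∃ i j : Fin n, H = hyp n i j ((h j : ℤ) - h i)},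
    Set.inter_subset_left, ?_⟩
  apply Set.Subset.antisymm
  · intro x hx H hH
    obtain ⟨_, i, j, rfl⟩ := hH
    have := hx i j
    simp only [hyp, Set.mem_setOf_eq]
    push_cast
    linarith
  · intro x hx
    apply chain_step m h hadm
    intro i j hij hijm
    rcases lt_trichotomy i j with hlt | heq | hgt
    · have hH : hyp n i j ((h j : ℤ) - h i) ∈ CatalanArr m n ∩
          {H | ∃ i j : Fin n, H = hyp n i j ((h j : ℤ) - h i)} := by
        refine ⟨⟨i, j, _, hlt, by omega, by omega, rfl⟩, ⟨i, j, rfl⟩⟩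
      have := hx _ hH
      simp only [hyp, Set.mem_setOf_eq] at this
      push_cast at this
      linarith
    · subst heq; rfl
    · have hH : hyp n j i ((h i : ℤ) - h j) ∈ CatalanArr m n ∩
          {H | ∃ i j : Fin n, H = hyp n i j ((h j : ℤ) - h i)} := by
        refine ⟨⟨j, i, _, hgt, by omega, by omega, rfl⟩, ⟨j, i, rfl⟩⟩
      have := hx _ hH
      simp only [hyp, Set.mem_setOf_eq] at this
      push_cast at this
      linarith

lemma inj_lemma (h h' : Fin n → ℕ) (h0 : 0 ∈ Set.range h) (h0' : 0 ∈ Set.range h')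
    (heq : lineSet (fun i => (h i : ℝ)) = lineSet (fun i => (h' i : ℝ))) : h = h' := by
  have hx : (fun i => -(h i : ℝ)) ∈ lineSet (fun i => (h i : ℝ)) := fun i j => by ring
  rw [heq] at hx
  obtain ⟨i0, hi0⟩ := h0
  obtain ⟨j0, hj0⟩ := h0'
  funext k
  have e1 := hx k i0
  have e2 := hx k j0
  simp only at e1 e2
  rw [hi0] at e1
  rw [hj0] at e2
  have hnn1 : (0:ℝ) ≤ (h' i0 : ℝ) := Nat.cast_nonneg _
  have hnn2 : (0:ℝ) ≤ (h j0 : ℝ) := Nat.cast_nonneg _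
  have : (h k : ℝ) = (h' k : ℝ) := by push_cast at e1 e2; linarith
  exact_mod_cast this

lemma surj_lemma (m : ℕ) (hn : 1 ≤ n) (F : Set (Fin n → ℝ))
    (hne : F.Nonempty) (B : Set (Set (Fin n → ℝ))) (hBsub : B ⊆ CatalanArr m n)
    (hFeq : F = ⋂₀ B) (hdim : flatDim F = 1) :
    ∃ h : Fin n → ℕ, CatalanAdmissible m h ∧ lineSet (fun i => (h i : ℝ)) = F := by
  classical
  haveI : Nonempty (Fin n) := ⟨⟨0, hn⟩⟩
  obtain ⟨x0, hx0⟩ := hne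
  choose P Q A hlt hA1 hA2 hrep using fun H (hH : H ∈ B) => hBsub hH
  set one : Fin n → ℝ := fun _ => 1 with hone_def
  set Dset : Set (Fin n → ℝ) :=
    {v | ∀ H (hH : H ∈ B), v (P H hH) = v (Q H hH)} with hD_def
  have x0B : ∀ H (hH : H ∈ B), x0 ∈ H := fun H hH => (hFeq ▸ hx0) H hH
  have hcon : ∀ H (hH : H ∈ B),
      x0 (P H hH) - x0 (Q H hH) = ((A H hH : ℤ) : ℝ) := by
    intro H hH
    have := x0B H hH
    rw [hrep H hH] at this
    exact this
  -- membership in F via Dset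
  have hFD : ∀ x, x ∈ F ↔ x - x0 ∈ Dset := by
    intro x
    rw [hFeq]
    constructor
    · intro hx H hH
      have h1 : x ∈ H := hx H hH
      rw [hrep H hH] at h1
      have h2 := hcon H hH
      simp only [hyp, Set.mem_setOf_eq] at h1
      simp only [Pi.sub_apply]
      linarith
    · intro hv H hH
      have h2 := hcon H hH
      have h3 := hv H hH
      simp only [Pi.sub_apply] at h3
      rw [hrep H hH]
      simp only [hyp, Set.mem_setOf_eq]
      linarith
  have hsub : F -ᵥ F = Dset := by
    apply Set.Subset.antisymm
    · rintro v ⟨x, hx, y, hy, rfl⟩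
      intro H hH
      have h1 := (hFD x).1 hx H hH
      have h2 := (hFD y).1 hy H hH
      simp only [Pi.sub_apply] at h1 h2 ⊢
      simp only [vsub_eq_sub, Pi.sub_apply]
      linarith
    · intro v hv
      refine ⟨x0 + v, ?_, x0, ?_, ?_⟩
      · apply (hFD _).2
        simpa using hv
      · exact hFeq ▸ hx0
      · simp
  have hvs : vectorSpan ℝ F = Submodule.span ℝ Dset := by
    rw [vectorSpan, hsub]
  have hrank : Module.finrank ℝ (Submodule.span ℝ Dset) = 1 := by
    rw [← hvs, ← direction_affineSpan]
    exact hdim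
  have honeD : one ∈ Dset := fun H hH => rfl
  have hone_ne : one ≠ 0 := by
    intro h
    have := congrFun h (Classical.arbitrary (Fin n))
    simp [hone_def] at this
  have hle : Submodule.span ℝ {one} ≤ Submodule.span ℝ Dset :=
    Submodule.span_mono (Set.singleton_subset_iff.2 honeD)
  have heqspan : Submodule.span ℝ {one} = Submodule.span ℝ Dset :=
    Submodule.eq_of_le_of_finrank_eq hle
      (by rw [hrank, finrank_span_singleton hone_ne])
  have hconstD : ∀ v ∈ Dset, ∀ p q : Fin n, v p = v q := by
    intro v hv p q
    have : v ∈ Submodule.span ℝ {one} := heqspan ▸ Submodule.subset_span hv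
    obtain ⟨t, rfl⟩ := Submodule.mem_span_singleton.1 this
    simp [hone_def]
  -- indicator principle
  have hind : ∀ S : Set (Fin n),
      (∀ H (hH : H ∈ B), (P H hH ∈ S ↔ Q H hH ∈ S)) →
      ∀ p q, p ∈ S → q ∈ S := by
    intro S hS p q hp
    have hv : (fun j => if j ∈ S then (1:ℝ) else 0) ∈ Dset := by
      intro H hH
      show (if P H hH ∈ S then (1:ℝ) else 0) = (if Q H hH ∈ S then (1:ℝ) else 0)
      by_cases h1 : P H hH ∈ S
      · rw [if_pos h1, if_pos ((hS H hH).1 h1)]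
      · rw [if_neg h1, if_neg (fun h2 => h1 ((hS H hH).2 h2))]
    have := hconstD _ hv p q
    rw [if_pos hp] at this
    by_contra hq
    rw [if_neg hq] at this
    exact one_ne_zero this
  -- integrality
  set i0 : Fin n := ⟨0, hn⟩ with hi0_def
  have hint : ∀ j, ∃ zj : ℤ, x0 j = x0 i0 + zj := by
    intro j
    refine hind {j | ∃ zj : ℤ, x0 j = x0 i0 + zj} ?_ i0 j ⟨0, by simp⟩
    intro H hH
    have hc := hcon H hH
    constructor
    · rintro ⟨w, hw⟩
      exact ⟨w - A H hH, by push_cast; linarith⟩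
    · rintro ⟨w, hw⟩
      exact ⟨w + A H hH, by push_cast; linarith⟩
  choose z hz using hint
  set M : ℤ := Finset.univ.sup' Finset.univ_nonempty z with hM_def
  have hzM : ∀ j, z j ≤ M := fun j => Finset.le_sup' z (Finset.mem_univ j)
  obtain ⟨jM, -, hjM⟩ := Finset.exists_mem_eq_sup' Finset.univ_nonempty z
  set h : Fin n → ℕ := fun j => (M - z j).toNat with hh_def
  have hcastZ : ∀ j, (h j : ℤ) = M - z j := fun j =>
    Int.toNat_of_nonneg (by have := hzM j; omega)
  have hcast : ∀ j, (h j : ℝ) = (M : ℝ) - (z j : ℝ) := by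
    intro j
    have := hcastZ j
    exact_mod_cast congrArg (fun w : ℤ => (w : ℝ)) this
  -- constants relation: x0 j + h j = x0 i0 + M
  have hkey : ∀ j, x0 j + (h j : ℝ) = x0 i0 + (M : ℝ) := by
    intro j
    rw [hcast j, hz j]
    ring
  -- z as integer constraints
  have hzcon : ∀ H (hH : H ∈ B), z (P H hH) - z (Q H hH) = A H hH := by
    intro H hH
    have hc := hcon H hH
    rw [hz (P H hH), hz (Q H hH)] at hc
    have : ((z (P H hH) - z (Q H hH) : ℤ) : ℝ) = ((A H hH : ℤ) : ℝ) := by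
      push_cast
      linarith
    exact_mod_cast this
  refine ⟨h, ⟨⟨jM, ?_⟩, ?_⟩, ?_⟩
  · -- 0 ∈ range h : h jM = 0
    simp only [hh_def]
    omega
  · -- admissibility gap condition
    rintro a ⟨i, rfl⟩ hlt'
    have hsup_mem : sSup (Set.range h) ∈ Set.range h :=
      Set.Nonempty.csSup_mem (Set.range_nonempty h) (Set.finite_range h)
    obtain ⟨j0, hj0⟩ := hsup_mem
    rw [← hj0] at hlt'
    -- h i < h j0, hence z j0 < z i
    have hzi : z j0 < z i := by
      have e1 := hcastZ i
      have e2 := hcastZ j0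
      omega
    by_contra hno
    push_neg at hno
    have hno' : ∀ k, z k < z i → z k < z i - m := by
      intro k hk
      have := hno (h k) ⟨k, rfl⟩
      have e1 := hcastZ i
      have e2 := hcastZ k
      omega
    have hSinv : ∀ H (hH : H ∈ B),
        (P H hH ∈ {j | z j < z i} ↔ Q H hH ∈ {j | z j < z i}) := by
      intro H hH
      have hc := hzcon H hH
      have b1 := hA1 H hH
      have b2 := hA2 H hH
      simp only [Set.mem_setOf_eq]
      constructor
      · intro hp
        have := hno' _ hp
        omega
      · intro hq
        have := hno' _ hq
        omega
    have := hind {j | z j < z i} hSinv j0 i hzi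
    simp only [Set.mem_setOf_eq] at this
    omega
  · -- lineSet h = F
    ext x
    constructor
    · intro hx
      apply (hFD x).2
      intro H hH
      have e1 := hx (P H hH) (Q H hH)
      have e2 := hkey (P H hH)
      have e3 := hkey (Q H hH)
      simp only [Pi.sub_apply]
      linarith
    · intro hx
      have hv : x - x0 ∈ Submodule.span ℝ {one} :=
        heqspan ▸ Submodule.subset_span ((hFD x).1 hx)
      obtain ⟨t, ht⟩ := Submodule.mem_span_singleton.1 hv
      intro i j
      have hti : x i = x0 i + t := by
        have := congrFun ht i
        simp only [Pi.smul_apply, Pi.sub_apply, smul_eq_mul, hone_def, mul_one] at this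
        linarith
      have htj : x j = x0 j + t := by
        have := congrFun ht j
        simp only [Pi.smul_apply, Pi.sub_apply, smul_eq_mul, hone_def, mul_one] at this
        linarith
      have e2 := hkey i
      have e3 := hkey j
      rw [hti, htj]
      linarith

end CatHelp

/-- The map `h ↦ {x | x i + h i = x j + h j for all i, j}` is a bijection from the
Catalan-admissible functions onto the `1`-dimensional flats of `C^m_n`. -/
theorem catalan_one_flats_bij (m n : ℕ) (hn : 1 ≤ n) :
    Set.BijOn
      (fun h : Fin n → ℕ =>
        {x : Fin n → ℝ | ∀ i j : Fin n, x i + (h i : ℝ) = x j + (h j : ℝ)})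
      {h : Fin n → ℕ | CatalanAdmissible m h}
      (Lk (CatalanArr m n) 1) := by
  constructor
  · intro h hh
    exact ⟨CatHelp.lineSet_mem_flats m h hh, CatHelp.flatDim_lineSet hn _⟩
  constructor
  · intro h1 hh1 h2 hh2 heq
    exact CatHelp.inj_lemma h1 h2 hh1.1 hh2.1 heq
  · intro F hF
    obtain ⟨⟨hne, B, hBsub, hFeq⟩, hdim⟩ := hF
    obtain ⟨h, hadm, hline⟩ := CatHelp.surj_lemma m hn F hne B hBsub hFeq hdim
    exact ⟨h, hadm, hline⟩
end

section
/- Fix integers m ≥ 1 and n ≥ 1. Call a function h : {1, …, n} → ℕ Shi-admissible (for m) if 0 belongs to the range of h, and for every a in the range of h with a < max(range h), letting b be the smallest element of the range of h that is greater than a, one has b ≤ a + m, and moreover if b = a + m then min{i : h(i) = a} < max{j : h(j) = b}. Then the map sending h to the affine subspace {x ∈ ℝ^n : x_i + h(i) = x_j + h(j) for all i, j} is a bijection from the set of Shi-admissible functions onto the set L_1(S^m_n) of 1-dimensional flats of the extended Shi arrangement S^m_n. -/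
open Set

/-- A function `h : {1,…,n} → ℕ` is Shi-admissible (for `m`) if `0` is in its range and
for every value `a` of `h` below the maximum value, the least value `b` of `h` greater
than `a` satisfies `b ≤ a + m`, and moreover whenever `b = a + m` the smallest index
attaining `a` is smaller than the largest index attaining `b`. -/
def ShiAdmissible (m : ℕ) {n : ℕ} (h : Fin n → ℕ) : Prop :=
  0 ∈ Set.range h ∧
    ∀ a ∈ Set.range h, a < sSup (Set.range h) →
      ∀ b, b = sInf {c ∈ Set.range h | a < c} →
        b ≤ a + m ∧
          (b = a + m →
            sInf (Fin.val '' {i | h i = a}) < sSup (Fin.val '' {j | h j = b}))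

lemma line_eq_coe (n : ℕ) (hn : 1 ≤ n) (p : Fin n → ℝ) :
    {x : Fin n → ℝ | ∀ i j, x i - p i = x j - p j} =
      ↑(AffineSubspace.mk' p (Submodule.span ℝ {(fun _ => 1 : Fin n → ℝ)})) := by
  ext x
  rw [SetLike.mem_coe, AffineSubspace.mem_mk', Submodule.mem_span_singleton]
  constructor
  · intro hx
    refine ⟨x ⟨0, hn⟩ - p ⟨0, hn⟩, funext fun i => ?_⟩
    have := hx ⟨0, hn⟩ i
    simp only [Pi.smul_apply, smul_eq_mul, mul_one]
    show x ⟨0, hn⟩ - p ⟨0, hn⟩ = (x -ᵥ p) i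
    rw [this]; rfl
  · rintro ⟨c, hc⟩ i j
    have hi := congrFun hc i
    have hj := congrFun hc j
    simp only [Pi.smul_apply, smul_eq_mul, mul_one] at hi hj
    have hi' : c = x i - p i := hi
    have hj' : c = x j - p j := hj
    rw [← hi', ← hj']

lemma flatDim_line (n : ℕ) (hn : 1 ≤ n) (p : Fin n → ℝ) :
    flatDim {x : Fin n → ℝ | ∀ i j, x i - p i = x j - p j} = 1 := by
  rw [flatDim, line_eq_coe n hn p, AffineSubspace.affineSpan_coe, AffineSubspace.direction_mk']
  refine finrank_span_singleton ?_
  intro hone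
  have := congrFun hone ⟨0, hn⟩
  simp at this

lemma conn (m n : ℕ) (hm : 1 ≤ m) (h : Fin n → ℕ) (adm : ShiAdmissible m h)
    (x : Fin n → ℝ)
    (E : ∀ p q : Fin n, p < q → 1 - (m : ℤ) ≤ (h q : ℤ) - (h p : ℤ) →
      (h q : ℤ) - (h p : ℤ) ≤ (m : ℤ) → x p - x q = (h q : ℝ) - (h p : ℝ)) :
    ∀ v : ℕ, ∀ i j : Fin n, h i ≤ v → h j ≤ v → x i + h i = x j + h j := by
  have edge : ∀ p q : Fin n, p ≠ q → (h q : ℤ) - h p ≤ m → (h p : ℤ) - h q ≤ m →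
      ((h q : ℤ) - h p = m → p < q) → ((h p : ℤ) - h q = m → q < p) →
      x p + h p = x q + h q := by
    intro p q hne hb1 hb2 he1 he2
    rcases lt_or_gt_of_ne hne with hlt | hgt
    · have h1 : 1 - (m : ℤ) ≤ (h q : ℤ) - h p := by
        rcases eq_or_lt_of_le hb2 with heq | hlt'
        · exact absurd (he2 heq) (lt_asymm hlt)
        · omega
      have := E p q hlt h1 hb1
      push_cast at this ⊢
      linarith
    · have h1 : 1 - (m : ℤ) ≤ (h p : ℤ) - h q := by
        rcases eq_or_lt_of_le hb1 with heq | hlt'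
        · exact absurd (he1 heq) (lt_asymm hgt)
        · omega
      have := E q p hgt h1 hb2
      push_cast at this ⊢
      linarith
  intro v
  induction v using Nat.strong_induction_on with
  | _ v IH =>
    intro i j hi hj
    have key : ∀ i j : Fin n, h i = v → h j < v → x i + h i = x j + h j := by
      intro i j hi hj
      have hv_range : v ∈ Set.range h := ⟨i, hi⟩
      have hfin : (Set.range h).Finite := Set.finite_range h
      set T : Set ℕ := {c ∈ Set.range h | c < v} with hT
      have hTne : T.Nonempty := ⟨h j, ⟨j, rfl⟩, hj⟩
      have hTbdd : BddAbove T := (hfin.subset (Set.sep_subset _ _)).bddAbove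
      set a := sSup T with ha
      have haT : a ∈ T := Nat.sSup_mem hTne hTbdd
      obtain ⟨ha_range, hav⟩ := haT
      have ha_sup : a < sSup (Set.range h) :=
        lt_of_lt_of_le hav (le_csSup hfin.bddAbove hv_range)
      have hvinf : v = sInf {c ∈ Set.range h | a < c} := by
        refine le_antisymm (le_csInf ⟨v, hv_range, hav⟩ ?_) (Nat.sInf_le ⟨hv_range, hav⟩)
        intro c hc
        obtain ⟨hc_range, hac⟩ := hc
        by_contra hcv
        push_neg at hcv
        have : c ≤ a := le_csSup hTbdd ⟨hc_range, hcv⟩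
        omega
      obtain ⟨hble, hcase⟩ := adm.2 a ha_range ha_sup v hvinf
      rcases lt_or_eq_of_le hble with hvlt | hveq
      · obtain ⟨p, hp⟩ := ha_range
        have hpi : x p + h p = x i + h i := by
          refine edge p i (fun hpe => by rw [hpe, hi] at hp; omega) ?_ ?_ ?_ ?_ <;>
            rw [hp, hi] <;> omega
        have hpj : x p + h p = x j + h j := by
          have hv1 : v - 1 < v := by omega
          exact IH (v - 1) hv1 p j (by omega) (by omega)
        linarith
      · have hlt := hcase (by omega)
        have hAne : (Fin.val '' {i | h i = a}).Nonempty := by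
          obtain ⟨p, hp⟩ := ha_range
          exact ⟨p.val, p, hp, rfl⟩
        have hBne : (Fin.val '' {j | h j = v}).Nonempty := ⟨i.val, i, hi, rfl⟩
        have hBbdd : BddAbove (Fin.val '' {j | h j = v}) :=
          ((Set.toFinite _).image _).bddAbove
        obtain ⟨p, hpa, hpval⟩ := Nat.sInf_mem hAne
        obtain ⟨q, hqv, hqval⟩ := Nat.sSup_mem hBne hBbdd
        have hpa' : h p = a := hpa
        have hqv' : h q = v := hqv
        have hpq : p < q := by
          rw [Fin.lt_def, hpval, hqval]; exact hlt
        have hpqe : x p + h p = x q + h q := by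
          refine edge p q (ne_of_lt hpq) ?_ ?_ (fun _ => hpq) ?_ <;> rw [hpa', hqv'] <;> omega
        have hqi : x q + h q = x i + h i := by
          rcases eq_or_ne q i with rfl | hne
          · rfl
          · refine edge q i hne ?_ ?_ ?_ ?_ <;> rw [hqv', hi] <;> omega
        have hpj : x p + h p = x j + h j := by
          have hv1 : v - 1 < v := by omega
          exact IH (v - 1) hv1 p j (by omega) (by omega)
        linarith
    rcases eq_or_lt_of_le hi with hiv | hiv <;> rcases eq_or_lt_of_le hj with hjv | hjv
    · rcases eq_or_ne i j with rfl | hne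
      · rfl
      · refine edge i j hne ?_ ?_ ?_ ?_ <;> rw [hiv, ← hjv] <;> omega
    · exact key i j hiv hjv
    · exact (key j i hjv hiv).symm
    · have hv1 : v - 1 < v := by omega
      exact IH (v - 1) hv1 i j (by omega) (by omega)

/-- The map `h ↦ {x | x i + h i = x j + h j for all i, j}` is a bijection from the
Shi-admissible functions onto the `1`-dimensional flats of `S^m_n`. -/
theorem shi_one_flats_bij (m n : ℕ) (hm : 1 ≤ m) (hn : 1 ≤ n) :
    Set.BijOn
      (fun h : Fin n → ℕ =>
        {x : Fin n → ℝ | ∀ i j : Fin n, x i + (h i : ℝ) = x j + (h j : ℝ)})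
      {h : Fin n → ℕ | ShiAdmissible m h}
      (Lk (ShiArr m n) 1) := by
  refine ⟨?_, ?_, ?_⟩
  · -- MapsTo
    intro h hadm
    have hadm' : ShiAdmissible m h := hadm
    set B : Set (Set (Fin n → ℝ)) :=
      {H | ∃ p q : Fin n, p < q ∧ 1 - (m : ℤ) ≤ (h q : ℤ) - h p ∧ (h q : ℤ) - h p ≤ m ∧
        H = hyp n p q ((h q : ℤ) - (h p : ℤ))} with hBdef
    have hBsub : B ⊆ ShiArr m n := by
      rintro H ⟨p, q, hpq, h1, h2, rfl⟩
      exact ⟨p, q, _, h1, h2, hpq, rfl⟩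
    have hFeqB : {x : Fin n → ℝ | ∀ i j, x i + (h i : ℝ) = x j + (h j : ℝ)} = ⋂₀ B := by
      ext x
      constructor
      · intro hx
        rw [Set.mem_sInter]
        rintro H ⟨p, q, hpq, h1, h2, rfl⟩
        show x p - x q = _
        have := hx p q
        push_cast
        linarith
      · intro hx
        have E : ∀ p q : Fin n, p < q → 1 - (m : ℤ) ≤ (h q : ℤ) - (h p : ℤ) →
            (h q : ℤ) - (h p : ℤ) ≤ (m : ℤ) → x p - x q = (h q : ℝ) - (h p : ℝ) := by
          intro p q hpq h1 h2
          have hmem : x ∈ hyp n p q ((h q : ℤ) - (h p : ℤ)) :=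
            Set.mem_sInter.mp hx _ ⟨p, q, hpq, h1, h2, rfl⟩
          have : x p - x q = (((h q : ℤ) - (h p : ℤ) : ℤ) : ℝ) := hmem
          push_cast at this
          exact this
        intro i j
        exact conn m n hm h hadm' x E (max (h i) (h j)) i j (le_max_left _ _) (le_max_right _ _)
    refine ⟨⟨⟨fun i => -(h i : ℝ), by intro i j; simp⟩, B, hBsub, hFeqB⟩, ?_⟩
    have heq2 : {x : Fin n → ℝ | ∀ i j, x i + (h i : ℝ) = x j + (h j : ℝ)} =
        {x : Fin n → ℝ | ∀ i j, x i - (fun k => -(h k : ℝ)) i = x j - (fun k => -(h k : ℝ)) j} := by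
      ext x
      simp [sub_neg_eq_add]
    show flatDim {x : Fin n → ℝ | ∀ i j, x i + (h i : ℝ) = x j + (h j : ℝ)} = 1
    rw [heq2]
    exact flatDim_line n hn _
  · -- InjOn
    intro h1 hm1 h2 hm2 heq
    have heq' : {x : Fin n → ℝ | ∀ i j, x i + (h1 i : ℝ) = x j + (h1 j : ℝ)} =
        {x : Fin n → ℝ | ∀ i j, x i + (h2 i : ℝ) = x j + (h2 j : ℝ)} := heq
    have hx1 : (fun k => -(h1 k : ℝ)) ∈
        {x : Fin n → ℝ | ∀ i j, x i + (h1 i : ℝ) = x j + (h1 j : ℝ)} := by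
      intro i j; simp
    rw [heq'] at hx1
    obtain ⟨i0, hi0⟩ := hm1.1
    obtain ⟨i1, hi1⟩ := hm2.1
    funext k
    have e0 : -(h1 k : ℝ) + h2 k = -(h1 i0 : ℝ) + h2 i0 := hx1 k i0
    have e1 : -(h1 k : ℝ) + h2 k = -(h1 i1 : ℝ) + h2 i1 := hx1 k i1
    have c0 : (h1 i0 : ℝ) = 0 := by rw [hi0]; simp
    have c1 : (h2 i1 : ℝ) = 0 := by rw [hi1]; simp
    have hnn0 : (0 : ℝ) ≤ (h2 i0 : ℝ) := Nat.cast_nonneg _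
    have hnn1 : (0 : ℝ) ≤ (h1 i1 : ℝ) := Nat.cast_nonneg _
    have : (h1 k : ℝ) = (h2 k : ℝ) := by linarith
    exact_mod_cast this
  · -- SurjOn
    intro F hF
    classical
    obtain ⟨⟨hne, B, hBsub, hFB⟩, hdim⟩ := hF
    obtain ⟨x0, hx0⟩ := hne
    have hx0B : x0 ∈ ⋂₀ B := hFB ▸ hx0
    set j0 : Fin n := ⟨0, hn⟩ with hj0
    have lineSub : ∀ t : ℝ, (fun k => x0 k + t) ∈ F := by
      intro t
      rw [hFB, Set.mem_sInter]
      intro H hH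
      obtain ⟨p, q, a, h1, h2, hpq, rfl⟩ := hBsub hH
      have hx0H : x0 p - x0 q = (a : ℝ) := Set.mem_sInter.mp hx0B _ hH
      show (x0 p + t) - (x0 q + t) = (a : ℝ)
      linarith
    -- F is contained in the line through x0 with direction 1
    have hone_ne : (fun _ => (1 : ℝ) : Fin n → ℝ) ≠ 0 := by
      intro hone
      have := congrFun hone ⟨0, hn⟩
      simp at this
    have hones : (fun _ => (1 : ℝ) : Fin n → ℝ) ∈ (affineSpan ℝ F).direction := by
      have h1 : (fun k => x0 k + 1) ∈ F := lineSub 1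
      have hmem := AffineSubspace.vsub_mem_direction
        (subset_affineSpan ℝ F h1) (subset_affineSpan ℝ F hx0)
      convert hmem using 1
      funext k
      show (1 : ℝ) = (x0 k + 1) - x0 k
      ring
    have hspan_le : Submodule.span ℝ {(fun _ => 1 : Fin n → ℝ)} ≤ (affineSpan ℝ F).direction := by
      rw [Submodule.span_le, Set.singleton_subset_iff]
      exact hones
    have hdim' : Module.finrank ℝ (affineSpan ℝ F).direction = 1 := hdim
    have hspan_eq : Submodule.span ℝ {(fun _ => 1 : Fin n → ℝ)} = (affineSpan ℝ F).direction := by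
      refine Submodule.eq_of_le_of_finrank_le hspan_le ?_
      rw [hdim', finrank_span_singleton hone_ne]
    have hFsub : ∀ y ∈ F, ∃ c : ℝ, y = fun k => x0 k + c := by
      intro y hy
      have hdir : y -ᵥ x0 ∈ (affineSpan ℝ F).direction :=
        AffineSubspace.vsub_mem_direction (subset_affineSpan ℝ F hy) (subset_affineSpan ℝ F hx0)
      rw [← hspan_eq, Submodule.mem_span_singleton] at hdir
      obtain ⟨c, hc⟩ := hdir
      refine ⟨c, funext fun k => ?_⟩
      have hck : c * 1 = y k - x0 k := congrFun hc k
      show y k = x0 k + c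
      linarith
    -- integrality of coordinate differences
    have hSint : ∀ k : Fin n, ∃ z : ℤ, x0 k - x0 j0 = (z : ℝ) := by
      set S : Set (Fin n) := {k | ∃ z : ℤ, x0 k - x0 j0 = (z : ℝ)} with hS
      set y : Fin n → ℝ := fun k => x0 k + (if k ∈ S then (1 : ℝ) else 0) with hy
      have hyF : y ∈ F := by
        rw [hFB, Set.mem_sInter]
        intro H hH
        obtain ⟨p, q, a, h1, h2, hpq, rfl⟩ := hBsub hH
        have hx0H : x0 p - x0 q = (a : ℝ) := Set.mem_sInter.mp hx0B _ hH
        have hiff : p ∈ S ↔ q ∈ S := by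
          constructor
          · rintro ⟨z, hz⟩
            exact ⟨z - a, by push_cast; linarith⟩
          · rintro ⟨z, hz⟩
            exact ⟨z + a, by push_cast; linarith⟩
        show y p - y q = (a : ℝ)
        by_cases hp : p ∈ S
        · have hq : q ∈ S := hiff.mp hp
          rw [hy]
          simp only [if_pos hp, if_pos hq]
          linarith
        · have hq : q ∉ S := fun hq => hp (hiff.mpr hq)
          rw [hy]
          simp only [if_neg hp, if_neg hq]
          linarith
      obtain ⟨c, hc⟩ := hFsub y hyF
      have hj0S : j0 ∈ S := ⟨0, by simp⟩
      have hc1 : c = 1 := by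
        have h1 : y j0 = x0 j0 + c := congrFun hc j0
        rw [hy] at h1
        simp only [if_pos hj0S] at h1
        linarith
      intro k
      by_contra hk
      have hkS : k ∉ S := hk
      have h1 : y k = x0 k + c := congrFun hc k
      rw [hy] at h1
      simp only [if_neg hkS] at h1
      rw [hc1] at h1
      linarith
    -- define h
    obtain ⟨imax, -, hmax⟩ := Finset.exists_max_image Finset.univ x0 ⟨j0, Finset.mem_univ _⟩
    have hgap : ∀ k : Fin n, ∃ z : ℤ, x0 imax - x0 k = (z : ℝ) := by
      intro k
      obtain ⟨z1, hz1⟩ := hSint imax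
      obtain ⟨z2, hz2⟩ := hSint k
      exact ⟨z1 - z2, by push_cast; linarith⟩
    choose g hg using hgap
    have hgnn : ∀ k, 0 ≤ g k := by
      intro k
      have h0 : (0 : ℝ) ≤ (g k : ℝ) := by
        rw [← hg k]
        have := hmax k (Finset.mem_univ k)
        linarith
      exact_mod_cast h0
    set h : Fin n → ℕ := fun k => (g k).toNat with hhdef
    have hcast : ∀ k, (h k : ℝ) = x0 imax - x0 k := by
      intro k
      have h1 : ((g k).toNat : ℝ) = (g k : ℝ) := by
        exact_mod_cast Int.toNat_of_nonneg (hgnn k)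
      show ((g k).toNat : ℝ) = x0 imax - x0 k
      rw [h1]
      exact (hg k).symm
    have hx0f : ∀ p q : Fin n, x0 p + h p = x0 q + h q := by
      intro p q
      rw [hcast p, hcast q]
      ring
    have hFline : F = {x : Fin n → ℝ | ∃ c : ℝ, x = fun k => x0 k + c} := by
      ext y
      constructor
      · exact hFsub y
      · rintro ⟨c, rfl⟩
        exact lineSub c
    have feq : {x : Fin n → ℝ | ∀ i j, x i + (h i : ℝ) = x j + (h j : ℝ)} = F := by
      rw [hFline]
      ext x
      constructor
      · intro hx
        refine ⟨x imax - x0 imax, funext fun k => ?_⟩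
        have e1 := hx k imax
        have e2 := hx0f k imax
        show x k = x0 k + (x imax - x0 imax)
        linarith
      · rintro ⟨c, rfl⟩ i j
        have := hx0f i j
        show (x0 i + c) + (h i : ℝ) = (x0 j + c) + (h j : ℝ)
        linarith
    -- admissibility
    have hadm : ShiAdmissible m h := by
      constructor
      · refine ⟨imax, ?_⟩
        have h1 := hcast imax
        simp only [sub_self] at h1
        exact_mod_cast h1
      · intro a ha hasup b hbdef
        obtain ⟨ia, hia⟩ := ha
        have hfin : (Set.range h).Finite := Set.finite_range h
        have hsup_mem : sSup (Set.range h) ∈ Set.range h :=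
          Nat.sSup_mem ⟨h ia, ia, rfl⟩ hfin.bddAbove
        have hTne : {c ∈ Set.range h | a < c}.Nonempty := ⟨_, hsup_mem, hasup⟩
        have hbT : b ∈ {c ∈ Set.range h | a < c} := by
          rw [hbdef]; exact Nat.sInf_mem hTne
        obtain ⟨hb_range, hab⟩ := hbT
        have hbmin : ∀ c ∈ Set.range h, a < c → b ≤ c := by
          intro c hc hac
          rw [hbdef]
          exact Nat.sInf_le ⟨hc, hac⟩
        by_contra hcon
        push_neg at hcon
        have hbam : a + m ≤ b := by
          rcases le_or_gt b (a + m) with h1 | h1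
          · have := (hcon h1).1
            omega
          · omega
        obtain ⟨ib, hib⟩ := hb_range
        set y : Fin n → ℝ := fun k => x0 k + (if b ≤ h k then (1 : ℝ) else 0) with hy
        have hyB : y ∈ ⋂₀ B := by
          rw [Set.mem_sInter]
          intro H hH
          obtain ⟨p, q, c, h1, h2, hpq, rfl⟩ := hBsub hH
          have hx0H : x0 p - x0 q = (c : ℝ) := Set.mem_sInter.mp hx0B _ hH
          have hr : (h q : ℝ) - (h p : ℝ) = (c : ℝ) := by
            rw [hcast q, hcast p]
            linarith
          have hdz : (h q : ℤ) - (h p : ℤ) = c := by exact_mod_cast hr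
          have hiff : b ≤ h p ↔ b ≤ h q := by
            constructor
            · intro hp
              by_contra hq
              have hqa : h q ≤ a := by
                rcases le_or_gt (h q) a with h' | h'
                · exact h'
                · exact absurd (hbmin _ ⟨q, rfl⟩ h') hq
              omega
            · intro hq
              by_contra hp
              have hpa : h p ≤ a := by
                rcases le_or_gt (h p) a with h' | h'
                · exact h'
                · exact absurd (hbmin _ ⟨p, rfl⟩ h') hp
              have hkey : b = a + m ∧ h p = a ∧ h q = b := by omega
              obtain ⟨hbeq, hpa', hqb⟩ := hkey
              have hidx := (hcon (le_of_eq hbeq)).2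
              have hidx' : sSup (Fin.val '' {j | h j = b}) ≤ sInf (Fin.val '' {i | h i = a}) :=
                hidx
              have hs1 : sInf (Fin.val '' {i | h i = a}) ≤ p.val := Nat.sInf_le ⟨p, hpa', rfl⟩
              have hs2 : q.val ≤ sSup (Fin.val '' {j | h j = b}) :=
                le_csSup (((Set.toFinite _).image _).bddAbove) ⟨q, hqb, rfl⟩
              have hpq' : p.val < q.val := Fin.lt_def.mp hpq
              omega
          show y p - y q = (c : ℝ)
          by_cases hp : b ≤ h p
          · have hq : b ≤ h q := hiff.mp hp
            rw [hy]
            simp only [if_pos hp, if_pos hq]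
            linarith
          · have hq : ¬ b ≤ h q := fun hq => hp (hiff.mpr hq)
            rw [hy]
            simp only [if_neg hp, if_neg hq]
            linarith
        have hyf : y ∈ {x : Fin n → ℝ | ∀ i j, x i + (h i : ℝ) = x j + (h j : ℝ)} := by
          rw [feq, hFB]
          exact hyB
        have e1 := hyf ib ia
        have hb1 : b ≤ h ib := le_of_eq hib.symm
        have hb2 : ¬ b ≤ h ia := by omega
        rw [hy] at e1
        simp only [if_pos hb1, if_neg hb2] at e1
        have e2 := hx0f ib ia
        linarith
    exact ⟨h, hadm, feq⟩
end
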